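/- arXiv:2210.10748 — 6 statements merged into one kernel-verified Lean document; each statement's English description precedes it below -/
import Mathlib

section
/- For |q|<1 and any fixed integer $n$, the Durfee rectangle identity holds: $\sum_{j=\max(0,-n)}^{\infty} \frac{q^{j(j+n)}}{(q;q)_j (q;q)_{j+n}} = \frac{1}{(q;q)_\infty}$. -/
open Finset Filter Topology

namespace DurfeeAux

noncomputable def P (q : ℂ) (m : ℕ) : ℂ := ∏ k ∈ Finset.range m, (1 - q ^ (k + 1))

noncomputable def B (q : ℂ) (M : ℕ) (t : ℤ) : ℂ :=
  if 0 ≤ t ∧ t ≤ M then P q M / (P q t.toNat * P q (M - t.toNat)) else 0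

variable {q : ℂ}

lemma factor_ne (hq : ‖q‖ < 1) (k : ℕ) : (1 : ℂ) - q ^ (k + 1) ≠ 0 := by
  intro h
  have h1 : q ^ (k + 1) = 1 := by linear_combination -h
  have h2 : ‖q ^ (k + 1)‖ < 1 := by
    rw [norm_pow]
    exact pow_lt_one₀ (norm_nonneg q) hq (Nat.succ_ne_zero k)
  rw [h1, norm_one] at h2
  exact lt_irrefl _ h2

lemma P_ne (hq : ‖q‖ < 1) (m : ℕ) : P q m ≠ 0 :=
  Finset.prod_ne_zero_iff.2 fun k _ => factor_ne hq k

lemma P_zero : P q 0 = 1 := Finset.prod_range_zero _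

lemma P_succ (m : ℕ) : P q (m + 1) = P q m * (1 - q ^ (m + 1)) := Finset.prod_range_succ _ m

lemma B_eq_zero {M : ℕ} {t : ℤ} (h : ¬(0 ≤ t ∧ t ≤ M)) : B q M t = 0 := if_neg h

lemma B_of {M : ℕ} {t : ℤ} (h1 : 0 ≤ t) (h2 : t ≤ M) :
    B q M t = P q M / (P q t.toNat * P q (M - t.toNat)) := if_pos ⟨h1, h2⟩

lemma B_natCast {M j : ℕ} (h : j ≤ M) :
    B q M (j : ℤ) = P q M / (P q j * P q (M - j)) := by
  rw [B_of (Int.natCast_nonneg j) (by exact_mod_cast h), Int.toNat_natCast]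

lemma B_zero (hq : ‖q‖ < 1) (M : ℕ) : B q M 0 = 1 := by
  rw [B_of le_rfl (Int.natCast_nonneg M), Int.toNat_zero, P_zero, Nat.sub_zero]
  field_simp [P_ne hq M]

lemma B_self (hq : ‖q‖ < 1) (M : ℕ) : B q M (M : ℤ) = 1 := by
  rw [B_natCast le_rfl, Nat.sub_self, P_zero]
  field_simp [P_ne hq M]

lemma B_symm (hq : ‖q‖ < 1) {M j : ℕ} (h : j ≤ M) :
    B q M ((M - j : ℕ) : ℤ) = B q M (j : ℤ) := by
  rw [B_natCast (Nat.sub_le M j), B_natCast h, Nat.sub_sub_self h, mul_comm]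

lemma pascal (hq : ‖q‖ < 1) (M : ℕ) (t : ℤ) :
    B q (M + 1) t = q ^ t.toNat * B q M t + B q M (t - 1) := by
  rcases lt_or_ge t 0 with h | h
  · rw [B_eq_zero (by omega), B_eq_zero (by omega), B_eq_zero (by omega)]; ring
  rcases eq_or_lt_of_le h with h0 | h0
  · subst h0
    rw [B_zero hq, B_zero hq, show (0:ℤ) - 1 = -1 by ring, B_eq_zero (M := M) (by omega)]
    simp
  rcases lt_or_ge (M : ℤ) t with hM | hM
  · rcases eq_or_lt_of_le (by omega : (M : ℤ) + 1 ≤ t) with hM1 | hM1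
    · -- t = M + 1
      have ht : t = ((M + 1 : ℕ) : ℤ) := by omega
      rw [ht]
      rw [B_self hq, B_eq_zero (M := M) (by omega), show ((M + 1 : ℕ) : ℤ) - 1 = (M : ℤ) by push_cast; ring,
        B_self hq]
      ring
    · rw [B_eq_zero (by omega), B_eq_zero (M := M) (by omega), B_eq_zero (M := M) (by omega)]; ring
  · -- 1 ≤ t ≤ M
    obtain ⟨i, hi⟩ : ∃ i : ℕ, t = ((i + 1 : ℕ) : ℤ) := ⟨(t - 1).toNat, by omega⟩
    obtain ⟨a, ha⟩ : ∃ a : ℕ, M = (i + 1) + a := ⟨M - (i + 1), by omega⟩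
    subst hi ha
    rw [show ((i + 1 : ℕ) : ℤ) - 1 = ((i : ℕ) : ℤ) by push_cast; ring]
    rw [B_natCast (by omega), B_natCast (by omega), B_natCast (by omega), Int.toNat_natCast]
    have e1 : i + 1 + a + 1 - (i + 1) = a + 1 := by omega
    have e2 : i + 1 + a - (i + 1) = a := by omega
    have e3 : i + 1 + a - i = a + 1 := by omega
    rw [e1, e2, e3]
    rw [show i + 1 + a + 1 = (i + 1 + a) + 1 from rfl, P_succ (i + 1 + a),
      P_succ a, P_succ i]
    have h1 := P_ne hq i
    have h2 := P_ne hq a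
    have h3 := P_ne hq (i + 1 + a)
    have h4 := factor_ne hq i
    have h5 := factor_ne hq a
    field_simp
    ring

lemma vdm (hq : ‖q‖ < 1) (N : ℕ) : ∀ (m : ℕ) (k : ℤ),
    B q (m + N) k = ∑ j ∈ Finset.range (m + 1),
      q ^ ((((m : ℕ) : ℤ) - (j : ℕ)) * (k - (j : ℕ))).toNat * B q m (j : ℤ) * B q N (k - (j : ℕ)) := by
  intro m
  induction m with
  | zero =>
    intro k
    rw [Finset.sum_range_one]
    simp [B_zero hq]
  | succ m ih =>
    intro k
    rcases lt_or_ge k 0 with hk | hk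
    · rw [B_eq_zero (by omega)]
      symm
      apply Finset.sum_eq_zero
      intro j hj
      rw [B_eq_zero (M := N) (by omega)]
      ring
    · have hstep : m + 1 + N = (m + N) + 1 := by omega
      rw [hstep, pascal hq (m + N) k, ih k, ih (k - 1)]
      have expand : ∀ j ∈ Finset.range (m + 2),
          q ^ ((((m + 1 : ℕ) : ℤ) - (j : ℕ)) * (k - (j : ℕ))).toNat * B q (m + 1) (j : ℤ) *
              B q N (k - (j : ℕ))
          = (q ^ ((((m + 1 : ℕ) : ℤ) - (j : ℕ)) * (k - (j : ℕ))).toNat * q ^ j * B q m (j : ℤ) *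
              B q N (k - (j : ℕ)))
            + (q ^ ((((m + 1 : ℕ) : ℤ) - (j : ℕ)) * (k - (j : ℕ))).toNat * B q m ((j : ℤ) - 1) *
              B q N (k - (j : ℕ))) := by
        intro j hj
        rw [pascal hq m (j : ℤ), Int.toNat_natCast]
        ring
      rw [Finset.sum_congr rfl expand, Finset.sum_add_distrib]
      have hS1 : ∑ j ∈ Finset.range (m + 2),
          (q ^ ((((m + 1 : ℕ) : ℤ) - (j : ℕ)) * (k - (j : ℕ))).toNat * q ^ j * B q m (j : ℤ) *
              B q N (k - (j : ℕ)))
          = q ^ k.toNat * ∑ j ∈ Finset.range (m + 1),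
              q ^ ((((m : ℕ) : ℤ) - (j : ℕ)) * (k - (j : ℕ))).toNat * B q m (j : ℤ) *
                B q N (k - (j : ℕ)) := by
        rw [Finset.sum_range_succ, B_eq_zero (M := m) (t := ((m + 1 : ℕ) : ℤ)) (by push_cast; omega)]
        rw [Finset.mul_sum]
        simp only [mul_zero, zero_mul, add_zero]
        apply Finset.sum_congr rfl
        intro j hj
        by_cases hBm : B q m (j : ℤ) = 0
        · rw [hBm]; ring
        by_cases hBN : B q N (k - (j : ℕ)) = 0
        · rw [hBN]; ring
        have hjm : (j : ℤ) ≤ (m : ℤ) := by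
          by_contra hcon; exact hBm (B_eq_zero (by omega))
        have hkj : (j : ℤ) ≤ k := by
          by_contra hcon; exact hBN (B_eq_zero (M := N) (by omega))
        set a : ℕ := m - j with hadef
        set b : ℕ := (k - (j : ℕ)).toNat with hbdef
        have ha : ((m : ℕ) : ℤ) - (j : ℕ) = (a : ℤ) := by simp only [hadef]; omega
        have ha1 : (((m + 1 : ℕ)) : ℤ) - (j : ℕ) = ((a + 1 : ℕ) : ℤ) := by
          simp only [hadef]; push_cast; omega
        have hb : k - (j : ℕ) = (b : ℤ) := by simp only [hbdef]; omega
        have hk' : k.toNat = j + b := by simp only [hbdef]; omega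
        rw [ha1, ha, hb, ← Nat.cast_mul, ← Nat.cast_mul, Int.toNat_natCast, Int.toNat_natCast, hk']
        ring
      have hS2 : ∑ j ∈ Finset.range (m + 2),
          (q ^ ((((m + 1 : ℕ) : ℤ) - (j : ℕ)) * (k - (j : ℕ))).toNat * B q m ((j : ℤ) - 1) *
              B q N (k - (j : ℕ)))
          = ∑ j ∈ Finset.range (m + 1),
              q ^ ((((m : ℕ) : ℤ) - (j : ℕ)) * ((k - 1) - (j : ℕ))).toNat * B q m (j : ℤ) *
                B q N ((k - 1) - (j : ℕ)) := by
        rw [Finset.sum_range_succ']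
        rw [show (((0 : ℕ) : ℤ) - 1) = (-1 : ℤ) by norm_num,
          B_eq_zero (M := m) (t := (-1 : ℤ)) (by omega)]
        simp only [mul_zero, zero_mul, add_zero]
        apply Finset.sum_congr rfl
        intro j hj
        have c1 : (((m + 1 : ℕ)) : ℤ) - ((j + 1 : ℕ) : ℤ) = ((m : ℕ) : ℤ) - (j : ℕ) := by
          push_cast; ring
        have c2 : k - ((j + 1 : ℕ) : ℤ) = (k - 1) - (j : ℕ) := by push_cast; ring
        have c3 : ((j + 1 : ℕ) : ℤ) - 1 = ((j : ℕ) : ℤ) := by push_cast; ring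
        rw [c1, c2, c3]
      rw [hS1, hS2]

lemma spec (hq : ‖q‖ < 1) (n M : ℕ) :
    ∑ j ∈ Finset.range (M + 1), q ^ (j * (j + n)) * B q M (j : ℤ) * B q M ((j : ℤ) + (n : ℤ))
      = B q (M + M) ((M : ℤ) + (n : ℤ)) := by
  rw [vdm hq M M ((M : ℤ) + (n : ℤ))]
  conv_rhs => rw [← Finset.sum_range_reflect]
  apply Finset.sum_congr rfl
  intro j hj
  have hjM : j ≤ M := by have := Finset.mem_range.mp hj; omega
  simp only [Nat.add_sub_cancel]
  have c1 : ((M : ℕ) : ℤ) - ((M - j : ℕ) : ℤ) = ((j : ℕ) : ℤ) := by omega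
  have c2 : ((M : ℤ) + (n : ℤ)) - ((M - j : ℕ) : ℤ) = ((j + n : ℕ) : ℤ) := by push_cast; omega
  rw [c1, c2, B_symm hq hjM, ← Nat.cast_mul, Int.toNat_natCast]
  have c3 : ((j + n : ℕ) : ℤ) = (j : ℤ) + (n : ℤ) := by push_cast; ring
  rw [c3]

lemma weier (x : ℕ → ℝ) (hx0 : ∀ i, 0 ≤ x i) (hx1 : ∀ i, x i ≤ 1) (s : Finset ℕ) :
    1 - ∑ i ∈ s, x i ≤ ∏ i ∈ s, (1 - x i) := by
  classical
  induction s using Finset.induction_on with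
  | empty => simp
  | @insert a s ha ih =>
    rw [Finset.sum_insert ha, Finset.prod_insert ha]
    have h0 : (0:ℝ) ≤ ∏ i ∈ s, (1 - x i) :=
      Finset.prod_nonneg fun i _ => by linarith [hx1 i]
    have h1 : ∏ i ∈ s, (1 - x i) ≤ 1 :=
      Finset.prod_le_one (fun i _ => by linarith [hx1 i]) (fun i _ => by linarith [hx0 i])
    nlinarith [hx0 a, hx1 a]

lemma P_lower (hq : ‖q‖ < 1) : ∃ δ : ℝ, 0 < δ ∧ ∀ M, δ ≤ ‖P q M‖ := by
  set r := ‖q‖ with hrdef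
  have hr0 : 0 ≤ r := norm_nonneg q
  have hfac : ∀ k : ℕ, 0 < 1 - r ^ (k + 1) := fun k => by
    have := pow_lt_one₀ hr0 hq (show k + 1 ≠ 0 by omega); linarith
  set Q : ℕ → ℝ := fun M => ∏ k ∈ Finset.range M, (1 - r ^ (k + 1)) with hQdef
  have hQpos : ∀ M, 0 < Q M := fun M => Finset.prod_pos fun k _ => hfac k
  have hQnorm : ∀ M, Q M ≤ ‖P q M‖ := by
    intro M
    rw [P, norm_prod]
    apply Finset.prod_le_prod (fun k _ => le_of_lt (hfac k))
    intro k _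
    calc 1 - r ^ (k + 1) = ‖(1:ℂ)‖ - ‖q ^ (k + 1)‖ := by rw [norm_one, norm_pow]
      _ ≤ ‖1 - q ^ (k + 1)‖ := norm_sub_norm_le _ _
  obtain ⟨K, hK⟩ : ∃ K : ℕ, r ^ K < (1 - r) / 2 := by
    have h := tendsto_pow_atTop_nhds_zero_of_lt_one hr0 hq
    exact (h.eventually (gt_mem_nhds (show (0:ℝ) < (1 - r) / 2 by linarith))).exists
  have htail : ∀ M, K ≤ M → (1:ℝ) / 2 ≤ ∏ k ∈ Finset.Ico K M, (1 - r ^ (k + 1)) := by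
    intro M hKM
    have hsum : ∑ k ∈ Finset.Ico K M, r ^ (k + 1) ≤ 1 / 2 := by
      rw [Finset.sum_Ico_eq_sum_range]
      have hc : ∀ i ∈ Finset.range (M - K), r ^ (K + i + 1) = r ^ (K + 1) * r ^ i := by
        intro i _; rw [← pow_add]; ring_nf
      rw [Finset.sum_congr rfl hc, ← Finset.mul_sum]
      have hgs : ∑ i ∈ Finset.range (M - K), r ^ i ≤ (1 - r)⁻¹ := by
        rw [← tsum_geometric_of_lt_one hr0 hq]
        exact (summable_geometric_of_lt_one hr0 hq).sum_le_tsum _ (fun i _ => pow_nonneg hr0 i)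
      have hK1 : r ^ (K + 1) ≤ r ^ K := by
        rw [pow_succ]; nlinarith [pow_nonneg hr0 K]
      have hinv : (0:ℝ) < (1 - r)⁻¹ := inv_pos.mpr (by linarith)
      calc r ^ (K + 1) * ∑ i ∈ Finset.range (M - K), r ^ i
          ≤ r ^ (K + 1) * (1 - r)⁻¹ := by
            apply mul_le_mul_of_nonneg_left hgs (pow_nonneg hr0 _)
        _ ≤ ((1 - r) / 2) * (1 - r)⁻¹ := by
            apply mul_le_mul_of_nonneg_right _ (le_of_lt hinv)
            linarith [hK1, hK]
        _ = 1 / 2 := by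
            have h1r : (1 - r) ≠ 0 := by linarith
            field_simp
    have := weier (fun k => r ^ (k + 1)) (fun i => pow_nonneg hr0 _)
      (fun i => le_of_lt (by have := hfac i; linarith)) (Finset.Ico K M)
    linarith
  refine ⟨Q K / 2, div_pos (hQpos K) two_pos, ?_⟩
  intro M
  rcases le_or_gt K M with hKM | hKM
  · have hsplit : Q K * ∏ k ∈ Finset.Ico K M, (1 - r ^ (k + 1)) = Q M := by
      simp only [hQdef, Finset.range_eq_Ico]
      exact Finset.prod_Ico_consecutive _ (Nat.zero_le K) hKM
    have := htail M hKM
    have h2 : Q K / 2 ≤ Q M := by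
      rw [← hsplit]
      have := hQpos K
      nlinarith
    linarith [hQnorm M]
  · have hsplit : Q M * ∏ k ∈ Finset.Ico M K, (1 - r ^ (k + 1)) = Q K := by
      simp only [hQdef, Finset.range_eq_Ico]
      exact Finset.prod_Ico_consecutive _ (Nat.zero_le M) (le_of_lt hKM)
    have hle1 : ∏ k ∈ Finset.Ico M K, (1 - r ^ (k + 1)) ≤ 1 :=
      Finset.prod_le_one (fun k _ => le_of_lt (hfac k)) (fun k _ => by
        have := pow_nonneg hr0 (k + 1); linarith)
    have h2 : Q K ≤ Q M := by
      rw [← hsplit]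
      have := hQpos M
      nlinarith
    have := hQpos K
    linarith [hQnorm M]

lemma P_upper (hq : ‖q‖ < 1) (M : ℕ) : ‖P q M‖ ≤ Real.exp (‖q‖ * (1 - ‖q‖)⁻¹) := by
  set r := ‖q‖ with hrdef
  have hr0 : 0 ≤ r := norm_nonneg q
  rw [P, norm_prod]
  have step1 : ∏ k ∈ Finset.range M, ‖1 - q ^ (k + 1)‖ ≤ ∏ k ∈ Finset.range M, (1 + r ^ (k + 1)) := by
    apply Finset.prod_le_prod (fun k _ => norm_nonneg _)
    intro k _
    calc ‖1 - q ^ (k + 1)‖ ≤ ‖(1:ℂ)‖ + ‖q ^ (k + 1)‖ := norm_sub_le _ _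
      _ = 1 + r ^ (k + 1) := by rw [norm_one, norm_pow]
  have step2 : ∏ k ∈ Finset.range M, (1 + r ^ (k + 1))
      ≤ ∏ k ∈ Finset.range M, Real.exp (r ^ (k + 1)) := by
    apply Finset.prod_le_prod (fun k _ => by positivity)
    intro k _
    have := Real.add_one_le_exp (r ^ (k + 1))
    linarith
  have step3 : ∏ k ∈ Finset.range M, Real.exp (r ^ (k + 1))
      = Real.exp (∑ k ∈ Finset.range M, r ^ (k + 1)) := by
    rw [Real.exp_sum]
  have step4 : ∑ k ∈ Finset.range M, r ^ (k + 1) ≤ r * (1 - r)⁻¹ := by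
    have hc : ∀ k ∈ Finset.range M, r ^ (k + 1) = r * r ^ k := by
      intro k _; rw [pow_succ]; ring
    rw [Finset.sum_congr rfl hc, ← Finset.mul_sum]
    have hgs : ∑ i ∈ Finset.range M, r ^ i ≤ (1 - r)⁻¹ := by
      rw [← tsum_geometric_of_lt_one hr0 hq]
      exact (summable_geometric_of_lt_one hr0 hq).sum_le_tsum _ (fun i _ => pow_nonneg hr0 i)
    exact mul_le_mul_of_nonneg_left hgs hr0
  calc ∏ k ∈ Finset.range M, ‖1 - q ^ (k + 1)‖ ≤ Real.exp (∑ k ∈ Finset.range M, r ^ (k + 1)) := by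
        rw [← step3]; linarith
    _ ≤ Real.exp (r * (1 - r)⁻¹) := Real.exp_le_exp.mpr step4

lemma mult (hq : ‖q‖ < 1) : Multipliable (fun k : ℕ => 1 - q ^ (k + 1)) := by
  have hr0 : 0 ≤ ‖q‖ := norm_nonneg q
  apply Complex.multipliable_of_summable_log
  have h1 : Summable (fun k : ℕ => ‖q‖ ^ (k + 1)) := by
    simpa [pow_succ] using (summable_geometric_of_lt_one hr0 hq).mul_right ‖q‖
  apply Summable.of_norm_bounded_eventually_nat (g := fun k => 3 / 2 * ‖q‖ ^ (k + 1)) (h1.mul_left _)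
  have htend : Tendsto (fun k : ℕ => ‖q‖ ^ (k + 1)) atTop (𝓝 0) :=
    (tendsto_pow_atTop_nhds_zero_of_lt_one hr0 hq).comp (tendsto_add_atTop_nat 1)
  have hev : ∀ᶠ k : ℕ in atTop, ‖q‖ ^ (k + 1) ≤ 1 / 2 :=
    htend.eventually (ge_mem_nhds (show (0:ℝ) < 1/2 by norm_num))
  filter_upwards [hev] with k hk
  have : (1 : ℂ) - q ^ (k + 1) = 1 + (-(q ^ (k + 1))) := by ring
  rw [this]
  have hnorm : ‖-(q ^ (k + 1))‖ = ‖q‖ ^ (k + 1) := by rw [norm_neg, norm_pow]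
  have := Complex.norm_log_one_add_half_le_self (z := -(q ^ (k + 1))) (by rw [hnorm]; exact hk)
  rw [hnorm] at this
  exact this

lemma key (hq : ‖q‖ < 1) (n : ℕ) :
    ∑' j : ℕ, q ^ (j * (j + n)) / (P q j * P q (j + n)) = 1 / ∏' k : ℕ, (1 - q ^ (k + 1)) := by
  obtain ⟨δ, hδ0, hδ⟩ := P_lower hq
  set r := ‖q‖ with hrdef
  have hr0 : 0 ≤ r := norm_nonneg q
  set Cq := Real.exp (r * (1 - r)⁻¹) with hCdef
  have hCpos : 0 < Cq := Real.exp_pos _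
  set c := ∏' k : ℕ, (1 - q ^ (k + 1)) with hcdef
  have htend : Tendsto (fun M => P q M) atTop (𝓝 c) := (mult hq).hasProd.tendsto_prod_nat
  have hcδ : δ ≤ ‖c‖ := ge_of_tendsto htend.norm (Eventually.of_forall hδ)
  have hc0 : c ≠ 0 := by
    intro h; rw [h, norm_zero] at hcδ; linarith
  have hB : ∀ (M : ℕ) (t : ℤ), ‖B q M t‖ ≤ Cq / (δ * δ) := by
    intro M t
    by_cases h : 0 ≤ t ∧ t ≤ (M : ℤ)
    · rw [B_of h.1 h.2, norm_div, norm_mul]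
      exact div_le_div₀ hCpos.le (P_upper hq M) (mul_pos hδ0 hδ0)
        (mul_le_mul (hδ _) (hδ _) hδ0.le (norm_nonneg _))
    · rw [B_eq_zero h, norm_zero]
      positivity
  set g : ℕ → ℕ → ℂ :=
    fun M j => q ^ (j * (j + n)) * B q M (j : ℤ) * B q M ((j : ℤ) + (n : ℤ)) with hgdef
  have hgsum : ∀ M, ∑' j : ℕ, g M j = B q (M + M) ((M : ℤ) + (n : ℤ)) := by
    intro M
    have h0 : ∀ b ∉ Finset.range (M + 1), g M b = 0 := by
      intro j hj
      have hj' : M < j := by simp only [Finset.mem_range, not_lt] at hj; omega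
      simp only [hgdef]
      rw [B_eq_zero (M := M) (t := (j : ℤ)) (by omega), mul_zero, zero_mul]
    calc ∑' (j : ℕ), g M j = ∑ j ∈ Finset.range (M + 1), g M j := tsum_eq_sum h0
      _ = B q (M + M) ((M : ℤ) + (n : ℤ)) := by simp only [hgdef]; exact spec hq n M
  have hMM : Tendsto (fun M : ℕ => M + M) atTop atTop :=
    tendsto_atTop_mono (fun M => Nat.le_add_left M M) tendsto_id
  have hlim1 : Tendsto (fun M => B q (M + M) ((M : ℤ) + (n : ℤ))) atTop (𝓝 (1 / c)) := by
    have hev : ∀ᶠ M : ℕ in atTop,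
        P q (M + M) / (P q (M + n) * P q (M - n)) = B q (M + M) ((M : ℤ) + (n : ℤ)) := by
      filter_upwards [eventually_ge_atTop n] with M hMn'
      rw [show ((M : ℤ) + (n : ℤ)) = ((M + n : ℕ) : ℤ) by push_cast; ring,
        B_natCast (show M + n ≤ M + M by omega), show M + M - (M + n) = M - n by omega]
    apply Tendsto.congr' hev
    have h1 : Tendsto (fun M : ℕ => P q (M + M)) atTop (𝓝 c) := htend.comp hMM
    have h2 : Tendsto (fun M : ℕ => P q (M + n)) atTop (𝓝 c) := htend.comp (tendsto_add_atTop_nat n)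
    have h3 : Tendsto (fun M : ℕ => P q (M - n)) atTop (𝓝 c) := htend.comp (tendsto_sub_atTop_nat n)
    have h4 := h1.div (h2.mul h3) (mul_ne_zero hc0 hc0)
    have hval : c / (c * c) = 1 / c := by field_simp
    rw [← hval]
    exact h4
  have hlim2 : Tendsto (fun M => ∑' j, g M j) atTop
      (𝓝 (∑' j : ℕ, q ^ (j * (j + n)) / (P q j * P q (j + n)))) := by
    apply tendsto_tsum_of_dominated_convergence
      (bound := fun j : ℕ => (Cq / (δ * δ)) * (Cq / (δ * δ)) * r ^ j)
    · exact (summable_geometric_of_lt_one hr0 hq).mul_left _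
    · intro j
      have hev : ∀ᶠ M : ℕ in atTop,
          q ^ (j * (j + n)) * (P q M / (P q j * P q (M - j))) *
            (P q M / (P q (j + n) * P q (M - (j + n)))) = g M j := by
        filter_upwards [eventually_ge_atTop (j + n)] with M hM
        simp only [hgdef]
        rw [B_natCast (show j ≤ M by omega),
          show ((j : ℤ) + (n : ℤ)) = ((j + n : ℕ) : ℤ) by push_cast; ring,
          B_natCast (show j + n ≤ M by omega)]
      apply Tendsto.congr' hev
      have h1 : Tendsto (fun M : ℕ => P q (M - j)) atTop (𝓝 c) :=
        htend.comp (tendsto_sub_atTop_nat j)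
      have h2 : Tendsto (fun M : ℕ => P q (M - (j + n))) atTop (𝓝 c) :=
        htend.comp (tendsto_sub_atTop_nat (j + n))
      have hden1 : (P q j * c) ≠ 0 := mul_ne_zero (P_ne hq j) hc0
      have hden2 : (P q (j + n) * c) ≠ 0 := mul_ne_zero (P_ne hq (j + n)) hc0
      have hb1 : Tendsto (fun M : ℕ => P q M / (P q j * P q (M - j))) atTop
          (𝓝 (c / (P q j * c))) := htend.div (tendsto_const_nhds.mul h1) hden1
      have hb2 : Tendsto (fun M : ℕ => P q M / (P q (j + n) * P q (M - (j + n)))) atTop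
          (𝓝 (c / (P q (j + n) * c))) := htend.div (tendsto_const_nhds.mul h2) hden2
      have hb3 := ((tendsto_const_nhds (x := q ^ (j * (j + n)))).mul hb1).mul hb2
      have hval : q ^ (j * (j + n)) / (P q j * P q (j + n))
          = q ^ (j * (j + n)) * (c / (P q j * c)) * (c / (P q (j + n) * c)) := by
        field_simp [P_ne hq j, P_ne hq (j + n)]
      rw [hval]
      exact hb3
    · apply Eventually.of_forall
      intro M j
      simp only [hgdef]
      rw [norm_mul, norm_mul, norm_pow, ← hrdef]
      have hje : j ≤ j * (j + n) := by
        cases j with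
        | zero => simp
        | succ i => exact Nat.le_mul_of_pos_right _ (by omega)
      have hqe : r ^ (j * (j + n)) ≤ r ^ j := pow_le_pow_of_le_one hr0 (le_of_lt hq) hje
      calc r ^ (j * (j + n)) * ‖B q M (j : ℤ)‖ * ‖B q M ((j : ℤ) + (n : ℤ))‖
          ≤ r ^ j * (Cq / (δ * δ)) * (Cq / (δ * δ)) := by
            apply mul_le_mul (mul_le_mul hqe (hB M _) (norm_nonneg _) (pow_nonneg hr0 _))
              (hB M _) (norm_nonneg _)
            positivity
        _ = Cq / (δ * δ) * (Cq / (δ * δ)) * r ^ j := by ring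
  exact tendsto_nhds_unique ((tendsto_congr hgsum).mp hlim2) hlim1

end DurfeeAux

/-- Durfee rectangle identity. -/
theorem durfee_rectangle (q : ℂ) (hq : ‖q‖ < 1) (n : ℤ) :
    (∑' j : ℕ, (q ^ (((j + max 0 (-n)) * ((j + max 0 (-n)) + n)).toNat) /
      ((∏ k ∈ Finset.range ((j + max 0 (-n)) : ℤ).toNat, (1 - q ^ (k + 1))) *
        ∏ k ∈ Finset.range (((j + max 0 (-n)) : ℤ) + n).toNat, (1 - q ^ (k + 1))))) =
    1 / ∏' k : ℕ, (1 - q ^ (k + 1)) := by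
  rcases le_or_gt 0 n with hn | hn
  · obtain ⟨m, rfl⟩ : ∃ m : ℕ, n = (m : ℤ) := ⟨n.toNat, (Int.toNat_of_nonneg hn).symm⟩
    have hmax : max 0 (-(m : ℤ)) = 0 := by omega
    rw [← DurfeeAux.key hq m]
    apply tsum_congr
    intro j
    simp only [hmax, add_zero]
    have e1 : ((j : ℤ) * ((j : ℤ) + (m : ℤ))).toNat = j * (j + m) := by
      rw [show (j : ℤ) + (m : ℤ) = ((j + m : ℕ) : ℤ) by push_cast; ring, ← Nat.cast_mul,
        Int.toNat_natCast]
    have e2 : ((j : ℤ)).toNat = j := Int.toNat_natCast j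
    have e3 : ((j : ℤ) + (m : ℤ)).toNat = j + m := by omega
    rw [e1, e2, e3]
    simp only [DurfeeAux.P]
  · obtain ⟨m, rfl⟩ : ∃ m : ℕ, n = -(m : ℤ) := ⟨n.natAbs, by omega⟩
    have hmax : max 0 (m : ℤ) = (m : ℤ) := by omega
    rw [← DurfeeAux.key hq m]
    apply tsum_congr
    intro j
    simp only [neg_neg, hmax]
    have e0 : ((j : ℤ) + (m : ℤ)) + -(m : ℤ) = (j : ℤ) := by ring
    rw [e0]
    have e1 : (((j : ℤ) + (m : ℤ)) * (j : ℤ)).toNat = j * (j + m) := by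
      rw [show (j : ℤ) + (m : ℤ) = ((j + m : ℕ) : ℤ) by push_cast; ring, ← Nat.cast_mul,
        Int.toNat_natCast, Nat.mul_comm]
    have e2 : ((j : ℤ) + (m : ℤ)).toNat = j + m := by omega
    have e3 : ((j : ℤ)).toNat = j := Int.toNat_natCast j
    rw [e1, e2, e3]
    simp only [DurfeeAux.P]
    rw [mul_comm (∏ k ∈ Finset.range (j + m), (1 - q ^ (k + 1)))
      (∏ k ∈ Finset.range j, (1 - q ^ (k + 1)))]
end

section
/- For |q|<1, $\sum_{i,j\geq 0} \frac{q^{i^2+ij+\frac{1}{2}j^2 - i + \frac{1}{2}j}}{(q;q)_i (q;q)_j} = 2\,\frac{(q^4;q^4)_\infty}{(q;q)_\infty}$. Equivalently, replacing $q$ by $q^2$: $\sum_{i,j\geq 0} \frac{q^{2i^2+2ij+j^2-2i+j}}{(q^2;q^2)_i (q^2;q^2)_j} = 2\,\frac{(q^8;q^8)_\infty}{(q^2;q^2)_\infty}$. -/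
open Finset Filter Topology

noncomputable def qP (x : ℂ) (n : ℕ) : ℂ := ∏ k ∈ Finset.range n, (1 - x ^ (k + 1))

lemma norm_one_sub_pow_pos {x : ℂ} (hx : ‖x‖ < 1) (m : ℕ) :
    1 - ‖x‖ ≤ ‖1 - x ^ (m + 1)‖ := by
  have h1 : ‖x ^ (m + 1)‖ ≤ ‖x‖ := by
    rw [norm_pow]
    calc ‖x‖ ^ (m + 1) ≤ ‖x‖ ^ 1 := by
          apply pow_le_pow_of_le_one (norm_nonneg x) hx.le
          omega
      _ = ‖x‖ := pow_one _
  have := norm_sub_norm_le (1 : ℂ) (x ^ (m + 1))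
  simp only [norm_one] at this
  linarith

lemma qP_norm_ge {x : ℂ} (hx : ‖x‖ < 1) (n : ℕ) :
    (1 - ‖x‖) ^ n ≤ ‖qP x n‖ := by
  rw [qP, norm_prod]
  calc (1 - ‖x‖) ^ n = ∏ _k ∈ Finset.range n, (1 - ‖x‖) := by
        rw [Finset.prod_const, card_range]
    _ ≤ ∏ k ∈ Finset.range n, ‖1 - x ^ (k + 1)‖ := by
        apply Finset.prod_le_prod
        · intro i _; linarith
        · intro i _; exact norm_one_sub_pow_pos hx i

lemma qP_ne_zero {x : ℂ} (hx : ‖x‖ < 1) (n : ℕ) : qP x n ≠ 0 := by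
  have h := qP_norm_ge hx n
  have : (0:ℝ) < (1 - ‖x‖) ^ n := pow_pos (by linarith) n
  intro h0
  rw [h0, norm_zero] at h
  linarith

lemma qP_succ (x : ℂ) (n : ℕ) : qP x (n + 1) = qP x n * (1 - x ^ (n + 1)) := by
  rw [qP, qP, Finset.prod_range_succ]

lemma tri_succ (n : ℕ) : (n + 1) * n / 2 = n * (n - 1) / 2 + n := by
  rcases n with _ | m
  · simp
  · have he : Even ((m + 1) * m) := by
      simpa [Nat.mul_comm] using Nat.even_mul_succ_self m
    obtain ⟨c, hc⟩ := he
    have h2 : (m + 1 + 1) * (m + 1) = (m + 1) * m + 2 * (m + 1) := by ring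
    simp only [Nat.add_sub_cancel]
    omega


noncomputable def eT (x z : ℂ) (n : ℕ) : ℂ := z ^ n * x ^ (n * (n - 1) / 2) / qP x n

lemma eT_succ {x : ℂ} (hx : ‖x‖ < 1) (z : ℂ) (n : ℕ) :
    eT x z (n + 1) = eT x z n * (z * x ^ n / (1 - x ^ (n + 1))) := by
  have h1 : (1 : ℂ) - x ^ (n + 1) ≠ 0 := by
    intro h0
    have := norm_one_sub_pow_pos hx n
    rw [h0, norm_zero] at this
    linarith
  rw [eT, eT, qP_succ, Nat.add_sub_cancel, tri_succ, pow_add]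
  field_simp
  ring

lemma eT_summable {x : ℂ} (hx : ‖x‖ < 1) (z : ℂ) : Summable (eT x z) := by
  have hM : (0:ℝ) < 1 - ‖x‖ := by linarith
  apply summable_of_ratio_norm_eventually_le (r := 1/2) (by norm_num)
  have hev : ∀ᶠ n : ℕ in atTop, ‖z‖ * ‖x‖ ^ n * (1 - ‖x‖)⁻¹ ≤ 1/2 := by
    have h0 : Tendsto (fun n : ℕ => ‖z‖ * ‖x‖ ^ n * (1 - ‖x‖)⁻¹) atTop (𝓝 (‖z‖ * 0 * (1 - ‖x‖)⁻¹)) := by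
      apply Tendsto.mul_const
      exact (tendsto_pow_atTop_nhds_zero_of_lt_one (norm_nonneg x) hx).const_mul _
    rw [mul_zero, zero_mul] at h0
    exact h0.eventually_le_const (by norm_num)
  filter_upwards [hev] with n hn
  rw [eT_succ hx z n, norm_mul]
  have hle : ‖z * x ^ n / (1 - x ^ (n + 1))‖ ≤ ‖z‖ * ‖x‖ ^ n * (1 - ‖x‖)⁻¹ := by
    rw [norm_div, norm_mul, norm_pow]
    rw [div_eq_mul_inv]
    apply mul_le_mul_of_nonneg_left _ (by positivity)
    apply inv_anti₀ hM (norm_one_sub_pow_pos hx n)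
  calc ‖eT x z n‖ * ‖z * x ^ n / (1 - x ^ (n + 1))‖ ≤ ‖eT x z n‖ * (1/2) := by
        apply mul_le_mul_of_nonneg_left (hle.trans hn) (norm_nonneg _)
    _ = 1/2 * ‖eT x z n‖ := by ring

lemma mult_one_add {u : ℕ → ℂ} (hu : Summable u) (h1 : ∀ k, 1 + u k ≠ 0) :
    Multipliable (fun k => 1 + u k) ∧ (∏' k, (1 + u k)) ≠ 0 := by
  have hlog : Summable (fun k => Complex.log (1 + u k)) := by
    apply Summable.of_norm_bounded_eventually_nat (g := fun k => 3/2 * ‖u k‖)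
      (hu.norm.mul_left _)
    have h0 : Tendsto u atTop (𝓝 0) := hu.tendsto_atTop_zero
    have : ∀ᶠ k in atTop, ‖u k‖ ≤ 1/2 := by
      have := h0.norm
      rw [norm_zero] at this
      exact this.eventually_le_const (by norm_num)
    filter_upwards [this] with k hk
    exact Complex.norm_log_one_add_half_le_self hk
  constructor
  · exact Complex.multipliable_of_summable_log hlog
  · have := Complex.cexp_tsum_eq_tprod (f := fun k => 1 + u k) h1 hlog
    rw [← this]
    exact Complex.exp_ne_zero _

lemma eT_zero (x z : ℂ) : eT x z 0 = 1 := by simp [eT, qP]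

lemma euler_funeq {x : ℂ} (hx : ‖x‖ < 1) (z : ℂ) :
    ∑' n, eT x z n = (1 + z) * ∑' n, eT x (z * x) n := by
  have key : ∀ n : ℕ, eT x z (n + 1) = eT x (z * x) (n + 1) + z * eT x (z * x) n := by
    intro n
    have h1 : (1 : ℂ) - x ^ (n + 1) ≠ 0 := by
      intro h0
      have := norm_one_sub_pow_pos hx n
      rw [h0, norm_zero] at this; linarith
    have hP := qP_ne_zero hx n
    rw [eT, eT, eT, qP_succ, Nat.add_sub_cancel, tri_succ, mul_pow, pow_add]
    field_simp
    ring
  have hS1 : Summable (fun n => eT x (z * x) (n + 1)) :=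
    (summable_nat_add_iff 1).mpr (eT_summable hx (z * x))
  have hS2 : Summable (fun n => z * eT x (z * x) n) := (eT_summable hx (z * x)).mul_left z
  rw [(eT_summable hx z).tsum_eq_zero_add, eT_zero]
  calc 1 + ∑' n, eT x z (n + 1)
      = 1 + ∑' n, (eT x (z * x) (n + 1) + z * eT x (z * x) n) := by
        congr 1; exact tsum_congr key
    _ = 1 + ((∑' n, eT x (z * x) (n + 1)) + ∑' n, z * eT x (z * x) n) := by
        rw [hS1.tsum_add hS2]
    _ = 1 + ((∑' n, eT x (z * x) (n + 1)) + z * ∑' n, eT x (z * x) n) := by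
        rw [tsum_mul_left]
    _ = (1 + z) * ∑' n, eT x (z * x) n := by
        rw [(eT_summable hx (z * x)).tsum_eq_zero_add, eT_zero]
        ring

lemma euler_iterate {x : ℂ} (hx : ‖x‖ < 1) (z : ℂ) (N : ℕ) :
    ∑' n, eT x z n = (∏ k ∈ Finset.range N, (1 + z * x ^ k)) * ∑' n, eT x (z * x ^ N) n := by
  induction N with
  | zero => simp
  | succ m ih =>
    rw [ih, euler_funeq hx (z * x ^ m), Finset.prod_range_succ]
    have hzx : z * x ^ m * x = z * x ^ (m + 1) := by ring
    rw [hzx]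
    ring

lemma euler_near_one {x : ℂ} (hx : ‖x‖ < 1) {w : ℂ} (hw : ‖w‖ * (1 - ‖x‖)⁻¹ ≤ 1/2) :
    ‖(∑' n, eT x w n) - 1‖ ≤ 2 * ((1 - ‖x‖)⁻¹ * ‖w‖) := by
  set M := (1 - ‖x‖)⁻¹ with hM
  have hMpos : 0 < M := by
    rw [hM]; apply inv_pos.mpr; linarith
  have hbound : ∀ n : ℕ, ‖eT x w (n + 1)‖ ≤ M * ‖w‖ * (1/2) ^ n := by
    intro n
    rw [eT, norm_div, norm_mul, norm_pow, norm_pow]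
    have hd : (1 - ‖x‖) ^ (n + 1) ≤ ‖qP x (n + 1)‖ := qP_norm_ge hx (n + 1)
    have hdpos : (0:ℝ) < (1 - ‖x‖) ^ (n + 1) := pow_pos (by linarith) _
    have h1 : ‖w‖ ^ (n + 1) * ‖x‖ ^ ((n+1) * (n+1-1) / 2) / ‖qP x (n + 1)‖
        ≤ ‖w‖ ^ (n + 1) * 1 / (1 - ‖x‖) ^ (n + 1) := by
      apply div_le_div₀ (by positivity)
      · apply mul_le_mul_of_nonneg_left _ (by positivity)
        exact pow_le_one₀ (norm_nonneg x) hx.le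
      · exact hdpos
      · exact hd
    refine h1.trans ?_
    rw [mul_one, div_eq_mul_inv, ← inv_pow, ← hM, ← mul_pow]
    have h2 : (‖w‖ * M) ^ (n + 1) ≤ (‖w‖ * M) * (1/2) ^ n := by
      rw [pow_succ']
      apply mul_le_mul_of_nonneg_left _ (by positivity)
      apply pow_le_pow_left₀ (by positivity) (by linarith [hw])
    refine h2.trans ?_
    ring_nf
    exact le_refl _
  have hS : Summable (fun n => eT x w (n + 1)) := (summable_nat_add_iff 1).mpr (eT_summable hx w)
  have hgeom : Summable (fun n : ℕ => M * ‖w‖ * (1/2) ^ n) := by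
    apply Summable.mul_left
    exact summable_geometric_of_lt_one (by norm_num) (by norm_num)
  rw [(eT_summable hx w).tsum_eq_zero_add, eT_zero, add_sub_cancel_left]
  calc ‖∑' n, eT x w (n + 1)‖ ≤ ∑' n, ‖eT x w (n + 1)‖ := norm_tsum_le_tsum_norm hS.norm
    _ ≤ ∑' n : ℕ, M * ‖w‖ * (1/2) ^ n := Summable.tsum_le_tsum hbound hS.norm hgeom
    _ = M * ‖w‖ * 2 := by
        rw [tsum_mul_left, tsum_geometric_of_lt_one (by norm_num) (by norm_num)]
        norm_num
    _ = 2 * (M * ‖w‖) := by ring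

theorem euler {x : ℂ} (hx : ‖x‖ < 1) (z : ℂ) (hz : ∀ k, 1 + z * x ^ k ≠ 0) :
    ∑' n, eT x z n = ∏' k, (1 + z * x ^ k) := by
  have hsum : Summable (fun k : ℕ => z * x ^ k) :=
    (summable_geometric_of_norm_lt_one hx).mul_left z
  obtain ⟨hmul, -⟩ := mult_one_add hsum hz
  have h1 : Tendsto (fun N => ∏ k ∈ Finset.range N, (1 + z * x ^ k)) atTop
      (𝓝 (∏' k, (1 + z * x ^ k))) := hmul.hasProd.tendsto_prod_nat
  set M := (1 - ‖x‖)⁻¹ with hM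
  have hMpos : 0 < M := by rw [hM]; apply inv_pos.mpr; linarith
  have hev : ∀ᶠ N : ℕ in atTop, ‖z * x ^ N‖ * M ≤ 1/2 := by
    have h0 : Tendsto (fun N : ℕ => ‖z * x ^ N‖ * M) atTop (𝓝 (‖z‖ * 0 * M)) := by
      apply Tendsto.mul_const
      simp only [norm_mul, norm_pow]
      exact (tendsto_pow_atTop_nhds_zero_of_lt_one (norm_nonneg x) hx).const_mul _
    rw [mul_zero, zero_mul] at h0
    exact h0.eventually_le_const (by norm_num)
  have h2 : Tendsto (fun N : ℕ => ∑' n, eT x (z * x ^ N) n) atTop (𝓝 1) := by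
    have hz0 : Tendsto (fun N : ℕ => (∑' n, eT x (z * x ^ N) n) - 1) atTop (𝓝 0) := by
      apply squeeze_zero_norm' (a := fun N : ℕ => 2 * (M * ‖z * x ^ N‖))
      · filter_upwards [hev] with N hN
        exact euler_near_one hx hN
      · have : Tendsto (fun N : ℕ => ‖z * x ^ N‖) atTop (𝓝 0) := by
          simp only [norm_mul, norm_pow]
          have := (tendsto_pow_atTop_nhds_zero_of_lt_one (norm_nonneg x) hx).const_mul ‖z‖
          simpa using this
        have := (this.const_mul M).const_mul 2
        simpa using this
    have := hz0.add_const 1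
    simpa using this
  have h3 : Tendsto (fun N : ℕ => (∏ k ∈ Finset.range N, (1 + z * x ^ k)) *
      ∑' n, eT x (z * x ^ N) n) atTop (𝓝 ((∏' k, (1 + z * x ^ k)) * 1)) := h1.mul h2
  rw [mul_one] at h3
  have h4 : Tendsto (fun _ : ℕ => ∑' n, eT x z n) atTop (𝓝 (∑' n, eT x z n)) :=
    tendsto_const_nhds
  have h5 : (fun N : ℕ => (∏ k ∈ Finset.range N, (1 + z * x ^ k)) *
      ∑' n, eT x (z * x ^ N) n) = fun _ : ℕ => ∑' n, eT x z n := by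
    funext N
    exact (euler_iterate hx z N).symm
  rw [h5] at h3
  exact tendsto_nhds_unique h4 h3


lemma norm_pow_succ_lt_one {x : ℂ} (hx : ‖x‖ < 1) (m : ℕ) : ‖x ^ (m + 1)‖ < 1 := by
  rw [norm_pow]
  exact pow_lt_one₀ (norm_nonneg x) hx (Nat.succ_ne_zero m)

lemma one_add_ne_zero {u : ℂ} (h : ‖u‖ < 1) : 1 + u ≠ 0 := by
  intro h0
  have : u = -1 := by linear_combination h0
  rw [this, norm_neg, norm_one] at h
  exact lt_irrefl _ h

lemma summable_pow_succ {x : ℂ} (hx : ‖x‖ < 1) : Summable (fun k : ℕ => x ^ (k + 1)) :=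
  (summable_nat_add_iff 1).mpr (summable_geometric_of_norm_lt_one hx)

lemma mult_plus {x : ℂ} (hx : ‖x‖ < 1) :
    Multipliable (fun k : ℕ => 1 + x ^ (k + 1)) ∧ (∏' k : ℕ, (1 + x ^ (k + 1))) ≠ 0 :=
  mult_one_add (summable_pow_succ hx) (fun k => one_add_ne_zero (norm_pow_succ_lt_one hx k))

lemma mult_minus {x : ℂ} (hx : ‖x‖ < 1) :
    Multipliable (fun k : ℕ => 1 - x ^ (k + 1)) ∧ (∏' k : ℕ, (1 - x ^ (k + 1))) ≠ 0 := by
  have h := mult_one_add (u := fun k => -(x ^ (k + 1))) (summable_pow_succ hx).neg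
    (fun k => by
      have := one_add_ne_zero (u := -(x ^ (k+1))) (by rw [norm_neg]; exact norm_pow_succ_lt_one hx k)
      exact this)
  have he : (fun k : ℕ => 1 + -(x ^ (k + 1))) = (fun k : ℕ => 1 - x ^ (k + 1)) := by
    funext k; ring
  rwa [he] at h

lemma pair_prod {x : ℂ} (hx : ‖x‖ < 1) :
    (∏' k : ℕ, (1 + x ^ (k + 1))) * ∏' k : ℕ, (1 - x ^ (k + 1)) =
      ∏' k : ℕ, (1 - (x ^ 2) ^ (k + 1)) := by
  rw [← (mult_plus hx).1.tprod_mul (mult_minus hx).1]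
  exact tprod_congr fun k => by ring

lemma qP_sq (x : ℂ) (n : ℕ) :
    qP x n * ∏ k ∈ Finset.range n, (1 + x ^ (k + 1)) = qP (x ^ 2) n := by
  rw [qP, qP, ← Finset.prod_mul_distrib]
  exact Finset.prod_congr rfl fun k _ => by ring

lemma even_mul_pred (j : ℕ) : 2 * (j * (j - 1) / 2) = j * j - j := by
  rcases j with _ | m
  · simp
  · have he : Even ((m + 1) * m) := by
      simpa [Nat.mul_comm] using Nat.even_mul_succ_self m
    obtain ⟨c, hc⟩ := he
    have h2 : (m + 1) * (m + 1) = (m + 1) * m + (m + 1) := by ring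
    simp only [Nat.add_sub_cancel]
    omega

lemma toNat_E (i j : ℕ) :
    (2 * (i : ℤ) ^ 2 + 2 * i * j + (j : ℤ) ^ 2 - 2 * i + j).toNat
      = (2 * (i * i) - 2 * i) + (2 * ((i + 1) * j) + 2 * (j * (j - 1) / 2)) := by
  have hA : i ≤ i * i := by nlinarith
  have hB : j ≤ j * j := by nlinarith
  have hjj := even_mul_pred j
  have hkey : (2 * (i : ℤ) ^ 2 + 2 * i * j + (j : ℤ) ^ 2 - 2 * i + j)
      = (((2 * (i * i) - 2 * i) + (2 * ((i + 1) * j) + 2 * (j * (j - 1) / 2)) : ℕ) : ℤ) := by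
    have h1 : ((2 * (i * i) - 2 * i : ℕ) : ℤ) = 2 * (i : ℤ) * i - 2 * i := by
      push_cast [Nat.cast_sub (by omega : 2 * i ≤ 2 * (i * i))]
      ring
    have h2 : ((2 * (j * (j - 1) / 2) : ℕ) : ℤ) = (j : ℤ) * j - j := by
      rw [hjj]
      push_cast [Nat.cast_sub hB]
      ring
    push_cast [h1, h2]
    ring
  rw [hkey, Int.toNat_natCast]

lemma ratio_sum {c M : ℝ} (hc0 : 0 ≤ c) (hc1 : c < 1) (hM : 0 < M) (e : ℕ → ℕ)
    (hmono : ∀ n, e n + n ≤ e (n + 1)) : Summable (fun n : ℕ => c ^ e n * M ^ n) := by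
  apply summable_of_ratio_norm_eventually_le (r := 1/2) (by norm_num)
  have hev : ∀ᶠ n : ℕ in atTop, c ^ n * M ≤ 1/2 := by
    have h0 : Tendsto (fun n : ℕ => c ^ n * M) atTop (𝓝 (0 * M)) :=
      (tendsto_pow_atTop_nhds_zero_of_lt_one hc0 hc1).mul_const M
    rw [zero_mul] at h0
    exact h0.eventually_le_const (by norm_num)
  filter_upwards [hev] with n hn
  rw [Real.norm_of_nonneg (by positivity), Real.norm_of_nonneg (by positivity)]
  calc c ^ e (n + 1) * M ^ (n + 1)
      ≤ c ^ (e n + n) * M ^ (n + 1) := by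
        apply mul_le_mul_of_nonneg_right _ (by positivity)
        exact pow_le_pow_of_le_one hc0 hc1.le (hmono n)
    _ = (c ^ e n * M ^ n) * (c ^ n * M) := by rw [pow_add, pow_succ]; ring
    _ ≤ (c ^ e n * M ^ n) * (1/2) := by
        apply mul_le_mul_of_nonneg_left hn (by positivity)
    _ = 1/2 * (c ^ e n * M ^ n) := by ring

lemma summable_main {q : ℂ} (hq : ‖q‖ < 1) : Summable (fun p : ℕ × ℕ =>
    q ^ ((2 * (p.1 : ℤ) ^ 2 + 2 * p.1 * p.2 + (p.2 : ℤ) ^ 2 - 2 * p.1 + p.2).toNat) /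
      (qP (q ^ 2) p.1 * qP (q ^ 2) p.2)) := by
  have hq2 : ‖q ^ 2‖ < 1 := norm_pow_succ_lt_one hq 1
  set M := (1 - ‖q ^ 2‖)⁻¹ with hMdef
  have hM : 0 < M := by rw [hMdef]; exact inv_pos.mpr (by linarith)
  have hf : Summable (fun i : ℕ => ‖q‖ ^ (2 * (i * i) - 2 * i) * M ^ i) := by
    apply ratio_sum (norm_nonneg q) hq hM
    intro n
    have h1 : (n + 1) * (n + 1) = n * n + 2 * n + 1 := by ring
    have h2 : n ≤ n * n := by nlinarith
    omega
  have hg : Summable (fun j : ℕ => ‖q‖ ^ (j * j + j) * M ^ j) := by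
    apply ratio_sum (norm_nonneg q) hq hM
    intro n
    have h1 : (n + 1) * (n + 1) = n * n + 2 * n + 1 := by ring
    omega
  have hfg : Summable (fun p : ℕ × ℕ =>
      (‖q‖ ^ (2 * (p.1 * p.1) - 2 * p.1) * M ^ p.1) * (‖q‖ ^ (p.2 * p.2 + p.2) * M ^ p.2)) :=
    hf.mul_of_nonneg hg (fun i => by positivity) (fun j => by positivity)
  apply Summable.of_norm_bounded hfg
  rintro ⟨i, j⟩
  simp only
  rw [norm_div, norm_pow, norm_mul]
  have hPi : (1 - ‖q ^ 2‖) ^ i ≤ ‖qP (q ^ 2) i‖ := qP_norm_ge hq2 i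
  have hPj : (1 - ‖q ^ 2‖) ^ j ≤ ‖qP (q ^ 2) j‖ := qP_norm_ge hq2 j
  have hbase : (0:ℝ) < 1 - ‖q ^ 2‖ := by linarith
  have hPi0 : (0:ℝ) < ‖qP (q ^ 2) i‖ := lt_of_lt_of_le (by positivity) hPi
  have hPj0 : (0:ℝ) < ‖qP (q ^ 2) j‖ := lt_of_lt_of_le (by positivity) hPj
  have hnum : ‖q‖ ^ ((2 * (i : ℤ) ^ 2 + 2 * i * j + (j : ℤ) ^ 2 - 2 * i + j).toNat)
      ≤ ‖q‖ ^ (2 * (i * i) - 2 * i) * ‖q‖ ^ (j * j + j) := by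
    rw [toNat_E i j, pow_add]
    apply mul_le_mul_of_nonneg_left _ (by positivity)
    apply pow_le_pow_of_le_one (norm_nonneg q) hq.le
    have hB : j ≤ j * j := by nlinarith
    have he := even_mul_pred j
    have h3 : (i + 1) * j = i * j + j := by ring
    omega
  calc ‖q‖ ^ ((2 * (i : ℤ) ^ 2 + 2 * i * j + (j : ℤ) ^ 2 - 2 * i + j).toNat) /
        (‖qP (q ^ 2) i‖ * ‖qP (q ^ 2) j‖)
      ≤ (‖q‖ ^ (2 * (i * i) - 2 * i) * ‖q‖ ^ (j * j + j)) /
          ((1 - ‖q ^ 2‖) ^ i * (1 - ‖q ^ 2‖) ^ j) := by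
        apply div_le_div₀ (by positivity) hnum (by positivity)
        exact mul_le_mul hPi hPj (by positivity) (le_of_lt hPi0)
    _ = (‖q‖ ^ (2 * (i * i) - 2 * i) * M ^ i) * (‖q‖ ^ (j * j + j) * M ^ j) := by
        rw [hMdef, div_eq_mul_inv, mul_inv, ← inv_pow, ← inv_pow]
        ring

set_option maxHeartbeats 2000000 in
/-- Example 2, first case (after replacing q by q²). -/
theorem example2_case1 (q : ℂ) (hq : ‖q‖ < 1) :
    ∑' p : ℕ × ℕ,
      q ^ ((2 * (p.1 : ℤ) ^ 2 + 2 * p.1 * p.2 + (p.2 : ℤ) ^ 2 - 2 * p.1 + p.2).toNat) /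
        ((∏ k ∈ Finset.range p.1, (1 - q ^ (2 * (k + 1)))) *
          ∏ k ∈ Finset.range p.2, (1 - q ^ (2 * (k + 1)))) =
    2 * (∏' k : ℕ, (1 - q ^ (8 * (k + 1)))) / ∏' k : ℕ, (1 - q ^ (2 * (k + 1))) := by
  have hq2 : ‖q ^ 2‖ < 1 := norm_pow_succ_lt_one hq 1
  set X : ℂ := q ^ 2 with hX
  have hq4 : ‖X ^ 2‖ < 1 := norm_pow_succ_lt_one hq2 1
  set R : ℂ := X ^ 2 with hR
  have hden : ∀ n : ℕ, (∏ k ∈ Finset.range n, (1 - q ^ (2 * (k + 1)))) = qP X n := by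
    intro n
    rw [qP]
    refine Finset.prod_congr rfl fun k _ => ?_
    rw [hX, ← pow_mul]
  -- term identity
  have hterm : ∀ i j : ℕ,
      q ^ ((2 * (i : ℤ) ^ 2 + 2 * i * j + (j : ℤ) ^ 2 - 2 * i + j).toNat) /
        (qP X i * qP X j)
      = (q ^ (2 * (i * i) - 2 * i) / qP X i) * eT X (X ^ (i + 1)) j := by
    intro i j
    have h1 : (X ^ (i + 1)) ^ j = q ^ (2 * ((i + 1) * j)) := by
      rw [hX, ← pow_mul, ← pow_mul]
    have h2 : X ^ (j * (j - 1) / 2) = q ^ (2 * (j * (j - 1) / 2)) := by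
      rw [hX, ← pow_mul]
    rw [eT, h1, h2, toNat_E i j, pow_add, pow_add, div_mul_div_comm]
  -- multipliable products
  have hmulX := mult_plus hq2
  have hminX := mult_minus hq2
  have hmulR := mult_plus hq4
  have hminR := mult_minus hq4
  set A : ℂ := ∏' k : ℕ, (1 + X ^ (k + 1)) with hA
  set C : ℂ := ∏' k : ℕ, (1 + R ^ (k + 1)) with hC
  set D2 : ℂ := ∏' k : ℕ, (1 - X ^ (k + 1)) with hD2
  set D8 : ℂ := ∏' k : ℕ, (1 - (R ^ 2) ^ (k + 1)) with hD8
  -- row sums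
  have hrowS : ∀ i : ℕ, Summable (fun j : ℕ =>
      q ^ ((2 * (i : ℤ) ^ 2 + 2 * i * j + (j : ℤ) ^ 2 - 2 * i + j).toNat) /
        (qP X i * qP X j)) := by
    intro i
    apply (summable_congr (fun j => hterm i j)).mpr
    exact (eT_summable hq2 (X ^ (i + 1))).mul_left _
  have hrow : ∀ i : ℕ,
      (∑' j : ℕ, q ^ ((2 * (i : ℤ) ^ 2 + 2 * i * j + (j : ℤ) ^ 2 - 2 * i + j).toNat) /
        (qP X i * qP X j)) = A * eT R 1 i := by
    intro i
    rw [tsum_congr (hterm i), tsum_mul_left]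
    have hz : ∀ k : ℕ, 1 + X ^ (i + 1) * X ^ k ≠ 0 := by
      intro k
      rw [← pow_add]
      exact one_add_ne_zero (by
        have : i + 1 + k = (i + k) + 1 := by omega
        rw [this]; exact norm_pow_succ_lt_one hq2 (i + k))
    rw [euler hq2 (X ^ (i + 1)) hz]
    have hshift : (∏' k : ℕ, (1 + X ^ (i + 1) * X ^ k)) =
        ∏' k : ℕ, (1 + X ^ ((k + i) + 1)) := by
      refine tprod_congr fun k => ?_
      rw [← pow_add]
      congr 2
      omega
    have hB0 : (∏ k ∈ Finset.range i, (1 + X ^ (k + 1))) ≠ 0 :=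
      Finset.prod_ne_zero_iff.mpr fun k _ => one_add_ne_zero (norm_pow_succ_lt_one hq2 k)
    have hsplit : (∏' k : ℕ, (1 + X ^ ((k + i) + 1))) =
        A / ∏ k ∈ Finset.range i, (1 + X ^ (k + 1)) := by
      have hsh : Summable (fun n : ℕ => X ^ (n + i + 1)) :=
        (summable_nat_add_iff (i + 1)).mpr (summable_geometric_of_norm_lt_one hq2)
      have hms : Multipliable (fun n : ℕ => 1 + X ^ (n + i + 1)) :=
        (mult_one_add hsh (fun k => one_add_ne_zero (norm_pow_succ_lt_one hq2 (k + i)))).1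
      rw [hA, eq_div_iff hB0, mul_comm]
      exact Multipliable.prod_mul_tprod_nat_mul' (f := fun k => 1 + X ^ (k + 1)) (k := i) hms
    rw [hshift, hsplit]
    -- now: (q^a/qP X i) * (A / B i) = A * eT R 1 i
    have hcomb : qP X i * ∏ k ∈ Finset.range i, (1 + X ^ (k + 1)) = qP R i := by
      rw [hR]; exact qP_sq X i
    have hnum : q ^ (2 * (i * i) - 2 * i) = R ^ (i * (i - 1) / 2) := by
      rw [hR, hX, ← pow_mul, ← pow_mul]
      congr 1
      have hA2 : i ≤ i * i := by nlinarith
      have he := even_mul_pred i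
      omega
    rw [eT, one_pow, ← hnum]
    have hPX := qP_ne_zero hq2 i
    have hPR : qP R i ≠ 0 := qP_ne_zero hq4 i
    field_simp
    rw [← hcomb]
    ring
  have hz1 : ∀ k : ℕ, 1 + 1 * R ^ k ≠ 0 := by
    intro k
    rcases k with _ | m
    · norm_num
    · rw [one_mul]
      exact one_add_ne_zero (norm_pow_succ_lt_one hq4 m)

  have e8 : (∏' k : ℕ, (1 - q ^ (8 * (k + 1)))) = D8 := by
    rw [hD8]
    refine tprod_congr fun k => ?_
    rw [hR, hX, ← pow_mul, ← pow_mul, ← pow_mul]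
    congr 2
    ring
  have e2 : (∏' k : ℕ, (1 - q ^ (2 * (k + 1)))) = D2 := by
    rw [hD2]
    refine tprod_congr fun k => ?_
    rw [hX, ← pow_mul]
  rw [e8, e2]
  calc ∑' p : ℕ × ℕ,
      q ^ ((2 * (p.1 : ℤ) ^ 2 + 2 * p.1 * p.2 + (p.2 : ℤ) ^ 2 - 2 * p.1 + p.2).toNat) /
        ((∏ k ∈ Finset.range p.1, (1 - q ^ (2 * (k + 1)))) *
          ∏ k ∈ Finset.range p.2, (1 - q ^ (2 * (k + 1))))
      = ∑' p : ℕ × ℕ,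
        q ^ ((2 * (p.1 : ℤ) ^ 2 + 2 * p.1 * p.2 + (p.2 : ℤ) ^ 2 - 2 * p.1 + p.2).toNat) /
          (qP X p.1 * qP X p.2) := by
        refine tsum_congr fun p => ?_
        rw [hden p.1, hden p.2]
    _ = ∑' i : ℕ, ∑' j : ℕ,
        q ^ ((2 * (i : ℤ) ^ 2 + 2 * i * j + (j : ℤ) ^ 2 - 2 * i + j).toNat) /
          (qP X i * qP X j) := by
        exact Summable.tsum_prod' (by rw [hX]; exact summable_main hq) (fun i => hrowS i)
    _ = ∑' i : ℕ, A * eT R 1 i := tsum_congr hrow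
    _ = A * ∑' i : ℕ, eT R 1 i := tsum_mul_left
    _ = A * ∏' k : ℕ, (1 + 1 * R ^ k) := by rw [euler hq4 1 hz1]
    _ = A * (2 * C) := by
        have h1 : (∏' k : ℕ, (1 + 1 * R ^ k)) = ∏' k : ℕ, (1 + R ^ k) :=
          tprod_congr fun k => by rw [one_mul]
        have h2 : (∏' k : ℕ, (1 + R ^ k)) = (1 + R ^ 0) * ∏' k : ℕ, (1 + R ^ (k + 1)) :=
          tprod_eq_zero_mul' (f := fun k => 1 + R ^ k) (mult_plus hq4).1
        rw [h1, h2, hC, pow_zero]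
        norm_num
    _ = 2 * D8 / D2 := by
        have hP1 : A * D2 = ∏' k : ℕ, (1 - (X ^ 2) ^ (k + 1)) := pair_prod hq2
        have hP2 : C * (∏' k : ℕ, (1 - R ^ (k + 1))) = D8 := pair_prod hq4
        rw [← hR] at hP1
        have hD2ne : D2 ≠ 0 := hminX.2
        rw [eq_div_iff hD2ne]
        linear_combination (2 * C) * hP1 + 2 * hP2
end

section
/- For |q|<1, $\sum_{i,j\geq 0} \frac{q^{2i^2+2ij+j^2+2i+j}}{(q^2;q^2)_i (q^2;q^2)_j} = \frac{(q^8;q^8)_\infty}{(q^2;q^2)_\infty}$ (the case of Example 2 with $B=(1,1/2)^T$, after replacing $q$ by $q^2$). -/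
open Finset Filter Topology

/-- `|log(1-x)| ≤ 2x` for `0 ≤ x ≤ 1/2`. -/
lemma abs_log_one_sub_le {x : ℝ} (h0 : 0 ≤ x) (h : x ≤ 1/2) : |Real.log (1 - x)| ≤ 2 * x := by
  have hpos : (0:ℝ) < 1 - x := by linarith
  have h1 : Real.log (1 - x) ≤ 0 := Real.log_nonpos (by linarith) (by linarith)
  rw [abs_of_nonpos h1, ← Real.log_inv]
  have h2 : Real.log (1 - x)⁻¹ ≤ (1 - x)⁻¹ - 1 := by
    have := Real.log_le_sub_one_of_pos (inv_pos.mpr hpos)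
    linarith
  have h3 : (1 - x)⁻¹ ≤ 1 + 2 * x := by
    rw [inv_eq_one_div, div_le_iff₀ hpos]
    nlinarith
  linarith

lemma summable_pow_succ_s6 {r : ℝ} (h0 : 0 ≤ r) (h1 : r < 1) :
    Summable (fun k : ℕ ↦ r ^ (k + 1)) := by
  simpa [pow_succ] using (summable_geometric_of_lt_one h0 h1).mul_right r

/-- Uniform positive lower bound for partial products `∏ (1 - r^(k+1))`. -/
lemma prod_one_sub_lower {r : ℝ} (h0 : 0 ≤ r) (h1 : r < 1) :
    ∃ c : ℝ, 0 < c ∧ ∀ n : ℕ, c ≤ ∏ k ∈ Finset.range n, (1 - r ^ (k + 1)) := by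
  have hgeo : Summable (fun k : ℕ ↦ r ^ (k + 1)) := summable_pow_succ_s6 h0 h1
  have hfac : ∀ k : ℕ, 0 < 1 - r ^ (k + 1) := by
    intro k
    have : r ^ (k + 1) ≤ r := pow_le_of_le_one h0 h1.le (Nat.succ_ne_zero k)
    linarith
  have hfac1 : ∀ k : ℕ, 1 - r ^ (k + 1) ≤ 1 := by
    intro k; have := pow_nonneg h0 (k + 1); linarith
  have htend : Tendsto (fun k : ℕ ↦ r ^ (k + 1)) atTop (𝓝 0) := by
    exact (tendsto_pow_atTop_nhds_zero_of_lt_one h0 h1).comp (tendsto_add_atTop_nat 1)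
  have hlog : Summable (fun k : ℕ ↦ Real.log (1 - r ^ (k + 1))) := by
    apply Summable.of_norm_bounded_eventually_nat (g := fun k ↦ 2 * r ^ (k + 1)) (hgeo.mul_left 2)
    filter_upwards [htend.eventually (gt_mem_nhds one_half_pos)] with k hk
    exact abs_log_one_sub_le (pow_nonneg h0 _) hk.le
  have hmul : Multipliable (fun k : ℕ ↦ 1 - r ^ (k + 1)) :=
    Real.multipliable_of_summable_log hfac hlog
  set L := ∏' k : ℕ, (1 - r ^ (k + 1)) with hL
  have hLpos : 0 < L := by
    have := Real.rexp_tsum_eq_tprod hfac hlog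
    rw [hL, ← this]
    exact Real.exp_pos _
  refine ⟨L, hLpos, fun n ↦ ?_⟩
  have htd : Tendsto (fun n : ℕ ↦ ∏ k ∈ Finset.range n, (1 - r ^ (k + 1))) atTop (𝓝 L) :=
    hmul.hasProd.tendsto_prod_nat
  refine le_of_tendsto htd ?_
  filter_upwards [eventually_ge_atTop n] with m hm
  rw [← Finset.prod_range_mul_prod_Ico _ hm]
  have h2 : ∏ k ∈ Finset.Ico n m, (1 - r ^ (k + 1)) ≤ 1 :=
    Finset.prod_le_one (fun k _ ↦ (hfac k).le) (fun k _ ↦ hfac1 k)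
  have h3 : 0 ≤ ∏ k ∈ Finset.range n, (1 - r ^ (k + 1)) :=
    Finset.prod_nonneg fun k _ ↦ (hfac k).le
  nlinarith [Finset.prod_nonneg (fun k (_ : k ∈ Finset.Ico n m) ↦ (hfac k).le)]


section s2
variable {t : ℂ}

lemma one_sub_pow_ne_zero (ht : ‖t‖ < 1) (k : ℕ) : (1 : ℂ) - t ^ (k + 1) ≠ 0 := by
  intro h
  have h1 : t ^ (k + 1) = 1 := by linear_combination -h
  have : ‖t ^ (k + 1)‖ < 1 := by
    rw [norm_pow]
    calc ‖t‖ ^ (k + 1) ≤ ‖t‖ := pow_le_of_le_one (norm_nonneg t) ht.le (Nat.succ_ne_zero k)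
    _ < 1 := ht
  rw [h1] at this; simp at this

lemma prod_one_sub_ne_zero (ht : ‖t‖ < 1) (n : ℕ) :
    (∏ k ∈ Finset.range n, ((1 : ℂ) - t ^ (k + 1))) ≠ 0 :=
  Finset.prod_ne_zero_iff.mpr fun k _ ↦ one_sub_pow_ne_zero ht k

/-- Uniform positive lower bound on norms of the partial products. -/
lemma norm_prod_one_sub_lower (ht : ‖t‖ < 1) :
    ∃ c : ℝ, 0 < c ∧ ∀ n : ℕ, c ≤ ‖∏ k ∈ Finset.range n, ((1 : ℂ) - t ^ (k + 1))‖ := by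
  obtain ⟨c, hc0, hc⟩ := prod_one_sub_lower (norm_nonneg t) ht
  refine ⟨c, hc0, fun n ↦ (hc n).trans ?_⟩
  rw [norm_prod]
  refine Finset.prod_le_prod (fun k _ ↦ ?_) (fun k _ ↦ ?_)
  · have : ‖t‖ ^ (k + 1) ≤ ‖t‖ := pow_le_of_le_one (norm_nonneg t) ht.le (Nat.succ_ne_zero k)
    linarith [ht]
  · calc 1 - ‖t‖ ^ (k + 1) = ‖(1:ℂ)‖ - ‖t ^ (k + 1)‖ := by simp [norm_pow]
    _ ≤ ‖1 - t ^ (k + 1)‖ := norm_sub_norm_le _ _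

end s2

section s3

lemma summable_clog_one_add (z : ℕ → ℂ) (hz : Summable fun n ↦ ‖z n‖) :
    Summable (fun n ↦ Complex.log (1 + z n)) := by
  apply Summable.of_norm_bounded_eventually_nat (g := fun n ↦ (3/2) * ‖z n‖) (hz.mul_left _)
  have ht : Tendsto (fun n ↦ ‖z n‖) atTop (𝓝 0) := hz.tendsto_atTop_zero
  filter_upwards [ht.eventually (gt_mem_nhds one_half_pos)] with n hn
  exact Complex.norm_log_one_add_half_le_self hn.le

lemma one_add_ne_zero_of_norm_lt {w : ℂ} (hw : ‖w‖ < 1) : (1 : ℂ) + w ≠ 0 := by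
  intro h
  have : (1:ℝ) ≤ ‖w‖ := by
    have : w = -1 := by linear_combination h
    simp [this]
  linarith

lemma multipliable_one_add (z : ℕ → ℂ) (hz : Summable fun n ↦ ‖z n‖) :
    Multipliable (fun n ↦ 1 + z n) := by
  have ht : Tendsto (fun n ↦ ‖z n‖) atTop (𝓝 0) := hz.tendsto_atTop_zero
  obtain ⟨K, hK⟩ := (ht.eventually (gt_mem_nhds one_half_pos)).exists_forall_of_atTop
  have hz' : Summable fun n ↦ ‖z (n + K)‖ := (summable_nat_add_iff K).mpr hz
  have hm : Multipliable (fun n ↦ 1 + z (n + K)) :=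
    Complex.multipliable_of_summable_log (f := fun n ↦ 1 + z (n + K)) (summable_clog_one_add _ hz')
  exact Multipliable.comp_nat_add (f := fun n ↦ 1 + z n) (k := K) hm

lemma tprod_one_add_ne_zero (z : ℕ → ℂ) (hz : Summable fun n ↦ ‖z n‖)
    (h1 : ∀ n, (1 : ℂ) + z n ≠ 0) : (∏' n, (1 + z n)) ≠ 0 := by
  have h2 := Complex.cexp_tsum_eq_tprod (f := fun n ↦ 1 + z n) (fun n ↦ h1 n)
    (summable_clog_one_add z hz)
  rw [← h2]
  exact Complex.exp_ne_zero _

end s3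

noncomputable def eulerP (s : ℂ) (n : ℕ) : ℂ := ∏ k ∈ Finset.range n, (1 - s ^ (2 * (k + 1)))

noncomputable def eulerTerm (s x : ℂ) (n : ℕ) : ℂ := x ^ n * s ^ (n * (n - 1)) / eulerP s n

lemma norm_sq_lt_one {s : ℂ} (hs : ‖s‖ < 1) : ‖s ^ 2‖ < 1 := by
  rw [norm_pow]; exact pow_lt_one₀ (norm_nonneg s) hs two_ne_zero

lemma eulerP_eq (s : ℂ) (n : ℕ) :
    eulerP s n = ∏ k ∈ Finset.range n, (1 - (s ^ 2) ^ (k + 1)) := by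
  simp [eulerP, ← pow_mul]

lemma eulerP_ne_zero {s : ℂ} (hs : ‖s‖ < 1) (n : ℕ) : eulerP s n ≠ 0 := by
  rw [eulerP_eq]; exact prod_one_sub_ne_zero (norm_sq_lt_one hs) n

lemma eulerP_lower {s : ℂ} (hs : ‖s‖ < 1) :
    ∃ c : ℝ, 0 < c ∧ ∀ n : ℕ, c ≤ ‖eulerP s n‖ := by
  obtain ⟨c, hc0, hc⟩ := norm_prod_one_sub_lower (norm_sq_lt_one hs)
  exact ⟨c, hc0, fun n ↦ by rw [eulerP_eq]; exact hc n⟩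

lemma summable_euler_aux {s : ℂ} (hs : ‖s‖ < 1) (x : ℂ) :
    Summable (fun n : ℕ ↦ ‖x‖ ^ n * ‖s‖ ^ (n * (n - 1))) := by
  obtain ⟨m, hm⟩ := ((tendsto_pow_atTop_nhds_zero_of_lt_one (norm_nonneg s) hs).eventually
      (gt_mem_nhds (show (0:ℝ) < (‖x‖ + 1)⁻¹ by positivity))).exists
  have hρ0 : (0:ℝ) ≤ ‖x‖ * ‖s‖ ^ m := by positivity
  have hρ : ‖x‖ * ‖s‖ ^ m < 1 := by
    calc ‖x‖ * ‖s‖ ^ m ≤ (‖x‖ + 1) * ‖s‖ ^ m := by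
          have := pow_nonneg (norm_nonneg s) m
          nlinarith
    _ < (‖x‖ + 1) * (‖x‖ + 1)⁻¹ := by
          apply mul_lt_mul_of_pos_left hm (by positivity)
    _ = 1 := mul_inv_cancel₀ (by positivity)
  apply Summable.of_norm_bounded_eventually_nat (g := fun n ↦ (‖x‖ * ‖s‖ ^ m) ^ n)
    (summable_geometric_of_lt_one hρ0 hρ)
  filter_upwards [eventually_ge_atTop (m + 1)] with n hn
  have h1 : m * n ≤ n * (n - 1) := by
    calc m * n ≤ (n - 1) * n := Nat.mul_le_mul_right _ (by omega)
    _ = n * (n - 1) := Nat.mul_comm _ _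
  have h2 : ‖s‖ ^ (n * (n - 1)) ≤ (‖s‖ ^ m) ^ n := by
    rw [← pow_mul]
    exact pow_le_pow_of_le_one (norm_nonneg s) hs.le h1
  rw [Real.norm_eq_abs, abs_of_nonneg (by positivity)]
  calc ‖x‖ ^ n * ‖s‖ ^ (n * (n - 1)) ≤ ‖x‖ ^ n * (‖s‖ ^ m) ^ n := by
        have := pow_nonneg (norm_nonneg x) n
        nlinarith
  _ = (‖x‖ * ‖s‖ ^ m) ^ n := by rw [mul_pow]

lemma summable_eulerTerm {s : ℂ} (hs : ‖s‖ < 1) (x : ℂ) : Summable (eulerTerm s x) := by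
  obtain ⟨c, hc0, hc⟩ := eulerP_lower hs
  apply Summable.of_norm_bounded (g := fun n ↦ c⁻¹ * (‖x‖ ^ n * ‖s‖ ^ (n * (n - 1))))
    ((summable_euler_aux hs x).mul_left _)
  intro n
  rw [eulerTerm, norm_div, norm_mul, norm_pow, norm_pow]
  rw [div_eq_mul_inv, mul_comm]
  have hinv : ‖eulerP s n‖⁻¹ ≤ c⁻¹ := inv_anti₀ hc0 (hc n)
  have hnn : (0:ℝ) ≤ ‖x‖ ^ n * ‖s‖ ^ (n * (n - 1)) := by positivity
  exact mul_le_mul_of_nonneg_right hinv hnn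

lemma eulerTerm_zero (s x : ℂ) : eulerTerm s x 0 = 1 := by simp [eulerTerm, eulerP]

lemma eulerTerm_rec {s : ℂ} (hs : ‖s‖ < 1) (x : ℂ) (n : ℕ) :
    eulerTerm s x (n + 1) = eulerTerm s (x * s ^ 2) (n + 1) + x * eulerTerm s (x * s ^ 2) n := by
  have hPn := eulerP_ne_zero hs n
  have hD : (1 : ℂ) - s ^ (2 * (n + 1)) ≠ 0 := by
    have := one_sub_pow_ne_zero (norm_sq_lt_one hs) n
    rwa [← pow_mul] at this
  have hPsucc : eulerP s (n + 1) = eulerP s n * (1 - s ^ (2 * (n + 1))) :=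
    Finset.prod_range_succ _ n
  have hexp : (n + 1) * ((n + 1) - 1) = n * (n - 1) + 2 * n := by
    cases n with
    | zero => norm_num
    | succ m => simp only [Nat.succ_sub_one]; ring
  unfold eulerTerm
  rw [hPsucc, hexp]
  field_simp
  ring

lemma euler_funceq {s : ℂ} (hs : ‖s‖ < 1) (x : ℂ) :
    (∑' n, eulerTerm s x n) = (1 + x) * ∑' n, eulerTerm s (x * s ^ 2) n := by
  have h1 := summable_eulerTerm hs x
  have h2 := summable_eulerTerm hs (x * s ^ 2)
  have h3 : Summable (fun n ↦ eulerTerm s (x * s ^ 2) (n + 1)) :=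
    (summable_nat_add_iff 1).mpr h2
  have h0 : ∑' n, eulerTerm s (x * s ^ 2) n = 1 + ∑' n, eulerTerm s (x * s ^ 2) (n + 1) := by
    rw [Summable.tsum_eq_zero_add h2, eulerTerm_zero]
  calc ∑' n, eulerTerm s x n
      = 1 + ∑' n, eulerTerm s x (n + 1) := by rw [Summable.tsum_eq_zero_add h1, eulerTerm_zero]
    _ = 1 + ∑' n, (eulerTerm s (x * s ^ 2) (n + 1) + x * eulerTerm s (x * s ^ 2) n) := by
        rw [tsum_congr (fun n ↦ eulerTerm_rec hs x n)]
    _ = 1 + ((∑' n, eulerTerm s (x * s ^ 2) (n + 1)) + ∑' n, x * eulerTerm s (x * s ^ 2) n) := by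
        rw [Summable.tsum_add h3 (h2.mul_left x)]
    _ = 1 + ((∑' n, eulerTerm s (x * s ^ 2) (n + 1)) + x * ∑' n, eulerTerm s (x * s ^ 2) n) := by
        rw [tsum_mul_left]
    _ = (1 + x) * ∑' n, eulerTerm s (x * s ^ 2) n := by rw [h0]; ring

lemma euler_iter {s : ℂ} (hs : ‖s‖ < 1) (x : ℂ) (N : ℕ) :
    (∑' n, eulerTerm s x n) =
      (∏ k ∈ Finset.range N, (1 + x * s ^ (2 * k))) * ∑' n, eulerTerm s (x * s ^ (2 * N)) n := by
  induction N with
  | zero => simp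
  | succ N ih =>
    rw [ih, euler_funceq hs (x * s ^ (2 * N)), Finset.prod_range_succ]
    have harg : x * s ^ (2 * N) * s ^ 2 = x * s ^ (2 * (N + 1)) := by
      rw [mul_assoc, ← pow_add]
      ring_nf
    rw [harg]
    ring

lemma euler_tail {s : ℂ} (hs : ‖s‖ < 1) (x : ℂ) :
    Tendsto (fun N ↦ ∑' n, eulerTerm s (x * s ^ (2 * N)) n) atTop (𝓝 1) := by
  obtain ⟨c, hc0, hc⟩ := eulerP_lower hs
  set g : ℕ → ℝ := fun n ↦ c⁻¹ * (‖x‖ ^ n * ‖s‖ ^ (n * (n - 1))) with hg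
  have hgs : Summable g := (summable_euler_aux hs x).mul_left _
  set M := ∑' n, g n with hM
  have key : ∀ N : ℕ, ‖(∑' n, eulerTerm s (x * s ^ (2 * N)) n) - 1‖ ≤ (‖x‖ * M) * ‖s‖ ^ (2 * N) := by
    intro N
    set y := x * s ^ (2 * N) with hy
    have hynorm : ‖y‖ = ‖x‖ * ‖s‖ ^ (2 * N) := by rw [hy, norm_mul, norm_pow]
    have hyx : ‖y‖ ≤ ‖x‖ := by
      rw [hynorm]
      exact mul_le_of_le_one_right (norm_nonneg x) (pow_le_one₀ (norm_nonneg s) hs.le)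
    have hsum := summable_eulerTerm hs y
    have heq : (∑' n, eulerTerm s y n) - 1 = ∑' n, eulerTerm s y (n + 1) := by
      rw [Summable.tsum_eq_zero_add hsum, eulerTerm_zero]; ring
    have hbound : ∀ n, ‖eulerTerm s y (n + 1)‖ ≤ ‖y‖ * g n := by
      intro n
      rw [eulerTerm, norm_div, norm_mul, norm_pow, norm_pow]
      have h2 : ‖y‖ ^ (n + 1) ≤ ‖y‖ * ‖x‖ ^ n := by
        calc ‖y‖ ^ (n + 1) = ‖y‖ * ‖y‖ ^ n := by ring
        _ ≤ ‖y‖ * ‖x‖ ^ n := by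
            apply mul_le_mul_of_nonneg_left (pow_le_pow_left₀ (norm_nonneg y) hyx n)
              (norm_nonneg y)
      have h3 : ‖s‖ ^ ((n + 1) * ((n + 1) - 1)) ≤ ‖s‖ ^ (n * (n - 1)) := by
        apply pow_le_pow_of_le_one (norm_nonneg s) hs.le
        simp only [Nat.add_sub_cancel]
        exact Nat.mul_le_mul (Nat.le_succ n) (Nat.sub_le n 1)
      calc ‖y‖ ^ (n + 1) * ‖s‖ ^ ((n + 1) * ((n + 1) - 1)) / ‖eulerP s (n + 1)‖
          ≤ (‖y‖ * ‖x‖ ^ n) * ‖s‖ ^ (n * (n - 1)) / c :=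
            div_le_div₀ (by positivity)
              (mul_le_mul h2 h3 (by positivity) (by positivity)) hc0 (hc (n + 1))
      _ = ‖y‖ * g n := by rw [hg]; field_simp
    have hsumnorm : Summable fun n ↦ ‖eulerTerm s y (n + 1)‖ :=
      Summable.of_nonneg_of_le (fun n ↦ norm_nonneg _) hbound (hgs.mul_left ‖y‖)
    calc ‖(∑' n, eulerTerm s y n) - 1‖ = ‖∑' n, eulerTerm s y (n + 1)‖ := by rw [heq]
    _ ≤ ∑' n, ‖eulerTerm s y (n + 1)‖ := norm_tsum_le_tsum_norm hsumnorm
    _ ≤ ∑' n, ‖y‖ * g n := Summable.tsum_le_tsum hbound hsumnorm (hgs.mul_left _)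
    _ = ‖y‖ * M := by rw [tsum_mul_left]
    _ = (‖x‖ * M) * ‖s‖ ^ (2 * N) := by rw [hynorm]; ring
  have hs2 : ‖s‖ ^ 2 < 1 := by nlinarith [norm_nonneg s]
  have hto : Tendsto (fun N : ℕ ↦ (‖x‖ * M) * ‖s‖ ^ (2 * N)) atTop (𝓝 0) := by
    have h2 : Tendsto (fun N : ℕ ↦ (‖s‖ ^ 2) ^ N) atTop (𝓝 0) :=
      tendsto_pow_atTop_nhds_zero_of_lt_one (by positivity) hs2
    have := h2.const_mul (‖x‖ * M)
    simpa [pow_mul] using this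
  have hz : Tendsto (fun N ↦ (∑' n, eulerTerm s (x * s ^ (2 * N)) n) - 1) atTop (𝓝 0) :=
    squeeze_zero_norm key hto
  have := hz.add (tendsto_const_nhds (x := (1 : ℂ)) (f := atTop))
  simpa using this

theorem euler_id (s x : ℂ) (hs : ‖s‖ < 1) :
    ∑' n : ℕ, (x ^ n * s ^ (n * (n - 1)) / ∏ k ∈ Finset.range n, (1 - s ^ (2 * (k + 1)))) =
      ∏' k : ℕ, (1 + x * s ^ (2 * k)) := by
  have hs2 : ‖s‖ ^ 2 < 1 := by nlinarith [norm_nonneg s]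
  have hmul : Multipliable (fun k : ℕ ↦ 1 + x * s ^ (2 * k)) := by
    apply multipliable_one_add
    have hg : Summable (fun k : ℕ ↦ ‖x‖ * (‖s‖ ^ 2) ^ k) :=
      (summable_geometric_of_lt_one (by positivity) hs2).mul_left _
    exact hg.congr fun k ↦ by simp [norm_mul, norm_pow, pow_mul]
  have h1 : Tendsto (fun N ↦ (∏ k ∈ Finset.range N, (1 + x * s ^ (2 * k))) *
      ∑' n, eulerTerm s (x * s ^ (2 * N)) n) atTop
      (𝓝 ((∏' k, (1 + x * s ^ (2 * k))) * 1)) :=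
    (hmul.hasProd.tendsto_prod_nat).mul (euler_tail hs x)
  have h2 : (fun N ↦ (∏ k ∈ Finset.range N, (1 + x * s ^ (2 * k))) *
      ∑' n, eulerTerm s (x * s ^ (2 * N)) n) = fun _ ↦ ∑' n, eulerTerm s x n :=
    funext fun N ↦ (euler_iter hs x N).symm
  rw [h2] at h1
  have h3 : ∑' n, eulerTerm s x n = (∏' k, (1 + x * s ^ (2 * k))) * 1 :=
    tendsto_nhds_unique tendsto_const_nhds h1
  rw [mul_one] at h3
  exact h3

theorem euler_id' {s : ℂ} (x : ℂ) (hs : ‖s‖ < 1) :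
    ∑' n : ℕ, (x ^ n * s ^ (n * (n - 1)) / eulerP s n) = ∏' k : ℕ, (1 + x * s ^ (2 * k)) :=
  euler_id s x hs

lemma nat_exp1 (i j : ℕ) :
    2*i^2+2*i*j+j^2+2*i+j = (2*i^2+2*i) + ((2*(i+1))*j + j*(j-1)) := by
  cases j with
  | zero => simp
  | succ m => simp only [Nat.succ_sub_one]; ring

lemma nat_exp2 (i : ℕ) : 2*i^2+2*i = 4*i + 2*(i*(i-1)) := by
  cases i with
  | zero => simp
  | succ m => simp only [Nat.succ_sub_one]; ring

set_option maxHeartbeats 1600000 in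
/-- Example 2 with B = (1, 1/2)ᵀ (after replacing q by q²). -/
theorem example2_case4 (q : ℂ) (hq : ‖q‖ < 1) :
    ∑' p : ℕ × ℕ,
      q ^ (2 * p.1 ^ 2 + 2 * p.1 * p.2 + p.2 ^ 2 + 2 * p.1 + p.2) /
        ((∏ k ∈ Finset.range p.1, (1 - q ^ (2 * (k + 1)))) *
          ∏ k ∈ Finset.range p.2, (1 - q ^ (2 * (k + 1)))) =
    (∏' k : ℕ, (1 - q ^ (8 * (k + 1)))) / ∏' k : ℕ, (1 - q ^ (2 * (k + 1))) := by
  have hq0 : (0:ℝ) ≤ ‖q‖ := norm_nonneg q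
  have hq2 : ‖q ^ 2‖ < 1 := norm_sq_lt_one hq
  have hqsq : ‖q‖ ^ 2 < 1 := by nlinarith
  obtain ⟨c, hc0, hc⟩ := eulerP_lower hq
  -- geometric-type summability of norms
  have hnorm : ∀ a : ℕ, a ≠ 0 → Summable (fun k : ℕ ↦ ‖q‖ ^ (a * (k + 1))) := by
    intro a ha
    have h1 : ‖q‖ ^ a < 1 := pow_lt_one₀ hq0 hq ha
    exact (summable_pow_succ_s6 (by positivity) h1).congr fun k ↦ by rw [← pow_mul]
  have hlt : ∀ a : ℕ, a ≠ 0 → ‖q ^ a‖ < 1 := fun a ha ↦ by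
    rw [norm_pow]; exact pow_lt_one₀ hq0 hq ha
  -- multipliability of the four products
  have hmA : Multipliable (fun k : ℕ ↦ 1 + q ^ (2 * (k + 1))) :=
    multipliable_one_add _ ((hnorm 2 two_ne_zero).congr fun k ↦ by rw [norm_pow])
  have hmB : Multipliable (fun k : ℕ ↦ 1 + q ^ (4 * (k + 1))) :=
    multipliable_one_add _ ((hnorm 4 (by norm_num)).congr fun k ↦ by rw [norm_pow])
  have hmD : Multipliable (fun k : ℕ ↦ 1 - q ^ (2 * (k + 1))) := by
    have h := multipliable_one_add (fun k ↦ -(q ^ (2 * (k + 1))))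
      ((hnorm 2 two_ne_zero).congr fun k ↦ by rw [norm_neg, norm_pow])
    exact h.congr fun k ↦ by rw [← sub_eq_add_neg]
  have hmC : Multipliable (fun k : ℕ ↦ 1 - q ^ (4 * (k + 1))) := by
    have h := multipliable_one_add (fun k ↦ -(q ^ (4 * (k + 1))))
      ((hnorm 4 (by norm_num)).congr fun k ↦ by rw [norm_neg, norm_pow])
    exact h.congr fun k ↦ by rw [← sub_eq_add_neg]
  -- summability of the double series
  have hfs : Summable (fun p : ℕ × ℕ ↦
      q ^ (2 * p.1 ^ 2 + 2 * p.1 * p.2 + p.2 ^ 2 + 2 * p.1 + p.2) /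
        (eulerP q p.1 * eulerP q p.2)) := by
    have hg : Summable (fun p : ℕ × ℕ ↦ (c⁻¹ * (‖q‖ ^ 2) ^ p.1) * (c⁻¹ * ‖q‖ ^ p.2)) :=
      Summable.mul_of_nonneg
        ((summable_geometric_of_lt_one (by positivity) hqsq).mul_left _)
        ((summable_geometric_of_lt_one hq0 hq).mul_left _)
        (fun i ↦ by positivity) (fun j ↦ by positivity)
    apply Summable.of_norm_bounded hg
    rintro ⟨i, j⟩
    rw [norm_div, norm_mul, norm_pow]
    have hle : 2*i + j ≤ 2*i^2+2*i*j+j^2+2*i+j := by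
      calc 2*i+j ≤ 2*i^2+2*i*j+j^2 + (2*i+j) := Nat.le_add_left _ _
      _ = 2*i^2+2*i*j+j^2+2*i+j := by ring
    have h1 : ‖q‖ ^ (2*i^2+2*i*j+j^2+2*i+j) ≤ ‖q‖ ^ (2*i+j) :=
      pow_le_pow_of_le_one hq0 hq.le hle
    have h2 : c * c ≤ ‖eulerP q i‖ * ‖eulerP q j‖ :=
      mul_le_mul (hc i) (hc j) hc0.le (norm_nonneg _)
    calc ‖q‖ ^ (2*i^2+2*i*j+j^2+2*i+j) / (‖eulerP q i‖ * ‖eulerP q j‖)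
        ≤ ‖q‖ ^ (2*i+j) / (c * c) := div_le_div₀ (by positivity) h1 (by positivity) h2
    _ = (c⁻¹ * (‖q‖ ^ 2) ^ i) * (c⁻¹ * ‖q‖ ^ j) := by
        rw [pow_add, ← pow_mul]
        field_simp
    _ = (fun p : ℕ × ℕ ↦ (c⁻¹ * (‖q‖ ^ 2) ^ p.1) * (c⁻¹ * ‖q‖ ^ p.2)) (i, j) := rfl
  -- nonvanishing of finite products of (1 + q^(2(k+1)))
  have hGne : ∀ i : ℕ, (∏ k ∈ Finset.range i, (1 + q ^ (2 * (k + 1)))) ≠ 0 := fun i ↦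
    Finset.prod_ne_zero_iff.mpr fun k _ ↦
      one_add_ne_zero_of_norm_lt (hlt (2 * (k + 1)) (by positivity))
  -- term rewriting
  have hterm : ∀ i j : ℕ, q ^ (2*i^2+2*i*j+j^2+2*i+j) / (eulerP q i * eulerP q j)
      = (q ^ (2*i^2+2*i) / eulerP q i) *
        ((q ^ (2*(i+1))) ^ j * q ^ (j*(j-1)) / eulerP q j) := by
    intro i j
    rw [div_mul_div_comm, nat_exp1 i j]
    congr 1
    rw [pow_add, pow_add, pow_mul]
    ring
  -- inner sums via Euler's identity
  have hinner : ∀ i : ℕ, ∑' j : ℕ, ((q ^ (2*(i+1))) ^ j * q ^ (j*(j-1)) / eulerP q j)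
      = ∏' k : ℕ, (1 + q ^ (2*(i+1)) * q ^ (2*k)) := fun i ↦ euler_id' (q ^ (2*(i+1))) hq
  -- shifted products
  have hshift : ∀ i : ℕ, Multipliable (fun k : ℕ ↦ 1 + q ^ (2 * (k + i + 1))) := by
    intro i
    apply multipliable_one_add
    have hss : Summable (fun k : ℕ ↦ ‖q‖ ^ (2*(i+1)) * (‖q‖ ^ 2) ^ k) :=
      (summable_geometric_of_lt_one (by positivity) hqsq).mul_left _
    exact hss.congr fun k ↦ by
      rw [norm_pow, ← pow_mul, ← pow_add]; congr 1; ring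
  have hsplit : ∀ i : ℕ, (∏' k : ℕ, (1 + q ^ (2*(i+1)) * q ^ (2*k)))
      = (∏' k : ℕ, (1 + q ^ (2 * (k + 1)))) / ∏ k ∈ Finset.range i, (1 + q ^ (2 * (k + 1))) := by
    intro i
    have h0 : (fun k : ℕ ↦ 1 + q ^ (2*(i+1)) * q ^ (2*k))
        = fun k : ℕ ↦ 1 + q ^ (2 * (k + i + 1)) := funext fun k ↦ by
      rw [← pow_add]
      have : 2*(i+1) + 2*k = 2*(k+i+1) := by ring
      rw [this]
    rw [h0]
    have h2 : HasProd (fun k : ℕ ↦ 1 + q ^ (2 * (k + 1)))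
        ((∏ k ∈ Finset.range i, (1 + q ^ (2 * (k + 1)))) *
          ∏' k : ℕ, (1 + q ^ (2 * (k + i + 1)))) :=
      HasProd.prod_range_mul (f := fun k ↦ 1 + q ^ (2 * (k + 1))) (k := i) (hshift i).hasProd
    rw [eq_div_iff (hGne i), h2.tprod_eq]
    exact mul_comm _ _
  have hPG : ∀ i : ℕ, eulerP q i * ∏ k ∈ Finset.range i, (1 + q ^ (2 * (k + 1)))
      = eulerP (q ^ 2) i := by
    intro i
    rw [eulerP, eulerP, ← Finset.prod_mul_distrib]
    refine Finset.prod_congr rfl fun k _ ↦ ?_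
    have h4 : (q ^ 2) ^ (2 * (k + 1)) = q ^ (2*(k+1)) * q ^ (2*(k+1)) := by
      rw [← pow_mul, ← pow_add]; congr 1; ring
    rw [h4]; ring
  -- second Euler application
  have happ2 : ∑' i : ℕ, q ^ (2*i^2+2*i) / eulerP (q ^ 2) i
      = ∏' k : ℕ, (1 + q ^ (4 * (k + 1))) := by
    calc ∑' i : ℕ, q ^ (2*i^2+2*i) / eulerP (q ^ 2) i
        = ∑' i : ℕ, ((q ^ 4) ^ i * (q ^ 2) ^ (i*(i-1)) / eulerP (q ^ 2) i) := by
          refine tsum_congr fun i ↦ ?_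
          congr 1
          rw [← pow_mul, ← pow_mul, ← pow_add, nat_exp2 i]
    _ = ∏' k : ℕ, (1 + q ^ 4 * (q ^ 2) ^ (2 * k)) := euler_id' (q ^ 4) hq2
    _ = ∏' k : ℕ, (1 + q ^ (4 * (k + 1))) := by
          refine tprod_congr fun k ↦ ?_
          congr 1
          rw [← pow_mul, ← pow_add]; congr 1; ring
  -- final product identities
  have hAD : (∏' k : ℕ, (1 + q ^ (2 * (k + 1)))) * (∏' k : ℕ, (1 - q ^ (2 * (k + 1))))
      = ∏' k : ℕ, (1 - q ^ (4 * (k + 1))) := by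
    rw [← Multipliable.tprod_mul hmA hmD]
    refine tprod_congr fun k ↦ ?_
    have h4 : q ^ (4*(k+1)) = q ^ (2*(k+1)) * q ^ (2*(k+1)) := by
      rw [← pow_add]; congr 1; ring
    rw [h4]; ring
  have hCB : (∏' k : ℕ, (1 - q ^ (4 * (k + 1)))) * (∏' k : ℕ, (1 + q ^ (4 * (k + 1))))
      = ∏' k : ℕ, (1 - q ^ (8 * (k + 1))) := by
    rw [← Multipliable.tprod_mul hmC hmB]
    refine tprod_congr fun k ↦ ?_
    have h4 : q ^ (8*(k+1)) = q ^ (4*(k+1)) * q ^ (4*(k+1)) := by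
      rw [← pow_add]; congr 1; ring
    rw [h4]; ring
  have hD0 : (∏' k : ℕ, (1 - q ^ (2 * (k + 1)))) ≠ 0 := by
    have hne : ∀ k : ℕ, (1 : ℂ) + -(q ^ (2 * (k + 1))) ≠ 0 := fun k ↦ by
      rw [← sub_eq_add_neg]
      have := one_sub_pow_ne_zero hq2 k
      rwa [← pow_mul] at this
    have h := tprod_one_add_ne_zero (fun k ↦ -(q ^ (2 * (k + 1))))
      ((hnorm 2 two_ne_zero).congr fun k ↦ by rw [norm_neg, norm_pow]) hne
    have heq : (∏' k : ℕ, (1 - q ^ (2 * (k + 1)))) = ∏' k : ℕ, (1 + -(q ^ (2 * (k + 1)))) :=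
      tprod_congr fun k ↦ sub_eq_add_neg _ _
    rw [heq]; exact h
  -- assemble
  show ∑' p : ℕ × ℕ,
      q ^ (2 * p.1 ^ 2 + 2 * p.1 * p.2 + p.2 ^ 2 + 2 * p.1 + p.2) /
        (eulerP q p.1 * eulerP q p.2) = _
  calc ∑' p : ℕ × ℕ, q ^ (2 * p.1 ^ 2 + 2 * p.1 * p.2 + p.2 ^ 2 + 2 * p.1 + p.2) /
        (eulerP q p.1 * eulerP q p.2)
      = ∑' i : ℕ, ∑' j : ℕ, q ^ (2*i^2+2*i*j+j^2+2*i+j) / (eulerP q i * eulerP q j) :=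
        Summable.tsum_prod' hfs fun i ↦ hfs.prod_factor i
    _ = ∑' i : ℕ, (∏' k : ℕ, (1 + q ^ (2 * (k + 1)))) * (q ^ (2*i^2+2*i) / eulerP (q ^ 2) i) := by
        refine tsum_congr fun i ↦ ?_
        calc ∑' j : ℕ, q ^ (2*i^2+2*i*j+j^2+2*i+j) / (eulerP q i * eulerP q j)
            = ∑' j : ℕ, (q ^ (2*i^2+2*i) / eulerP q i) *
                ((q ^ (2*(i+1))) ^ j * q ^ (j*(j-1)) / eulerP q j) :=
              tsum_congr fun j ↦ hterm i j
          _ = (q ^ (2*i^2+2*i) / eulerP q i) *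
                ∑' j : ℕ, ((q ^ (2*(i+1))) ^ j * q ^ (j*(j-1)) / eulerP q j) := tsum_mul_left
          _ = (q ^ (2*i^2+2*i) / eulerP q i) *
                ((∏' k : ℕ, (1 + q ^ (2 * (k + 1)))) /
                  ∏ k ∈ Finset.range i, (1 + q ^ (2 * (k + 1)))) := by
              rw [hinner i, hsplit i]
          _ = (∏' k : ℕ, (1 + q ^ (2 * (k + 1)))) * (q ^ (2*i^2+2*i) / eulerP (q ^ 2) i) := by
              rw [← hPG i]
              field_simp
    _ = (∏' k : ℕ, (1 + q ^ (2 * (k + 1)))) * ∑' i : ℕ, q ^ (2*i^2+2*i) / eulerP (q ^ 2) i :=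
        tsum_mul_left
    _ = (∏' k : ℕ, (1 + q ^ (2 * (k + 1)))) * ∏' k : ℕ, (1 + q ^ (4 * (k + 1))) := by
        rw [happ2]
    _ = (∏' k : ℕ, (1 - q ^ (8 * (k + 1)))) / ∏' k : ℕ, (1 - q ^ (2 * (k + 1))) := by
        rw [eq_div_iff hD0]
        calc (∏' k : ℕ, (1 + q ^ (2 * (k + 1)))) * (∏' k : ℕ, (1 + q ^ (4 * (k + 1)))) *
              (∏' k : ℕ, (1 - q ^ (2 * (k + 1))))
            = ((∏' k : ℕ, (1 + q ^ (2 * (k + 1)))) * (∏' k : ℕ, (1 - q ^ (2 * (k + 1))))) *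
              (∏' k : ℕ, (1 + q ^ (4 * (k + 1)))) := by ring
          _ = (∏' k : ℕ, (1 - q ^ (4 * (k + 1)))) * (∏' k : ℕ, (1 + q ^ (4 * (k + 1)))) := by
              rw [hAD]
          _ = ∏' k : ℕ, (1 - q ^ (8 * (k + 1))) := hCB
end

section
/- For |q|<1, $\sum_{i,j\geq 0} \frac{q^{2i^2+2ij+j^2+j}}{(q^2;q^2)_i (q^2;q^2)_j} = \frac{(q^4;q^4)_\infty^3}{(q^2;q^2)_\infty^2 (q^8;q^8)_\infty}$ (Example 2 with $B=(0,1/2)^T$, after replacing $q$ by $q^2$). -/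
open Finset Filter Topology Complex
set_option maxHeartbeats 1000000

namespace Ex2

lemma one_sub_sum_le_prod (s : Finset ℕ) (a : ℕ → ℝ) (h0 : ∀ k, 0 ≤ a k) (h1 : ∀ k, a k ≤ 1) :
    1 - ∑ k ∈ s, a k ≤ ∏ k ∈ s, (1 - a k) := by
  classical
  induction s using Finset.induction_on with
  | empty => simp
  | insert _ _ hx ih =>
    rename_i x s
    rw [Finset.sum_insert hx, Finset.prod_insert hx]
    have hs0 : 0 ≤ ∑ k ∈ s, a k := Finset.sum_nonneg fun k _ => h0 k
    nlinarith [h0 x, h1 x, ih]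

lemma prod_lower {r : ℝ} (h0 : 0 ≤ r) (h1 : r < 1) :
    ∃ c > 0, ∀ m, c ≤ ∏ k ∈ Finset.range m, (1 - r ^ (k + 1)) := by
  obtain ⟨N, hN⟩ := exists_pow_lt_of_lt_one (show (0:ℝ) < (1 - r)/2 by linarith) h1
  have hfacpos : ∀ k : ℕ, 0 < 1 - r ^ (k + 1) := fun k => by
    have : r ^ (k+1) < 1 := pow_lt_one₀ h0 h1 (Nat.succ_ne_zero k)
    linarith
  have hposN : 0 < ∏ k ∈ Finset.range N, (1 - r ^ (k + 1)) :=
    Finset.prod_pos fun k _ => hfacpos k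
  refine ⟨(∏ k ∈ Finset.range N, (1 - r ^ (k + 1))) / 2,
    by positivity, fun m => ?_⟩
  rcases le_total m N with hm | hm
  · have h2 : (∏ k ∈ Finset.range N, (1 - r ^ (k + 1))) ≤ ∏ k ∈ Finset.range m, (1 - r ^ (k + 1)) := by
      rw [← Finset.prod_range_mul_prod_Ico _ hm]
      have hle1 : (∏ k ∈ Finset.Ico m N, (1 - r ^ (k + 1))) ≤ 1 :=
        Finset.prod_le_one (fun k _ => (hfacpos k).le) (fun k _ => by
          have : 0 ≤ r ^ (k+1) := pow_nonneg h0 _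
          linarith)
      nlinarith [Finset.prod_pos (fun k (_ : k ∈ Finset.range m) => hfacpos k)]
    nlinarith [Finset.prod_pos (fun k (_ : k ∈ Finset.range N) => hfacpos k)]
  · rw [← Finset.prod_range_mul_prod_Ico _ hm]
    have htail : (∑ k ∈ Finset.Ico N m, r ^ (k + 1)) ≤ 1/2 := by
      have e1 : (∑ k ∈ Finset.Ico N m, r ^ (k + 1)) = ∑ j ∈ Finset.range (m - N), r ^ (N + j + 1) := by
        rw [Finset.sum_Ico_eq_sum_range]
      rw [e1]
      have e2 : ∀ j : ℕ, r ^ (N + j + 1) = (r ^ N * r) * r ^ j := fun j => by ring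
      simp only [e2]
      rw [← Finset.mul_sum]
      have hgs : (∑ j ∈ Finset.range (m - N), r ^ j) ≤ (1 - r)⁻¹ := by
        refine le_trans (Summable.sum_le_tsum _ (fun j _ => pow_nonneg h0 j)
          (summable_geometric_of_lt_one h0 h1)) ?_
        rw [tsum_geometric_of_lt_one h0 h1]
      have hrN : r ^ N * r ≤ (1 - r)/2 := by
        nlinarith [pow_nonneg h0 N]
      have hinv : (0:ℝ) < (1 - r)⁻¹ := inv_pos.mpr (by linarith)
      calc r ^ N * r * ∑ j ∈ Finset.range (m - N), r ^ j
          ≤ ((1 - r)/2) * (1 - r)⁻¹ := by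
            apply mul_le_mul hrN hgs (Finset.sum_nonneg fun j _ => pow_nonneg h0 j) (by linarith)
        _ = 1/2 * ((1 - r) * (1 - r)⁻¹) := by ring
        _ = 1/2 := by rw [mul_inv_cancel₀ (by linarith : (1:ℝ) - r ≠ 0), mul_one]
    have h3 : (1:ℝ)/2 ≤ ∏ k ∈ Finset.Ico N m, (1 - r ^ (k + 1)) := by
      refine le_trans ?_ (one_sub_sum_le_prod _ _ (fun k => pow_nonneg h0 _)
        (fun k => by have := pow_nonneg h0 (k+1); have := (hfacpos k); linarith))
      linarith
    have h4 : 0 < ∏ k ∈ Finset.range N, (1 - r ^ (k + 1)) :=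
      Finset.prod_pos fun k _ => hfacpos k
    calc (∏ k ∈ Finset.range N, (1 - r ^ (k + 1))) / 2
        = (∏ k ∈ Finset.range N, (1 - r ^ (k + 1))) * (1/2) := by ring
      _ ≤ (∏ k ∈ Finset.range N, (1 - r ^ (k + 1))) * ∏ k ∈ Finset.Ico N m, (1 - r ^ (k + 1)) := by
          exact mul_le_mul_of_nonneg_left h3 h4.le

lemma norm_prod_lower {Q : ℂ} (hQ : ‖Q‖ < 1) :
    ∃ c > 0, ∀ m, c ≤ ‖∏ k ∈ Finset.range m, (1 - Q ^ (k + 1))‖ := by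
  obtain ⟨c, hc, hcP⟩ := prod_lower (norm_nonneg Q) hQ
  refine ⟨c, hc, fun m => le_trans (hcP m) ?_⟩
  rw [norm_prod]
  apply Finset.prod_le_prod
  · intro k _
    have : ‖Q‖ ^ (k+1) < 1 := pow_lt_one₀ (norm_nonneg Q) hQ (Nat.succ_ne_zero k)
    linarith
  · intro k _
    calc 1 - ‖Q‖ ^ (k+1) = ‖(1:ℂ)‖ - ‖Q ^ (k+1)‖ := by rw [norm_one, norm_pow]
      _ ≤ ‖1 - Q ^ (k+1)‖ := norm_sub_norm_le _ _

lemma one_add_ne {z : ℂ} (h : ‖z‖ < 1) : 1 + z ≠ 0 := by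
  intro hz
  have : z = -1 := by linear_combination hz
  rw [this] at h
  simp at h

lemma hasProd_one_add {f : ℕ → ℂ} {r : ℝ} (hr : r < 1) (hb : ∀ k, ‖f k‖ ≤ r)
    (hs : Summable fun k => ‖f k‖) :
    Multipliable (fun k => 1 + f k) ∧ (∏' k, (1 + f k)) ≠ 0 := by
  have hr0 : 0 ≤ r := le_trans (norm_nonneg (f 0)) (hb 0)
  have hfk1 : ∀ k, ‖f k‖ < 1 := fun k => lt_of_le_of_lt (hb k) hr
  have hne : ∀ k, 1 + f k ≠ 0 := fun k => one_add_ne (hfk1 k)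
  have hlog : Summable fun k => Complex.log (1 + f k) := by
    apply Summable.of_norm_bounded (g := fun k => (r * (1 - r)⁻¹ / 2 + 1) * ‖f k‖) (hs.mul_left _)
    intro k
    refine le_trans (Complex.norm_log_one_add_le (hfk1 k)) ?_
    have h1 : (1 - ‖f k‖)⁻¹ ≤ (1 - r)⁻¹ := by
      apply inv_anti₀ (by linarith) (by linarith [hb k])
    have h2 : ‖f k‖ ^ 2 * (1 - ‖f k‖)⁻¹ / 2 ≤ r * (1 - r)⁻¹ / 2 * ‖f k‖ := by
      have : ‖f k‖ ^ 2 * (1 - ‖f k‖)⁻¹ ≤ (r * ‖f k‖) * (1 - r)⁻¹ := by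
        apply mul_le_mul _ h1 (inv_nonneg.mpr (by linarith [hfk1 k])) (by positivity)
        nlinarith [norm_nonneg (f k), hb k]
      linarith
    linarith
  have hp : HasProd (fun k => 1 + f k) (Complex.exp (∑' k, Complex.log (1 + f k))) := by
    have h2 := hlog.hasSum.cexp
    have h3 : (Complex.exp ∘ fun k => Complex.log (1 + f k)) = fun k => 1 + f k :=
      funext fun k => Complex.exp_log (hne k)
    rwa [h3] at h2
  refine ⟨hp.multipliable, ?_⟩
  rw [hp.tprod_eq]
  exact Complex.exp_ne_zero _

lemma euler {Q : ℂ} (hQ : ‖Q‖ < 1) {w : ℂ} (hw : ‖w‖ < 1) :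
    ∑' m : ℕ, Q ^ (∑ k ∈ Finset.range m, k) * w ^ m / (∏ k ∈ Finset.range m, (1 - Q ^ (k + 1)))
      = ∏' k : ℕ, (1 + w * Q ^ k) := by
  obtain ⟨c, hc, hcP⟩ := norm_prod_lower hQ
  set P : ℕ → ℂ := fun m => ∏ k ∈ Finset.range m, (1 - Q ^ (k + 1)) with hP
  set f : ℂ → ℕ → ℂ := fun z m => Q ^ (∑ k ∈ Finset.range m, k) * z ^ m / P m with hf
  have hPne : ∀ m, P m ≠ 0 := by
    intro m h
    have := hcP m
    rw [show (∏ k ∈ Finset.range m, (1 - Q ^ (k + 1))) = P m from rfl, h] at this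
    simp at this; linarith
  have hQfac : ∀ m : ℕ, (1 - Q ^ (m + 1)) ≠ 0 := by
    intro m h
    have h1 : Q ^ (m+1) = 1 := by linear_combination -h
    have := congrArg norm h1
    rw [norm_pow, norm_one] at this
    have : ‖Q‖ ^ (m+1) < 1 := pow_lt_one₀ (norm_nonneg Q) hQ (Nat.succ_ne_zero m)
    linarith [congrArg norm h1, norm_pow Q (m+1)]
  have hbound : ∀ z : ℂ, ∀ m, ‖f z m‖ ≤ ‖z‖ ^ m / c := by
    intro z m
    rw [hf]
    simp only [norm_div, norm_mul, norm_pow]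
    apply div_le_div₀ (by positivity) ?_ hc (hcP m)
    have h1 : ‖Q‖ ^ (∑ k ∈ Finset.range m, k) ≤ 1 :=
      pow_le_one₀ (norm_nonneg Q) hQ.le
    nlinarith [pow_nonneg (norm_nonneg z) m, pow_nonneg (norm_nonneg Q) (∑ k ∈ Finset.range m, k)]
  have hsumnorm : ∀ z : ℂ, ‖z‖ < 1 → Summable (fun m => ‖f z m‖) := by
    intro z hz
    apply Summable.of_nonneg_of_le (fun m => norm_nonneg _) (hbound z)
    exact (summable_geometric_of_lt_one (norm_nonneg z) hz).div_const c
  have hsum : ∀ z : ℂ, ‖z‖ < 1 → Summable (f z) := fun z hz => (hsumnorm z hz).of_norm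
  have hf0 : ∀ z : ℂ, f z 0 = 1 := by
    intro z; rw [hf]; simp [hP]
  have key : ∀ z : ℂ, ‖z‖ < 1 → (∑' m, f z m) = (1 + z) * ∑' m, f (Q * z) m := by
    intro z hz
    have hQz : ‖Q * z‖ < 1 := by
      rw [norm_mul]
      nlinarith [norm_nonneg Q, norm_nonneg z]
    have h1 : ∀ m, f z (m + 1) - f (Q * z) (m + 1) = z * f (Q * z) m := by
      intro m
      have hTP : P (m + 1) = P m * (1 - Q ^ (m + 1)) := by
        rw [hP]; simp [Finset.prod_range_succ]
      have hT : (∑ k ∈ Finset.range (m + 1), k) = (∑ k ∈ Finset.range m, k) + m := by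
        simp [Finset.sum_range_succ]
      rw [hf]
      simp only
      rw [hT, hTP]
      field_simp [hPne m, hQfac m]
      ring
    have s1 := hsum z hz
    have s2 := hsum (Q * z) hQz
    have s3 : Summable (fun m => f z m - f (Q * z) m) := s1.sub s2
    have e1 : (∑' m, f z m) - (∑' m, f (Q * z) m) = ∑' m, (f z m - f (Q * z) m) :=
      (Summable.tsum_sub s1 s2).symm
    have e2 : (∑' m, (f z m - f (Q * z) m))
        = (f z 0 - f (Q * z) 0) + ∑' m, (f z (m + 1) - f (Q * z) (m + 1)) :=
      Summable.tsum_eq_zero_add s3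
    have e3 : (∑' m, (f z (m + 1) - f (Q * z) (m + 1))) = z * ∑' m, f (Q * z) m := by
      rw [← tsum_mul_left]
      exact tsum_congr h1
    rw [e3, hf0, hf0] at e2
    rw [e2] at e1
    linear_combination e1
  have iter : ∀ N : ℕ, (∑' m, f w m)
      = (∏ k ∈ Finset.range N, (1 + w * Q ^ k)) * ∑' m, f (Q ^ N * w) m := by
    intro N
    induction N with
    | zero => simp
    | succ n ih =>
      have hz : ‖Q ^ n * w‖ < 1 := by
        rw [norm_mul, norm_pow]
        calc ‖Q‖ ^ n * ‖w‖ ≤ 1 * ‖w‖ := by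
              apply mul_le_mul_of_nonneg_right (pow_le_one₀ (norm_nonneg Q) hQ.le) (norm_nonneg w)
          _ < 1 := by rwa [one_mul]
      rw [ih, key _ hz, Finset.prod_range_succ,
        show Q * (Q ^ n * w) = Q ^ (n + 1) * w by ring]
      ring_nf
  obtain ⟨hmult, -⟩ := hasProd_one_add (f := fun k => w * Q ^ k) (r := ‖w‖) hw
    (fun k => by
      rw [norm_mul, norm_pow]
      nlinarith [pow_le_one₀ (norm_nonneg Q) hQ.le (n := k), norm_nonneg w,
        pow_nonneg (norm_nonneg Q) k])
    (by
      have : Summable (fun k : ℕ => ‖w‖ * ‖Q‖ ^ k) :=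
        (summable_geometric_of_lt_one (norm_nonneg Q) hQ).mul_left _
      refine this.congr fun k => ?_
      rw [norm_mul, norm_pow])
  have t1 : Tendsto (fun N => ∏ k ∈ Finset.range N, (1 + w * Q ^ k)) atTop
      (𝓝 (∏' k : ℕ, (1 + w * Q ^ k))) := Multipliable.tendsto_prod_tprod_nat hmult
  have t2 : Tendsto (fun N => ∑' m, f (Q ^ N * w) m) atTop (𝓝 1) := by
    rw [tendsto_iff_norm_sub_tendsto_zero]
    have hb : ∀ N : ℕ, ‖(∑' m, f (Q ^ N * w) m) - 1‖ ≤ ‖Q‖ ^ N * (‖w‖ * ((1 - ‖w‖)⁻¹ / c)) := by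
      intro N
      set z : ℂ := Q ^ N * w with hzdef
      have hzw : ‖z‖ ≤ ‖Q‖ ^ N * ‖w‖ := by rw [hzdef, norm_mul, norm_pow]
      have hzw2 : ‖z‖ ≤ ‖w‖ := by
        refine le_trans hzw ?_
        nlinarith [pow_le_one₀ (norm_nonneg Q) hQ.le (n := N), norm_nonneg w,
          pow_nonneg (norm_nonneg Q) N]
      have hz1 : ‖z‖ < 1 := lt_of_le_of_lt hzw2 hw
      have e0 : (∑' m, f z m) - 1 = ∑' m, f z (m + 1) := by
        rw [Summable.tsum_eq_zero_add (hsum z hz1), hf0]; ring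
      rw [e0]
      have hn1 : Summable (fun m => ‖f z (m + 1)‖) :=
        ((summable_nat_add_iff 1).mpr (hsumnorm z hz1))
      refine le_trans (norm_tsum_le_tsum_norm hn1) ?_
      have hb2 : ∀ m : ℕ, ‖f z (m + 1)‖ ≤ (‖z‖ / c) * ‖z‖ ^ m := by
        intro m
        refine le_trans (hbound z (m + 1)) (le_of_eq ?_)
        rw [pow_succ]
        ring
      have hsg : Summable (fun m : ℕ => (‖z‖ / c) * ‖z‖ ^ m) :=
        (summable_geometric_of_lt_one (norm_nonneg z) hz1).mul_left _
      refine le_trans (Summable.tsum_le_tsum hb2 hn1 hsg) ?_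
      rw [tsum_mul_left, tsum_geometric_of_lt_one (norm_nonneg z) hz1]
      have h5 : (1 - ‖z‖)⁻¹ ≤ (1 - ‖w‖)⁻¹ :=
        inv_anti₀ (by linarith) (by linarith)
      calc ‖z‖ / c * (1 - ‖z‖)⁻¹ ≤ (‖Q‖ ^ N * ‖w‖) / c * (1 - ‖w‖)⁻¹ := by
            apply mul_le_mul ?_ h5 (inv_nonneg.mpr (by linarith)) (by positivity)
            gcongr
        _ = ‖Q‖ ^ N * (‖w‖ * ((1 - ‖w‖)⁻¹ / c)) := by ring
    have hg0 : Tendsto (fun N : ℕ => ‖Q‖ ^ N * (‖w‖ * ((1 - ‖w‖)⁻¹ / c))) atTop (𝓝 0) := by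
      rw [show (0:ℝ) = 0 * (‖w‖ * ((1 - ‖w‖)⁻¹ / c)) by ring]
      exact (tendsto_pow_atTop_nhds_zero_of_lt_one (norm_nonneg Q) hQ).mul_const _
    exact squeeze_zero (fun N => norm_nonneg _) hb hg0
  have t3 := t1.mul t2
  rw [mul_one] at t3
  have t4 : Tendsto (fun _ : ℕ => ∑' m, f w m) atTop (𝓝 (∏' k : ℕ, (1 + w * Q ^ k))) := by
    refine t3.congr fun N => ?_
    exact (iter N).symm
  exact tendsto_nhds_unique (tendsto_const_nhds (x := ∑' m, f w m) (f := atTop (α := ℕ))) t4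

lemma aux_plus {q : ℂ} (hq : ‖q‖ < 1) (a b : ℕ) (ha : a ≠ 0) (hb : b ≠ 0) :
    Multipliable (fun k : ℕ => 1 + q ^ (a * k + b)) ∧ (∏' k : ℕ, (1 + q ^ (a * k + b))) ≠ 0 := by
  have h0 := norm_nonneg q
  apply hasProd_one_add (r := ‖q‖ ^ b) (pow_lt_one₀ h0 hq hb)
  · intro k
    rw [norm_pow]
    exact pow_le_pow_of_le_one h0 hq.le (by omega)
  · refine Summable.of_nonneg_of_le (fun k => norm_nonneg _) (fun k => le_of_eq ?_)
      ((summable_geometric_of_lt_one (pow_nonneg h0 a) (pow_lt_one₀ h0 hq ha)).mul_right (‖q‖ ^ b))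
    rw [norm_pow, pow_add, pow_mul]

lemma aux_minus {q : ℂ} (hq : ‖q‖ < 1) (a b : ℕ) (ha : a ≠ 0) (hb : b ≠ 0) :
    Multipliable (fun k : ℕ => 1 - q ^ (a * k + b)) ∧ (∏' k : ℕ, (1 - q ^ (a * k + b))) ≠ 0 := by
  have h0 := norm_nonneg q
  have h := hasProd_one_add (f := fun k : ℕ => -(q ^ (a * k + b))) (r := ‖q‖ ^ b)
    (pow_lt_one₀ h0 hq hb)
    (fun k => by rw [norm_neg, norm_pow]; exact pow_le_pow_of_le_one h0 hq.le (by omega))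
    (by
      refine Summable.of_nonneg_of_le (fun k => norm_nonneg _) (fun k => le_of_eq ?_)
        ((summable_geometric_of_lt_one (pow_nonneg h0 a) (pow_lt_one₀ h0 hq ha)).mul_right (‖q‖ ^ b))
      rw [norm_neg, norm_pow, pow_add, pow_mul])
  constructor
  · exact h.1.congr fun k => by ring
  · have : (∏' k : ℕ, (1 - q ^ (a * k + b))) = ∏' k : ℕ, (1 + -(q ^ (a * k + b))) :=
      tprod_congr fun k => by ring
    rw [this]
    exact h.2

end Ex2

open Ex2 in
/-- Example 2 with B = (0, 1/2)ᵀ (after replacing q by q²). -/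
theorem example2_case3 (q : ℂ) (hq : ‖q‖ < 1) :
    ∑' p : ℕ × ℕ,
      q ^ (2 * p.1 ^ 2 + 2 * p.1 * p.2 + p.2 ^ 2 + p.2) /
        ((∏ k ∈ Finset.range p.1, (1 - q ^ (2 * (k + 1)))) *
          ∏ k ∈ Finset.range p.2, (1 - q ^ (2 * (k + 1)))) =
    (∏' k : ℕ, (1 - q ^ (4 * (k + 1)))) ^ 3 /
      ((∏' k : ℕ, (1 - q ^ (2 * (k + 1)))) ^ 2 * ∏' k : ℕ, (1 - q ^ (8 * (k + 1)))) := by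
  have h0 := norm_nonneg q
  have hq2 : ‖q ^ 2‖ < 1 := by rw [norm_pow]; exact pow_lt_one₀ h0 hq two_ne_zero
  have hq4 : ‖q ^ 4‖ < 1 := by rw [norm_pow]; exact pow_lt_one₀ h0 hq (by norm_num)
  obtain ⟨c, hc, hcP⟩ := norm_prod_lower hq2
  have hP2 : ∀ n : ℕ, (∏ k ∈ Finset.range n, (1 - q ^ (2 * (k + 1))))
      = ∏ k ∈ Finset.range n, (1 - (q ^ 2) ^ (k + 1)) :=
    fun n => Finset.prod_congr rfl fun k _ => by rw [pow_mul]
  have hcP2 : ∀ n, c ≤ ‖∏ k ∈ Finset.range n, (1 - q ^ (2 * (k + 1)))‖ := fun n => by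
    rw [hP2]; exact hcP n
  set F : ℕ × ℕ → ℂ := fun p => q ^ (2 * p.1 ^ 2 + 2 * p.1 * p.2 + p.2 ^ 2 + p.2) /
      ((∏ k ∈ Finset.range p.1, (1 - q ^ (2 * (k + 1)))) *
        ∏ k ∈ Finset.range p.2, (1 - q ^ (2 * (k + 1)))) with hF
  have hFle : ∀ p : ℕ × ℕ, ‖F p‖ ≤ (‖q‖ ^ p.1 / c) * (‖q‖ ^ p.2 / c) := by
    rintro ⟨i, j⟩
    rw [hF]
    simp only [norm_div, norm_mul, norm_pow]
    rw [div_mul_div_comm]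
    apply div_le_div₀ (by positivity) ?_ (by positivity) ?_
    · rw [← pow_add]
      apply pow_le_pow_of_le_one h0 hq.le
      nlinarith [Nat.le_self_pow two_ne_zero i]
    · exact mul_le_mul (hcP2 i) (hcP2 j) hc.le (norm_nonneg _)
  have hFs : Summable F := by
    apply Summable.of_norm_bounded ?_ hFle
    exact Summable.mul_of_nonneg ((summable_geometric_of_lt_one h0 hq).div_const c)
      ((summable_geometric_of_lt_one h0 hq).div_const c)
      (fun i => by positivity) (fun j => by positivity)
  have gauss : ∀ n : ℕ, 2 * (∑ k ∈ Finset.range n, k) = n * (n - 1) := fun n => by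
    rw [mul_comm]; exact Finset.sum_range_id_mul_two n
  -- the inner sum over j, via Euler with base q^2
  have inner : ∀ i : ℕ, (∑' j : ℕ, F (i, j)) =
      (q ^ (2 * i ^ 2) / ∏ k ∈ Finset.range i, (1 - q ^ (2 * (k + 1)))) *
        ∏' k : ℕ, (1 + q ^ (2 * i + 2) * (q ^ 2) ^ k) := by
    intro i
    have hwi : ‖q ^ (2 * i + 2)‖ < 1 := by
      rw [norm_pow]; exact pow_lt_one₀ h0 hq (by omega)
    rw [← euler hq2 hwi, ← tsum_mul_left]
    apply tsum_congr
    intro j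
    rw [hF]
    simp only
    rw [hP2 j]
    have hexp : 2 * i ^ 2 + 2 * i * j + j ^ 2 + j
        = (2 * i ^ 2) + (2 * (∑ k ∈ Finset.range j, k) + (2 * i + 2) * j) := by
      have h2 := gauss j
      rcases j with _ | n
      · simp
      · have h3 : 2 * (∑ k ∈ Finset.range (n + 1), k) = (n + 1) * n := by
          rw [h2]; simp
        nlinarith [h3]
    rw [hexp, pow_add, pow_add, pow_mul, pow_mul, mul_div_mul_comm, pow_mul]
  obtain ⟨hgM, hgne⟩ := aux_plus hq 2 2 two_ne_zero two_ne_zero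
  obtain ⟨hhM, hhne⟩ := aux_plus hq 4 2 (by norm_num) two_ne_zero
  obtain ⟨hAM, hAne⟩ := aux_minus hq 2 2 two_ne_zero two_ne_zero
  obtain ⟨hBM, hBne⟩ := aux_minus hq 4 4 (by norm_num) (by norm_num)
  obtain ⟨hCM, hCne⟩ := aux_minus hq 8 8 (by norm_num) (by norm_num)
  obtain ⟨hDM, hDne⟩ := aux_minus hq 8 4 (by norm_num) (by norm_num)
  obtain ⟨hEM, hEne⟩ := aux_minus hq 4 2 (by norm_num) two_ne_zero
  have hsplit : ∀ i : ℕ, (∏' k : ℕ, (1 + q ^ (2 * i + 2) * (q ^ 2) ^ k)) =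
      (∏' k : ℕ, (1 + q ^ (2 * k + 2))) / ∏ k ∈ Finset.range i, (1 + q ^ (2 * k + 2)) := by
    intro i
    have h1 : (∏' k : ℕ, (1 + q ^ (2 * i + 2) * (q ^ 2) ^ k))
        = ∏' k : ℕ, (1 + q ^ (2 * (k + i) + 2)) := by
      apply tprod_congr
      intro k
      rw [← pow_mul, ← pow_add]
      congr 2
      ring
    have hsh : Multipliable (fun x : ℕ => 1 + q ^ (2 * (x + i) + 2)) := by
      have h2 := (aux_plus hq 2 (2 * i + 2) two_ne_zero (by omega)).1
      exact h2.congr fun k => by rw [show 2 * k + (2 * i + 2) = 2 * (k + i) + 2 by ring]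
    rw [h1, eq_div_iff (Finset.prod_ne_zero_iff.mpr fun k _ =>
      one_add_ne (by rw [norm_pow]; exact pow_lt_one₀ h0 hq (by omega))), mul_comm]
    exact Multipliable.prod_mul_tprod_nat_mul' (f := fun k => 1 + q ^ (2 * k + 2)) (k := i) hsh
  have hP4 : ∀ i : ℕ, (∏ k ∈ Finset.range i, (1 - q ^ (2 * (k + 1)))) *
      (∏ k ∈ Finset.range i, (1 + q ^ (2 * k + 2)))
      = ∏ k ∈ Finset.range i, (1 - (q ^ 4) ^ (k + 1)) := by
    intro i
    rw [← Finset.prod_mul_distrib]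
    apply Finset.prod_congr rfl
    intro k _
    rw [← pow_mul]
    ring
  have houter : ∀ i : ℕ, (∑' j : ℕ, F (i, j)) = (∏' k : ℕ, (1 + q ^ (2 * k + 2))) *
      ((q ^ 4) ^ (∑ k ∈ Finset.range i, k) * (q ^ 2) ^ i /
        ∏ k ∈ Finset.range i, (1 - (q ^ 4) ^ (k + 1))) := by
    intro i
    rw [inner i, hsplit i, div_mul_div_comm, ← hP4 i]
    have hnum : (q ^ 4) ^ (∑ k ∈ Finset.range i, k) * (q ^ 2) ^ i = q ^ (2 * i ^ 2) := by
      rw [← pow_mul, ← pow_mul, ← pow_add]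
      congr 1
      have h2 := gauss i
      rcases i with _ | n
      · simp
      · have h3 : 2 * (∑ k ∈ Finset.range (n + 1), k) = (n + 1) * n := by
          rw [h2]; simp
        nlinarith [h3]
    rw [hnum]
    ring
  rw [Summable.tsum_prod' hFs hFs.prod_factor]
  rw [tsum_congr houter, tsum_mul_left, euler hq4 hq2]
  -- now transform everything into canonical products
  have hQh : (∏' k : ℕ, (1 + q ^ 2 * (q ^ 4) ^ k)) = ∏' k : ℕ, (1 + q ^ (4 * k + 2)) :=
    tprod_congr fun k => by rw [← pow_mul, ← pow_add, Nat.add_comm]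
  have hRA : (∏' k : ℕ, (1 - q ^ (2 * (k + 1)))) = ∏' k : ℕ, (1 - q ^ (2 * k + 2)) :=
    tprod_congr fun k => by rw [show 2 * (k + 1) = 2 * k + 2 by ring]
  have hRB : (∏' k : ℕ, (1 - q ^ (4 * (k + 1)))) = ∏' k : ℕ, (1 - q ^ (4 * k + 4)) :=
    tprod_congr fun k => by rw [show 4 * (k + 1) = 4 * k + 4 by ring]
  have hRC : (∏' k : ℕ, (1 - q ^ (8 * (k + 1)))) = ∏' k : ℕ, (1 - q ^ (8 * k + 8)) :=
    tprod_congr fun k => by rw [show 8 * (k + 1) = 8 * k + 8 by ring]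
  rw [hQh, hRA, hRB, hRC]
  -- product identities
  have e1 : (∏' k : ℕ, (1 + q ^ (2 * k + 2))) * (∏' k : ℕ, (1 - q ^ (2 * k + 2)))
      = ∏' k : ℕ, (1 - q ^ (4 * k + 4)) := by
    rw [← Multipliable.tprod_mul hgM hAM]
    exact tprod_congr fun k => by ring
  have e2 : (∏' k : ℕ, (1 + q ^ (4 * k + 2))) * (∏' k : ℕ, (1 - q ^ (4 * k + 2)))
      = ∏' k : ℕ, (1 - q ^ (8 * k + 4)) := by
    rw [← Multipliable.tprod_mul hhM hEM]
    exact tprod_congr fun k => by ring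
  have e3 : (∏' k : ℕ, (1 - q ^ (4 * k + 2))) * (∏' k : ℕ, (1 - q ^ (4 * k + 4)))
      = ∏' k : ℕ, (1 - q ^ (2 * k + 2)) := by
    have he : Multipliable (fun k : ℕ => 1 - q ^ (2 * (2 * k) + 2)) :=
      hEM.congr fun k => by rw [show 4 * k + 2 = 2 * (2 * k) + 2 by ring]
    have ho : Multipliable (fun k : ℕ => 1 - q ^ (2 * (2 * k + 1) + 2)) :=
      hBM.congr fun k => by rw [show 4 * k + 4 = 2 * (2 * k + 1) + 2 by ring]
    have h := tprod_even_mul_odd (f := fun k => 1 - q ^ (2 * k + 2)) he ho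
    rw [← h]
    congr 1
    · exact tprod_congr fun k => by ring
    · exact tprod_congr fun k => by ring
  have e4 : (∏' k : ℕ, (1 - q ^ (8 * k + 4))) * (∏' k : ℕ, (1 - q ^ (8 * k + 8)))
      = ∏' k : ℕ, (1 - q ^ (4 * k + 4)) := by
    have he : Multipliable (fun k : ℕ => 1 - q ^ (4 * (2 * k) + 4)) :=
      hDM.congr fun k => by rw [show 8 * k + 4 = 4 * (2 * k) + 4 by ring]
    have ho : Multipliable (fun k : ℕ => 1 - q ^ (4 * (2 * k + 1) + 4)) :=
      hCM.congr fun k => by rw [show 8 * k + 8 = 4 * (2 * k + 1) + 4 by ring]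
    have h := tprod_even_mul_odd (f := fun k => 1 - q ^ (4 * k + 4)) he ho
    rw [← h]
    congr 1
    · exact tprod_congr fun k => by ring
    · exact tprod_congr fun k => by ring
  -- final algebra
  set A := ∏' k : ℕ, (1 - q ^ (2 * k + 2)) with hA
  set B := ∏' k : ℕ, (1 - q ^ (4 * k + 4)) with hB
  set C := ∏' k : ℕ, (1 - q ^ (8 * k + 8)) with hC
  set D := ∏' k : ℕ, (1 - q ^ (8 * k + 4)) with hD
  set E := ∏' k : ℕ, (1 - q ^ (4 * k + 2)) with hE
  have hBne' : B ≠ 0 := hBne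
  have hG : (∏' k : ℕ, (1 + q ^ (2 * k + 2))) = B / A := by
    rw [eq_div_iff hAne]; exact e1
  have hH : (∏' k : ℕ, (1 + q ^ (4 * k + 2))) = D / E := by
    rw [eq_div_iff hEne]; exact e2
  have hE' : E = A / B := by
    rw [eq_div_iff hBne']; exact e3
  have hD' : D = B / C := by
    rw [eq_div_iff hCne]; exact e4
  rw [hG, hH, hD', hE']
  field_simp
end

section
/- For |q|<1, $\sum_{i,j\geq 0} \frac{q^{3i^2+4j^2+4ij-2i}}{(q^4;q^4)_i (q^4;q^4)_j} = \sum_{i,j\geq 0} \frac{q^{i^2+4ij+4j^2+4j}}{(q^4;q^4)_i (q^8;q^8)_j}$, i.e. the two double-sum Nahm-type series of Example 8 with $B=(-1/2,0)^T$ (after scaling $q\to q^4$) are equal. -/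
open Finset
noncomputable section NahmEx8
variable (q : ℂ)

def Pp (a : ℕ) : ℂ := ∏ k ∈ Finset.range a, (1 - q ^ (4 * (k + 1)))
def Qq (d : ℕ) : ℂ := ∏ k ∈ Finset.range d, (1 - q ^ (8 * (k + 1)))

lemma Pp_zero : Pp q 0 = 1 := by simp [Pp]
lemma Qq_zero : Qq q 0 = 1 := by simp [Qq]
lemma Pp_succ (a : ℕ) : Pp q (a+1) = Pp q a * (1 - q ^ (4 * (a + 1))) :=
  Finset.prod_range_succ _ _
lemma Qq_succ (d : ℕ) : Qq q (d+1) = Qq q d * (1 - q ^ (8 * (d + 1))) :=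
  Finset.prod_range_succ _ _

/-- signed coefficient (-1)^m q^{4m(m-1)} / (q⁸;q⁸)_m -/
def S1 (m : ℕ) : ℂ := (-1) ^ m * q ^ (4 * (m * (m - 1))) / Qq q m
/-- signed coefficient (-1)^m q^{4m²} / (q⁸;q⁸)_m -/
def S2 (m : ℕ) : ℂ := (-1) ^ m * q ^ (4 * (m * m)) / Qq q m

def rr (d : ℕ) : ℂ := ∑ m ∈ Finset.range (d + 1), S1 q m / Pp q (d - m)
def ww (d : ℕ) : ℂ := ∑ m ∈ Finset.range (d + 1), S2 q m / Pp q (d - m)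
def ff (a : ℕ) : ℂ := ∑ m ∈ Finset.range (a / 2 + 1), S1 q m / Pp q (a - 2 * m)

variable {q} (hq : ‖q‖ < 1)

include hq in
lemma one_sub_pow_ne (e : ℕ) (he : 1 ≤ e) : (1 : ℂ) - q ^ e ≠ 0 := by
  intro h
  have h1 : q ^ e = 1 := by linear_combination -h
  have : ‖q ^ e‖ < 1 := by
    rw [norm_pow]
    calc ‖q‖ ^ e ≤ ‖q‖ ^ 1 := pow_le_pow_of_le_one (norm_nonneg q) hq.le he
    _ < 1 := by simpa using hq
  rw [h1] at this; simp at this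

include hq in
lemma Pp_ne (a : ℕ) : Pp q a ≠ 0 :=
  Finset.prod_ne_zero_iff.2 fun k _ => one_sub_pow_ne hq _ (by omega)

include hq in
lemma Qq_ne (d : ℕ) : Qq q d ≠ 0 :=
  Finset.prod_ne_zero_iff.2 fun k _ => one_sub_pow_ne hq _ (by omega)

include hq in
lemma S1_shift (m : ℕ) :
    S1 q (m+1) * (1 - q ^ (8 * (m + 1))) = -(q ^ (8 * m) * S1 q m) := by
  have hQ := Qq_ne hq (q := q) m
  have hne := one_sub_pow_ne hq (8 * (m+1)) (by omega)
  rw [S1, S1, Qq_succ]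
  have he : 4 * ((m+1) * (m + 1 - 1)) = 8 * m + 4 * (m * (m-1)) := by
    cases m with
    | zero => simp
    | succ k => simp only [Nat.add_sub_cancel]; ring
  rw [he, pow_add, pow_succ]
  field_simp
  ring

include hq in
lemma S2_shift (m : ℕ) :
    S2 q (m+1) * (1 - q ^ (8 * (m + 1))) = -(q ^ (8 * m + 4) * S2 q m) := by
  have hQ := Qq_ne hq (q := q) m
  have hne := one_sub_pow_ne hq (8 * (m+1)) (by omega)
  rw [S2, S2, Qq_succ]
  have he : 4 * ((m+1) * (m + 1)) = (8 * m + 4) + 4 * (m * m) := by ring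
  rw [he, pow_add, pow_succ]
  field_simp
  ring


lemma S1_to_S2 (q : ℂ) (m : ℕ) : (q:ℂ) ^ (4 * m) * S1 q m = S2 q m := by
  rw [S1, S2, mul_div_assoc', ← mul_assoc, mul_comm ((q:ℂ) ^ (4 * m)) ((-1:ℂ) ^ m),
    mul_assoc, ← pow_add]
  congr 3
  cases m with
  | zero => simp
  | succ k => simp only [Nat.add_sub_cancel]; ring

lemma keysplit (qq a P y b : ℂ) (hP : P ≠ 0) (hZ : 1 - qq ^ 4 * y ≠ 0) :
    (1 - y ^ 2 * (b * qq ^ 8)) * (a / (P * (1 - qq ^ 4 * y))) =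
      (b + b * y * qq ^ 4) * (a / P) + a * (1 - b) / (P * (1 - qq ^ 4 * y)) := by
  have hZ' : 1 - y * qq ^ 4 ≠ 0 := by rwa [mul_comm] at hZ
  field_simp
  ring

include hq in
lemma recA (d : ℕ) :
    (1 - q ^ (8 * (d + 1))) * rr q (d + 1) = q ^ (4 * (d + 1)) * ww q d := by
  have hPne : ∀ a, Pp q a ≠ 0 := Pp_ne hq
  calc (1 - q ^ (8 * (d + 1))) * rr q (d + 1)
      = ∑ m ∈ Finset.range (d + 2),
          (1 - q ^ (8 * (d + 1))) * (S1 q m / Pp q (d + 1 - m)) := by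
        rw [rr, Finset.mul_sum]
    _ = ∑ m ∈ Finset.range (d + 2),
          ((if m ≤ d then (q ^ (8 * m) + q ^ (8 * m) * q ^ (4 * (d - m)) * q ^ 4) * (S1 q m / Pp q (d - m)) else 0)
            + S1 q m * (1 - q ^ (8 * m)) / Pp q (d + 1 - m)) := by
        refine Finset.sum_congr rfl fun m hm => ?_
        rcases le_or_gt m d with h | h
        · rw [if_pos h]
          have h3 : (1 : ℂ) - q ^ 4 * q ^ (4 * (d - m)) ≠ 0 := by
            have := one_sub_pow_ne hq (4 * ((d - m) + 1)) (by omega)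
            rwa [show 4 * ((d - m) + 1) = 4 + 4 * (d - m) by ring, pow_add] at this
          have hPs : Pp q (d + 1 - m) = Pp q (d - m) * (1 - q ^ 4 * q ^ (4 * (d - m))) := by
            rw [show d + 1 - m = (d - m) + 1 by omega, Pp_succ,
              show 4 * ((d - m) + 1) = 4 + 4 * (d - m) by ring, pow_add]
          have hX : (q : ℂ) ^ (8 * (d + 1)) = (q ^ (4 * (d - m))) ^ 2 * (q ^ (8 * m) * q ^ 8) := by
            rw [← pow_mul, ← pow_add, ← pow_add]; congr 1; omega
          rw [hPs, hX]
          exact keysplit q (S1 q m) (Pp q (d - m)) _ _ (hPne _) h3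
        · have hm' : m = d + 1 := by have := Finset.mem_range.1 hm; omega
          subst hm'
          rw [if_neg (by omega)]
          have h0 : d + 1 - (d + 1) = 0 := by omega
          rw [h0, Pp_zero, div_one, div_one, zero_add]
          ring
    _ = (∑ m ∈ Finset.range (d + 2),
          (if m ≤ d then (q ^ (8 * m) + q ^ (8 * m) * q ^ (4 * (d - m)) * q ^ 4) * (S1 q m / Pp q (d - m)) else 0))
        + ∑ m ∈ Finset.range (d + 2), S1 q m * (1 - q ^ (8 * m)) / Pp q (d + 1 - m) := by
        rw [Finset.sum_add_distrib]
    _ = (∑ m ∈ Finset.range (d + 1),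
          (q ^ (8 * m) + q ^ (8 * m) * q ^ (4 * (d - m)) * q ^ 4) * (S1 q m / Pp q (d - m)))
        + ∑ m ∈ Finset.range (d + 1), -(q ^ (8 * m) * (S1 q m / Pp q (d - m))) := by
        congr 1
        · rw [Finset.sum_range_succ, if_neg (by omega), add_zero]
          exact Finset.sum_congr rfl fun m hm =>
            if_pos (by have := Finset.mem_range.1 hm; omega)
        · rw [Finset.sum_range_succ']
          rw [show S1 q 0 * (1 - q ^ (8 * 0)) / Pp q (d + 1 - 0) = 0 by simp, add_zero]
          refine Finset.sum_congr rfl fun m hm => ?_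
          have hs := S1_shift hq (q := q) m
          have hd' : d + 1 - (m + 1) = d - m := by omega
          rw [hd', hs, neg_div, mul_div_assoc]
    _ = ∑ m ∈ Finset.range (d + 1), q ^ (4 * (d + 1)) * (S2 q m / Pp q (d - m)) := by
        rw [← Finset.sum_add_distrib]
        refine Finset.sum_congr rfl fun m hm => ?_
        have hmem := Finset.mem_range.1 hm
        have h6 : (q:ℂ) ^ (8 * m) * q ^ (4 * (d - m)) * q ^ 4
            = q ^ (4 * (d + 1)) * q ^ (4 * m) := by
          rw [← pow_add, ← pow_add, ← pow_add]; congr 1; omega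
        have hS12 := S1_to_S2 q m
        linear_combination (S1 q m / Pp q (d - m)) * h6 + (q ^ (4 * (d + 1)) / Pp q (d - m)) * hS12
    _ = q ^ (4 * (d + 1)) * ww q d := by rw [ww, Finset.mul_sum]


lemma keysplit2 (qq a P y b : ℂ) (hP : P ≠ 0) (hZ : 1 - qq ^ 4 * y ≠ 0) :
    (1 - y ^ 2 * (b * qq ^ 8)) * (a / (P * (1 - qq ^ 4 * y))) =
      (1 + qq ^ 4 * y) * (a / P) + y ^ 2 * qq ^ 8 * (a * (1 - b)) / (P * (1 - qq ^ 4 * y)) := by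
  have hZ' : 1 - y * qq ^ 4 ≠ 0 := by rwa [mul_comm] at hZ
  field_simp
  ring

include hq in
lemma recB (d : ℕ) :
    (1 - q ^ (8 * (d + 1))) * ww q (d + 1)
      = (1 - q ^ (8 * d + 4)) * ww q d + q ^ (4 * (d + 1)) * rr q d := by
  have hPne : ∀ a, Pp q a ≠ 0 := Pp_ne hq
  calc (1 - q ^ (8 * (d + 1))) * ww q (d + 1)
      = ∑ m ∈ Finset.range (d + 2),
          (1 - q ^ (8 * (d + 1))) * (S2 q m / Pp q (d + 1 - m)) := by
        rw [ww, Finset.mul_sum]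
    _ = ∑ m ∈ Finset.range (d + 2),
          ((if m ≤ d then (1 + q ^ 4 * q ^ (4 * (d - m))) * (S2 q m / Pp q (d - m)) else 0)
            + q ^ (8 * (d + 1 - m)) * (S2 q m * (1 - q ^ (8 * m))) / Pp q (d + 1 - m)) := by
        refine Finset.sum_congr rfl fun m hm => ?_
        rcases le_or_gt m d with h | h
        · rw [if_pos h]
          have h3 : (1 : ℂ) - q ^ 4 * q ^ (4 * (d - m)) ≠ 0 := by
            have := one_sub_pow_ne hq (4 * ((d - m) + 1)) (by omega)
            rwa [show 4 * ((d - m) + 1) = 4 + 4 * (d - m) by ring, pow_add] at this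
          have hPs : Pp q (d + 1 - m) = Pp q (d - m) * (1 - q ^ 4 * q ^ (4 * (d - m))) := by
            rw [show d + 1 - m = (d - m) + 1 by omega, Pp_succ,
              show 4 * ((d - m) + 1) = 4 + 4 * (d - m) by ring, pow_add]
          have hX : (q : ℂ) ^ (8 * (d + 1)) = (q ^ (4 * (d - m))) ^ 2 * (q ^ (8 * m) * q ^ 8) := by
            rw [← pow_mul, ← pow_add, ← pow_add]; congr 1; omega
          have hY : (q : ℂ) ^ (8 * (d + 1 - m)) = (q ^ (4 * (d - m))) ^ 2 * q ^ 8 := by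
            rw [← pow_mul, ← pow_add]; congr 1; omega
          rw [hPs, hX, hY]
          exact keysplit2 q (S2 q m) (Pp q (d - m)) _ _ (hPne _) h3
        · have hm' : m = d + 1 := by have := Finset.mem_range.1 hm; omega
          subst hm'
          rw [if_neg (by omega)]
          have h0 : d + 1 - (d + 1) = 0 := by omega
          rw [h0, Pp_zero, div_one, div_one, zero_add]
          simp only [Nat.mul_zero, pow_zero, one_mul]
          ring
    _ = (∑ m ∈ Finset.range (d + 2),
          (if m ≤ d then (1 + q ^ 4 * q ^ (4 * (d - m))) * (S2 q m / Pp q (d - m)) else 0))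
        + ∑ m ∈ Finset.range (d + 2),
            q ^ (8 * (d + 1 - m)) * (S2 q m * (1 - q ^ (8 * m))) / Pp q (d + 1 - m) := by
        rw [Finset.sum_add_distrib]
    _ = (∑ m ∈ Finset.range (d + 1), (1 + q ^ 4 * q ^ (4 * (d - m))) * (S2 q m / Pp q (d - m)))
        + ∑ m ∈ Finset.range (d + 1), -(q ^ (8 * d + 4) * (S2 q m / Pp q (d - m))) := by
        congr 1
        · rw [Finset.sum_range_succ, if_neg (by omega), add_zero]
          exact Finset.sum_congr rfl fun m hm =>
            if_pos (by have := Finset.mem_range.1 hm; omega)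
        · rw [Finset.sum_range_succ']
          rw [show (q:ℂ) ^ (8 * (d + 1 - 0)) * (S2 q 0 * (1 - q ^ (8 * 0))) / Pp q (d + 1 - 0) = 0
            by simp, add_zero]
          refine Finset.sum_congr rfl fun m hm => ?_
          have hmem := Finset.mem_range.1 hm
          have hs := S2_shift hq (q := q) m
          have hd' : d + 1 - (m + 1) = d - m := by omega
          rw [hd', hs]
          have he : (q:ℂ) ^ (8 * (d - m)) * q ^ (8 * m + 4) = q ^ (8 * d + 4) := by
            rw [← pow_add]; congr 1; omega
          rw [mul_neg, ← mul_assoc, he, neg_div, mul_div_assoc]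
    _ = ∑ m ∈ Finset.range (d + 1),
          (S2 q m / Pp q (d - m) + q ^ (4 * (d + 1)) * (S1 q m / Pp q (d - m))
            - q ^ (8 * d + 4) * (S2 q m / Pp q (d - m))) := by
        rw [← Finset.sum_add_distrib]
        refine Finset.sum_congr rfl fun m hm => ?_
        have hmem := Finset.mem_range.1 hm
        have h6 : (q:ℂ) ^ (4 * (d + 1)) = q ^ 4 * q ^ (4 * (d - m)) * q ^ (4 * m) := by
          rw [mul_assoc, ← pow_add, ← pow_add]; congr 1; omega
        have hS12 := S1_to_S2 q m
        have : (q:ℂ) ^ 4 * q ^ (4 * (d - m)) * (S2 q m / Pp q (d - m))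
            = q ^ (4 * (d + 1)) * (S1 q m / Pp q (d - m)) := by
          rw [h6]
          linear_combination (q ^ 4 * q ^ (4 * (d - m)) / Pp q (d - m)) * hS12.symm
        linear_combination this
    _ = (1 - q ^ (8 * d + 4)) * ww q d + q ^ (4 * (d + 1)) * rr q d := by
        rw [Finset.sum_sub_distrib, Finset.sum_add_distrib, ← Finset.mul_sum, ← Finset.mul_sum,
          ww, rr]
        ring

include hq in
lemma K4closed : ∀ d : ℕ, rr q d = q ^ (4 * d) / Qq q d ∧ ww q d = 1 / Qq q d := by
  intro d
  induction d with
  | zero => constructor <;> simp [rr, ww, S1, S2, Pp_zero, Qq_zero]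
  | succ d ih =>
    obtain ⟨ih1, ih2⟩ := ih
    have hQ := Qq_ne hq (q := q) d
    have hne := one_sub_pow_ne hq (8 * (d + 1)) (by omega)
    have hA := recA hq d
    have hB := recB hq d
    rw [ih2] at hA
    rw [ih1, ih2] at hB
    have hQQ : Qq q d * (Qq q d)⁻¹ = 1 := mul_inv_cancel₀ hQ
    constructor
    · rw [Qq_succ, eq_div_iff (mul_ne_zero hQ hne)]
      linear_combination Qq q d * hA + q ^ (4 * (d + 1)) * hQQ
    · rw [Qq_succ, eq_div_iff (mul_ne_zero hQ hne)]
      linear_combination Qq q d * hB + hQQ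


lemma keysplit3 (s P z b : ℂ) (hP : P ≠ 0) (hz : 1 - z ≠ 0) :
    (1 - z * b) * (s / (P * (1 - z))) = s / P + z * (s * (1 - b)) / (P * (1 - z)) := by
  field_simp
  ring

include hq in
lemma recK1 (a : ℕ) :
    (1 - q ^ (4 * (a + 2))) * ff q (a + 2) = ff q (a + 1) - q ^ (4 * a) * ff q a := by
  have hPne : ∀ x, Pp q x ≠ 0 := Pp_ne hq
  have hM : (a + 2) / 2 = a / 2 + 1 := by omega
  calc (1 - q ^ (4 * (a + 2))) * ff q (a + 2)
      = ∑ m ∈ Finset.range (a / 2 + 2),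
          (1 - q ^ (4 * (a + 2))) * (S1 q m / Pp q (a + 2 - 2 * m)) := by
        rw [ff, Finset.mul_sum, hM]
    _ = ∑ m ∈ Finset.range (a / 2 + 2),
          ((if 2 * m ≤ a + 1 then S1 q m / Pp q (a + 1 - 2 * m) else 0)
            + q ^ (4 * (a + 2 - 2 * m)) * (S1 q m * (1 - q ^ (8 * m))) / Pp q (a + 2 - 2 * m)) := by
        refine Finset.sum_congr rfl fun m hm => ?_
        have hmem := Finset.mem_range.1 hm
        rcases le_or_gt (2 * m) (a + 1) with h | h
        · rw [if_pos h]
          have hz : (1 : ℂ) - q ^ (4 * (a + 2 - 2 * m)) ≠ 0 :=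
            one_sub_pow_ne hq _ (by omega)
          have hPs : Pp q (a + 2 - 2 * m)
              = Pp q (a + 1 - 2 * m) * (1 - q ^ (4 * (a + 2 - 2 * m))) := by
            rw [show a + 2 - 2 * m = (a + 1 - 2 * m) + 1 by omega]
            exact Pp_succ q _
          have hX : (q : ℂ) ^ (4 * (a + 2)) = q ^ (4 * (a + 2 - 2 * m)) * q ^ (8 * m) := by
            rw [← pow_add]; congr 1; omega
          rw [hPs, hX]
          exact keysplit3 (S1 q m) (Pp q (a + 1 - 2 * m)) _ _ (hPne _) hz
        · have hm' : 2 * m = a + 2 := by omega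
          rw [if_neg (by omega)]
          have h0 : a + 2 - 2 * m = 0 := by omega
          rw [h0, Pp_zero, div_one, div_one, zero_add]
          rw [show (4 : ℕ) * 0 = 0 by ring, pow_zero, one_mul,
            show 8 * m = 4 * (a + 2) by omega]
          ring
    _ = (∑ m ∈ Finset.range (a / 2 + 2),
          (if 2 * m ≤ a + 1 then S1 q m / Pp q (a + 1 - 2 * m) else 0))
        + ∑ m ∈ Finset.range (a / 2 + 2),
            q ^ (4 * (a + 2 - 2 * m)) * (S1 q m * (1 - q ^ (8 * m))) / Pp q (a + 2 - 2 * m) := by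
        rw [Finset.sum_add_distrib]
    _ = ff q (a + 1) + ∑ m ∈ Finset.range (a / 2 + 1), -(q ^ (4 * a) * (S1 q m / Pp q (a - 2 * m))) := by
        congr 1
        · rw [← Finset.sum_filter, ff]
          apply Finset.sum_congr
          · ext x
            simp only [Finset.mem_filter, Finset.mem_range]
            omega
          · intros; rfl
        · rw [Finset.sum_range_succ']
          rw [show (q:ℂ) ^ (4 * (a + 2 - 2 * 0)) * (S1 q 0 * (1 - q ^ (8 * 0))) / Pp q (a + 2 - 2 * 0) = 0
            by simp, add_zero]
          refine Finset.sum_congr rfl fun m hm => ?_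
          have hmem := Finset.mem_range.1 hm
          have hs := S1_shift hq (q := q) m
          have hd' : a + 2 - 2 * (m + 1) = a - 2 * m := by omega
          rw [hd', hs]
          have he : (q:ℂ) ^ (4 * (a - 2 * m)) * q ^ (8 * m) = q ^ (4 * a) := by
            rw [← pow_add]; congr 1; omega
          rw [mul_neg, ← mul_assoc, he, neg_div, mul_div_assoc]
    _ = ff q (a + 1) - q ^ (4 * a) * ff q a := by
        simp only [ff]
        rw [Finset.sum_neg_distrib, ← Finset.mul_sum]
        ring

include hq in
lemma K1closed : ∀ a : ℕ, ff q a * Pp q a = q ^ (2 * (a * (a - 1))) := by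
  have key : ∀ a : ℕ, ff q a * Pp q a = q ^ (2 * (a * (a - 1)))
      ∧ ff q (a + 1) * Pp q (a + 1) = q ^ (2 * ((a + 1) * a)) := by
    intro a
    induction a with
    | zero =>
      constructor
      · simp [ff, Pp_zero, S1, Qq_zero]
      · have h1 := Pp_ne hq (q := q) 1
        simp [ff, S1, Qq_zero, inv_mul_cancel₀ h1]
    | succ b ihb =>
      obtain ⟨ih0, ih1⟩ := ihb
      refine ⟨by simpa using ih1, ?_⟩
      have e := recK1 hq (q := q) b
      have hu : (1 : ℂ) - q ^ (4 * (b + 1)) ≠ 0 := one_sub_pow_ne hq _ (by omega)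
      have hz : (1 : ℂ) - q ^ (4 * (b + 2)) ≠ 0 := one_sub_pow_ne hq _ (by omega)
      have he1 : (q:ℂ) ^ (4 * b) * q ^ (2 * (b * (b - 1))) = q ^ (2 * (b * (b + 1))) := by
        rw [← pow_add]; congr 1
        cases b with
        | zero => simp
        | succ k => simp only [Nat.add_sub_cancel]; ring
      have he2 : (q:ℂ) ^ (2 * (b * (b + 1))) * q ^ (4 * (b + 1)) = q ^ (2 * ((b + 1) * b) + 4 * (b + 1)) := by
        rw [← pow_add]; congr 1; ring
      have hgoalE : 2 * ((b + 1 + 1) * (b + 1)) = 2 * ((b + 1) * b) + 4 * (b + 1) := by ring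
      rw [hgoalE]
      rw [Pp_succ q (b + 1), Pp_succ q b] at *
      linear_combination (Pp q b * (1 - q ^ (4 * (b + 1)))) * e + ih1
        - q ^ (4 * b) * (1 - q ^ (4 * (b + 1))) * ih0
        - (1 - q ^ (4 * (b + 1))) * he1 + he2
  exact fun a => (key a).1


include hq in
lemma MAIN (n : ℕ) :
    ∑ b ∈ Finset.range (n / 2 + 1),
        q ^ (2 * ((n - 2 * b) * (n - 2 * b - 1))) / (Pp q (n - 2 * b) * Pp q b)
      = ∑ d ∈ Finset.range (n / 2 + 1), q ^ (4 * d) / (Pp q (n - 2 * d) * Qq q d) := by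
  have hPne : ∀ x, Pp q x ≠ 0 := Pp_ne hq
  have hQne : ∀ x, Qq q x ≠ 0 := Qq_ne hq
  calc ∑ b ∈ Finset.range (n / 2 + 1),
        q ^ (2 * ((n - 2 * b) * (n - 2 * b - 1))) / (Pp q (n - 2 * b) * Pp q b)
      = ∑ b ∈ Finset.range (n / 2 + 1), ∑ m ∈ Finset.range ((n - 2 * b) / 2 + 1),
          S1 q m / (Pp q (n - 2 * b - 2 * m) * Pp q b) := by
        refine Finset.sum_congr rfl fun b hb => ?_
        have hK := K1closed hq (q := q) (n - 2 * b)
        rw [ff] at hK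
        rw [Finset.sum_mul] at hK
        rw [← hK, Finset.sum_div]
        refine Finset.sum_congr rfl fun m hm => ?_
        have h1 : Pp q (n - 2 * b) ≠ 0 := hPne _
        calc S1 q m / Pp q (n - 2*b - 2*m) * Pp q (n - 2*b) / (Pp q (n - 2*b) * Pp q b)
            = Pp q (n - 2*b) * S1 q m
              / (Pp q (n - 2*b) * (Pp q (n - 2*b - 2*m) * Pp q b)) := by ring
          _ = S1 q m / (Pp q (n - 2*b - 2*m) * Pp q b) := mul_div_mul_left _ _ h1
    _ = ∑ d ∈ Finset.range (n / 2 + 1), ∑ m ∈ Finset.range (d + 1),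
          S1 q m / (Pp q (n - 2 * d) * Pp q (d - m)) := by
        rw [Finset.sum_sigma', Finset.sum_sigma']
        refine Finset.sum_nbij' (fun x => ⟨x.1 + x.2, x.2⟩) (fun x => ⟨x.1 - x.2, x.2⟩)
          ?_ ?_ ?_ ?_ ?_
        · rintro ⟨b, m⟩ hx
          simp only [Finset.mem_sigma, Finset.mem_range] at hx ⊢
          omega
        · rintro ⟨d, m⟩ hx
          simp only [Finset.mem_sigma, Finset.mem_range] at hx ⊢
          omega
        · rintro ⟨b, m⟩ hx
          have h1 : b + m - m = b := by omega
          simp only [h1]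
        · rintro ⟨d, m⟩ hx
          simp only [Finset.mem_sigma, Finset.mem_range] at hx
          have h1 : d - m + m = d := by omega
          simp only [h1]
        · rintro ⟨b, m⟩ hx
          show S1 q m / (Pp q (n - 2*b - 2*m) * Pp q b)
            = S1 q m / (Pp q (n - 2*(b+m)) * Pp q (b+m-m))
          have e1 : n - 2*b - 2*m = n - 2*(b+m) := by omega
          have e2 : b + m - m = b := by omega
          rw [e1, e2]
    _ = ∑ d ∈ Finset.range (n / 2 + 1), q ^ (4 * d) / (Pp q (n - 2 * d) * Qq q d) := by
        refine Finset.sum_congr rfl fun d hd => ?_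
        have hK := (K4closed hq (q := q) d).1
        rw [rr] at hK
        rw [eq_div_iff (hQne d)] at hK
        rw [Finset.sum_mul] at hK
        rw [← hK, Finset.sum_div]
        refine Finset.sum_congr rfl fun m hm => ?_
        refine Eq.symm ?_
        calc S1 q m / Pp q (d - m) * Qq q d / (Pp q (n - 2*d) * Qq q d)
            = Qq q d * S1 q m / (Qq q d * (Pp q (n - 2*d) * Pp q (d - m))) := by ring
          _ = S1 q m / (Pp q (n - 2*d) * Pp q (d - m)) := mul_div_mul_left _ _ (hQne d)


include hq in
lemma s4_lt_one : ‖q‖ ^ 4 < 1 := pow_lt_one₀ (norm_nonneg q) hq (by norm_num)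

include hq in
lemma Pp_norm_lb (a : ℕ) : (1 - ‖q‖ ^ 4) ^ a ≤ ‖Pp q a‖ := by
  rw [Pp, norm_prod]
  calc (1 - ‖q‖ ^ 4) ^ a = ∏ _k ∈ Finset.range a, (1 - ‖q‖ ^ 4) := by
        rw [Finset.prod_const, Finset.card_range]
    _ ≤ ∏ k ∈ Finset.range a, ‖1 - q ^ (4 * (k + 1))‖ := by
        apply Finset.prod_le_prod
        · intro i _; have := s4_lt_one hq (q := q); linarith
        · intro i _
          have h1 : ‖q ^ (4 * (i + 1))‖ ≤ ‖q‖ ^ 4 := by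
            rw [norm_pow]
            exact pow_le_pow_of_le_one (norm_nonneg q) hq.le (by omega)
          have h2 := norm_sub_norm_le (1 : ℂ) (q ^ (4 * (i + 1)))
          simp only [norm_one] at h2
          linarith

include hq in
lemma Qq_norm_lb (a : ℕ) : (1 - ‖q‖ ^ 4) ^ a ≤ ‖Qq q a‖ := by
  rw [Qq, norm_prod]
  calc (1 - ‖q‖ ^ 4) ^ a = ∏ _k ∈ Finset.range a, (1 - ‖q‖ ^ 4) := by
        rw [Finset.prod_const, Finset.card_range]
    _ ≤ ∏ k ∈ Finset.range a, ‖1 - q ^ (8 * (k + 1))‖ := by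
        apply Finset.prod_le_prod
        · intro i _; have := s4_lt_one hq (q := q); linarith
        · intro i _
          have h1 : ‖q ^ (8 * (i + 1))‖ ≤ ‖q‖ ^ 4 := by
            rw [norm_pow]
            exact pow_le_pow_of_le_one (norm_nonneg q) hq.le (by omega)
          have h2 := norm_sub_norm_le (1 : ℂ) (q ^ (8 * (i + 1)))
          simp only [norm_one] at h2
          linarith

include hq in
lemma div_norm_bound {D E : ℂ} (e n a b : ℕ) (he : n ^ 2 ≤ e) (hab : a + b ≤ n)
    (hD : (1 - ‖q‖ ^ 4) ^ a ≤ ‖D‖) (hE : (1 - ‖q‖ ^ 4) ^ b ≤ ‖E‖) :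
    ‖q ^ e / (D * E)‖ ≤ ‖q‖ ^ (n ^ 2) * ((1 - ‖q‖ ^ 4)⁻¹) ^ n := by
  have hc : (0 : ℝ) < 1 - ‖q‖ ^ 4 := by have := s4_lt_one hq (q := q); linarith
  have hM1 : (1 : ℝ) ≤ (1 - ‖q‖ ^ 4)⁻¹ := by
    have h1 : (1 - ‖q‖ ^ 4) * (1 - ‖q‖ ^ 4)⁻¹ = 1 := mul_inv_cancel₀ (ne_of_gt hc)
    have h2 : (0:ℝ) < (1 - ‖q‖ ^ 4)⁻¹ := inv_pos.2 hc
    nlinarith [pow_nonneg (norm_nonneg q) 4]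
  rw [norm_div, norm_mul, norm_pow]
  have hDE : (1 - ‖q‖ ^ 4) ^ (a + b) ≤ ‖D‖ * ‖E‖ := by
    rw [pow_add]
    exact mul_le_mul hD hE (pow_nonneg hc.le b) (norm_nonneg D)
  have h1 : ‖q‖ ^ e / (‖D‖ * ‖E‖) ≤ ‖q‖ ^ (n ^ 2) / (1 - ‖q‖ ^ 4) ^ (a + b) := by
    apply div_le_div₀ (pow_nonneg (norm_nonneg q) _)
      (pow_le_pow_of_le_one (norm_nonneg q) hq.le he)
      (pow_pos hc _) hDE
  refine h1.trans ?_
  rw [div_eq_mul_inv, ← inv_pow]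
  exact mul_le_mul_of_nonneg_left
    (pow_le_pow_right₀ hM1 hab)
    (pow_nonneg (norm_nonneg q) _)

lemma aux_summable {s M : ℝ} (hs0 : 0 ≤ s) (hs : s < 1) (hM : 0 ≤ M) :
    Summable (fun n : ℕ => ((n : ℝ) + 1) * (s ^ (n ^ 2) * M ^ n)) := by
  have h0 : Filter.Tendsto (fun n : ℕ => s ^ n * M) Filter.atTop (nhds 0) := by
    have := tendsto_pow_atTop_nhds_zero_of_lt_one hs0 hs
    simpa using this.mul_const M
  have hev : ∀ᶠ n : ℕ in Filter.atTop, s ^ n * M ≤ 1 / 2 :=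
    h0.eventually (eventually_le_nhds (by norm_num : (0:ℝ) < 1/2))
  have hg : Summable (fun n : ℕ => ((n : ℝ) + 1) * (1 / 2) ^ n) := by
    have g1 : Summable (fun n : ℕ => (n : ℝ) * (1 / 2 : ℝ) ^ n) := by
      have := summable_pow_mul_geometric_of_norm_lt_one (R := ℝ) 1
        (r := (1 / 2 : ℝ))
        (by rw [Real.norm_eq_abs, abs_of_pos (by norm_num : (0:ℝ) < 1/2)]; norm_num)
      simpa using this
    have g2 : Summable (fun n : ℕ => ((1 : ℝ) / 2) ^ n) :=
      summable_geometric_of_lt_one (by norm_num) (by norm_num)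
    simpa [add_mul] using g1.add g2
  apply summable_of_isBigO_nat hg
  rw [Asymptotics.isBigO_iff]
  refine ⟨1, ?_⟩
  filter_upwards [hev, Filter.eventually_ge_atTop 1] with n h1 h2
  have hb : s ^ (n ^ 2) * M ^ n ≤ (1 / 2) ^ n := by
    have : s ^ (n ^ 2) * M ^ n = (s ^ n * M) ^ n := by
      rw [mul_pow, ← pow_mul]; ring_nf
    rw [this]
    exact pow_le_pow_left₀ (by positivity) h1 n
  rw [one_mul, Real.norm_eq_abs, Real.norm_eq_abs]
  rw [abs_of_nonneg (by positivity), abs_of_nonneg (by positivity)]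
  have hn1 : (0:ℝ) ≤ (n:ℝ) + 1 := by positivity
  exact mul_le_mul_of_nonneg_left hb hn1


def sigEquiv : (Σ n : ℕ, Fin (n / 2 + 1)) ≃ ℕ × ℕ where
  toFun x := (x.1 - 2 * (x.2 : ℕ), (x.2 : ℕ))
  invFun p := ⟨p.1 + 2 * p.2, ⟨p.2, by omega⟩⟩
  left_inv x := by
    rcases x with ⟨n, b⟩
    have hb : 2 * (b : ℕ) ≤ n := by have := b.isLt; omega
    have h1 : n - 2 * (b : ℕ) + 2 * (b : ℕ) = n := by omega
    dsimp only
    refine Sigma.ext h1 ?_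
    exact (Fin.heq_ext_iff (by dsimp only; omega)).2 rfl
  right_inv p := by
    rcases p with ⟨a, b⟩
    show (a + 2 * b - 2 * b, b) = (a, b)
    have h1 : a + 2 * b - 2 * b = a := by omega
    rw [h1]

include hq in
lemma sigma_summable (F : ℕ × ℕ → ℂ)
    (hF : ∀ n b : ℕ, 2 * b ≤ n →
      ‖F (n - 2 * b, b)‖ ≤ ‖q‖ ^ (n ^ 2) * ((1 - ‖q‖ ^ 4)⁻¹) ^ n) :
    Summable (fun x : (Σ n : ℕ, Fin (n / 2 + 1)) => F (x.1 - 2 * (x.2 : ℕ), (x.2 : ℕ))) := by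
  have hc : (0 : ℝ) < 1 - ‖q‖ ^ 4 := by have := s4_lt_one hq (q := q); linarith
  apply Summable.of_norm
  apply (summable_sigma_of_nonneg (fun x => norm_nonneg _)).2
  refine ⟨fun n => (hasSum_fintype _).summable, ?_⟩
  apply Summable.of_nonneg_of_le (fun n => tsum_nonneg fun b => norm_nonneg _)
    (fun n => ?_)
    (aux_summable (norm_nonneg q) hq (le_of_lt (inv_pos.2 hc)))
  rw [tsum_fintype]
  calc ∑ b : Fin (n / 2 + 1), ‖F (n - 2 * (b : ℕ), (b : ℕ))‖
      ≤ ∑ _b : Fin (n / 2 + 1), ‖q‖ ^ (n ^ 2) * ((1 - ‖q‖ ^ 4)⁻¹) ^ n := by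
        refine Finset.sum_le_sum fun b _ => hF n b (by have := b.isLt; omega)
    _ = ((n / 2 + 1 : ℕ) : ℝ) * (‖q‖ ^ (n ^ 2) * ((1 - ‖q‖ ^ 4)⁻¹) ^ n) := by
        rw [Finset.sum_const, Finset.card_univ, Fintype.card_fin, nsmul_eq_mul]
    _ ≤ ((n : ℝ) + 1) * (‖q‖ ^ (n ^ 2) * ((1 - ‖q‖ ^ 4)⁻¹) ^ n) := by
        apply mul_le_mul_of_nonneg_right _ (by positivity)
        have : ((n / 2 + 1 : ℕ) : ℝ) ≤ ((n + 1 : ℕ) : ℝ) := Nat.cast_le.2 (by omega)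
        push_cast at this ⊢
        linarith

lemma expL (n b : ℕ) (hb : 2 * b ≤ n) :
    (3 * ((n - 2 * b : ℕ) : ℤ) ^ 2 + 4 * (b : ℤ) ^ 2 + 4 * ((n - 2 * b : ℕ) : ℤ) * (b : ℤ)
      - 2 * ((n - 2 * b : ℕ) : ℤ)).toNat
      = n ^ 2 + 2 * ((n - 2 * b) * (n - 2 * b - 1)) := by
  obtain ⟨a, rfl⟩ : ∃ a, n = a + 2 * b := ⟨n - 2 * b, by omega⟩
  simp only [Nat.add_sub_cancel]
  cases a with
  | zero =>
    rw [show 3 * ((0:ℕ) : ℤ) ^ 2 + 4 * (b : ℤ) ^ 2 + 4 * ((0:ℕ) : ℤ) * (b : ℤ)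
        - 2 * ((0:ℕ) : ℤ) = (((0 + 2 * b) ^ 2 + 2 * (0 * (0 - 1)) : ℕ) : ℤ) by push_cast; ring]
    rw [Int.toNat_natCast]
  | succ k =>
    rw [show 3 * ((k+1 : ℕ) : ℤ) ^ 2 + 4 * (b : ℤ) ^ 2 + 4 * ((k+1 : ℕ) : ℤ) * (b : ℤ)
        - 2 * ((k+1 : ℕ) : ℤ)
        = (((k + 1 + 2 * b) ^ 2 + 2 * ((k + 1) * (k + 1 - 1)) : ℕ) : ℤ) by
      push_cast [Nat.add_sub_cancel]; ring]
    rw [Int.toNat_natCast]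

lemma expR (n b : ℕ) (hb : 2 * b ≤ n) :
    (n - 2 * b) ^ 2 + 4 * (n - 2 * b) * b + 4 * b ^ 2 + 4 * b = n ^ 2 + 4 * b := by
  obtain ⟨a, rfl⟩ : ∃ a, n = a + 2 * b := ⟨n - 2 * b, by omega⟩
  simp only [Nat.add_sub_cancel]
  ring

end NahmEx8

/-- Example 8 with B = (-1/2, 0)ᵀ (after scaling q → q⁴): the two double-sum
Nahm-type series are equal. -/
theorem example8_double_sums_eq (q : ℂ) (hq : ‖q‖ < 1) :
    ∑' p : ℕ × ℕ,
      q ^ ((3 * (p.1 : ℤ) ^ 2 + 4 * (p.2 : ℤ) ^ 2 + 4 * p.1 * p.2 - 2 * p.1).toNat) /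
        ((∏ k ∈ Finset.range p.1, (1 - q ^ (4 * (k + 1)))) *
          ∏ k ∈ Finset.range p.2, (1 - q ^ (4 * (k + 1)))) =
    ∑' p : ℕ × ℕ,
      q ^ (p.1 ^ 2 + 4 * p.1 * p.2 + 4 * p.2 ^ 2 + 4 * p.2) /
        ((∏ k ∈ Finset.range p.1, (1 - q ^ (4 * (k + 1)))) *
          ∏ k ∈ Finset.range p.2, (1 - q ^ (8 * (k + 1)))) := by
  show ∑' p : ℕ × ℕ,
      q ^ ((3 * (p.1 : ℤ) ^ 2 + 4 * (p.2 : ℤ) ^ 2 + 4 * p.1 * p.2 - 2 * p.1).toNat) /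
        (Pp q p.1 * Pp q p.2)
    = ∑' p : ℕ × ℕ,
      q ^ (p.1 ^ 2 + 4 * p.1 * p.2 + 4 * p.2 ^ 2 + 4 * p.2) / (Pp q p.1 * Qq q p.2)
  set FL : ℕ × ℕ → ℂ := fun p =>
    q ^ ((3 * (p.1 : ℤ) ^ 2 + 4 * (p.2 : ℤ) ^ 2 + 4 * p.1 * p.2 - 2 * p.1).toNat) /
      (Pp q p.1 * Pp q p.2) with hFL
  set FR : ℕ × ℕ → ℂ := fun p =>
    q ^ (p.1 ^ 2 + 4 * p.1 * p.2 + 4 * p.2 ^ 2 + 4 * p.2) / (Pp q p.1 * Qq q p.2) with hFR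
  have hFLb : ∀ n b : ℕ, 2 * b ≤ n →
      ‖FL (n - 2 * b, b)‖ ≤ ‖q‖ ^ (n ^ 2) * ((1 - ‖q‖ ^ 4)⁻¹) ^ n := by
    intro n b hb
    rw [hFL]
    refine div_norm_bound hq _ n (n - 2 * b) b ?_ (by omega)
      (Pp_norm_lb hq _) (Pp_norm_lb hq _)
    rw [expL n b hb]
    omega
  have hFRb : ∀ n b : ℕ, 2 * b ≤ n →
      ‖FR (n - 2 * b, b)‖ ≤ ‖q‖ ^ (n ^ 2) * ((1 - ‖q‖ ^ 4)⁻¹) ^ n := by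
    intro n b hb
    rw [hFR]
    refine div_norm_bound hq _ n (n - 2 * b) b ?_ (by omega)
      (Pp_norm_lb hq _) (Qq_norm_lb hq _)
    rw [expR n b hb]
    omega
  have hsumL := sigma_summable hq FL hFLb
  have hsumR := sigma_summable hq FR hFRb
  calc ∑' p : ℕ × ℕ, FL p
      = ∑' x : (Σ n : ℕ, Fin (n / 2 + 1)), FL (x.1 - 2 * (x.2 : ℕ), (x.2 : ℕ)) :=
        (sigEquiv.tsum_eq FL).symm
    _ = ∑' (n : ℕ), ∑' (b : Fin (n / 2 + 1)), FL (n - 2 * (b : ℕ), (b : ℕ)) :=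
        hsumL.tsum_sigma
    _ = ∑' (n : ℕ), ∑ b ∈ Finset.range (n / 2 + 1), FL (n - 2 * b, b) :=
        tsum_congr fun n => by
          rw [tsum_fintype (fun b : Fin (n / 2 + 1) => FL (n - 2 * (b : ℕ), (b : ℕ)))]
          exact Fin.sum_univ_eq_sum_range (fun b => FL (n - 2 * b, b)) (n / 2 + 1)
    _ = ∑' (n : ℕ), q ^ (n ^ 2) * (∑ b ∈ Finset.range (n / 2 + 1),
          q ^ (2 * ((n - 2 * b) * (n - 2 * b - 1))) / (Pp q (n - 2 * b) * Pp q b)) :=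
        tsum_congr fun n => by
          rw [Finset.mul_sum]
          refine Finset.sum_congr rfl fun b hb => ?_
          have hb' : 2 * b ≤ n := by have := Finset.mem_range.1 hb; omega
          rw [hFL]
          show q ^ ((3 * ((n - 2*b : ℕ) : ℤ) ^ 2 + 4 * (b : ℤ) ^ 2
              + 4 * ((n - 2*b : ℕ) : ℤ) * (b : ℤ) - 2 * ((n - 2*b : ℕ) : ℤ)).toNat) /
            (Pp q (n - 2*b) * Pp q b)
            = q ^ (n ^ 2) * (q ^ (2 * ((n - 2*b) * (n - 2*b - 1))) / (Pp q (n - 2*b) * Pp q b))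
          rw [expL n b hb', pow_add, mul_div_assoc]
    _ = ∑' (n : ℕ), q ^ (n ^ 2) * (∑ d ∈ Finset.range (n / 2 + 1),
          q ^ (4 * d) / (Pp q (n - 2 * d) * Qq q d)) :=
        tsum_congr fun n => by rw [MAIN hq n]
    _ = ∑' (n : ℕ), ∑ b ∈ Finset.range (n / 2 + 1), FR (n - 2 * b, b) :=
        tsum_congr fun n => by
          rw [Finset.mul_sum]
          refine Finset.sum_congr rfl fun b hb => ?_
          have hb' : 2 * b ≤ n := by have := Finset.mem_range.1 hb; omega
          rw [hFR]
          show q ^ (n ^ 2) * (q ^ (4 * b) / (Pp q (n - 2*b) * Qq q b))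
            = q ^ ((n - 2*b) ^ 2 + 4 * (n - 2*b) * b + 4 * b ^ 2 + 4 * b) /
              (Pp q (n - 2*b) * Qq q b)
          rw [expR n b hb', pow_add, mul_div_assoc]
    _ = ∑' (n : ℕ), ∑' (b : Fin (n / 2 + 1)), FR (n - 2 * (b : ℕ), (b : ℕ)) :=
        tsum_congr fun n => by
          rw [tsum_fintype (fun b : Fin (n / 2 + 1) => FR (n - 2 * (b : ℕ), (b : ℕ)))]
          exact (Fin.sum_univ_eq_sum_range (fun b => FR (n - 2 * b, b)) (n / 2 + 1)).symm
    _ = ∑' x : (Σ n : ℕ, Fin (n / 2 + 1)), FR (x.1 - 2 * (x.2 : ℕ), (x.2 : ℕ)) :=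
        (hsumR.tsum_sigma).symm
    _ = ∑' p : ℕ × ℕ, FR p := sigEquiv.tsum_eq FR
end

section
/- For |q|<1 and any rational (or real) $\alpha > 1/2$ and $\nu$, $\sum_{i,j\geq 0} \frac{q^{\frac{\alpha}{2}i^2+(1-\alpha)ij+\frac{\alpha}{2}j^2+\alpha\nu i-\alpha\nu j}}{(q;q)_i (q;q)_j} = \frac{(-q^{\frac{\alpha}{2}+\alpha\nu};q^{\alpha})_\infty (-q^{\frac{\alpha}{2}-\alpha\nu};q^{\alpha})_\infty (q^{\alpha};q^{\alpha})_\infty}{(q;q)_\infty}$, where $q^x := e^{x \log q}$ for $0<q<1$. -/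
open Real Filter Topology Finset

namespace Zagier

variable {p : ℝ}

/-- finite q-Pochhammer `(p;p)_n` -/
noncomputable def P (p : ℝ) (n : ℕ) : ℝ := ∏ k ∈ Finset.range n, (1 - p ^ (k + 1))

lemma P_pos (hp0 : 0 < p) (hp1 : p < 1) (n : ℕ) : 0 < P p n := by
  apply Finset.prod_pos
  intro k _
  have : p ^ (k + 1) < 1 := pow_lt_one₀ hp0.le hp1 (Nat.succ_ne_zero k)
  linarith

lemma P_succ (n : ℕ) : P p (n + 1) = P p n * (1 - p ^ (n + 1)) := Finset.prod_range_succ _ n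

lemma P_le_one (hp0 : 0 < p) (hp1 : p < 1) (n : ℕ) : P p n ≤ 1 := by
  apply Finset.prod_le_one
  · intro k _
    have : p ^ (k + 1) < 1 := pow_lt_one₀ hp0.le hp1 (Nat.succ_ne_zero k)
    linarith
  · intro k _
    nlinarith [pow_pos hp0 (k + 1)]

lemma P_anti (hp0 : 0 < p) (hp1 : p < 1) {n m : ℕ} (h : n ≤ m) : P p m ≤ P p n := by
  obtain ⟨d, rfl⟩ := Nat.exists_eq_add_of_le h
  induction d with
  | zero => simp
  | succ d ih =>
    rw [← Nat.add_assoc, P_succ]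
    have h1 := P_pos hp0 hp1 (n + d)
    have h2 : p ^ (n + d + 1) < 1 := pow_lt_one₀ hp0.le hp1 (Nat.succ_ne_zero _)
    have h3 : 0 < p ^ (n + d + 1) := pow_pos hp0 _
    have h4 := ih (Nat.le_add_right n d)
    nlinarith

/-- general positive infinite product tool -/
lemma hasProd_of_pos {f : ℕ → ℝ} (hf : ∀ k, 0 < f k)
    (h : Summable fun k => Real.log (f k)) :
    HasProd f (Real.exp (∑' k, Real.log (f k))) := by
  have h2 := h.hasSum.rexp
  have hfe : (rexp ∘ fun k => Real.log (f k)) = f := funext fun k => Real.exp_log (hf k)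
  rwa [hfe] at h2

lemma tprod_pos {f : ℕ → ℝ} (hf : ∀ k, 0 < f k)
    (h : Summable fun k => Real.log (f k)) : 0 < ∏' k, f k := by
  rw [(hasProd_of_pos hf h).tprod_eq]
  exact Real.exp_pos _

lemma summable_log_one_sub (hp0 : 0 < p) (hp1 : p < 1) :
    Summable fun k : ℕ => Real.log (1 - p ^ (k + 1)) := by
  apply Summable.of_norm
  have hsum : Summable fun k : ℕ => (1 - p)⁻¹ * p ^ (k + 1) := by
    apply Summable.mul_left
    exact (summable_geometric_of_lt_one hp0.le hp1).comp_injective (add_left_injective 1)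
  refine hsum.of_nonneg_of_le (fun k => norm_nonneg _) fun k => ?_
  have hk1 : p ^ (k + 1) < 1 := pow_lt_one₀ hp0.le hp1 (Nat.succ_ne_zero k)
  have hk0 : 0 < p ^ (k + 1) := pow_pos hp0 _
  have hlog : Real.log (1 - p ^ (k + 1)) ≤ 0 := Real.log_nonpos (by linarith) (by linarith)
  rw [Real.norm_eq_abs, abs_of_nonpos hlog]
  -- -log(1-x) = log((1-x)⁻¹) ≤ (1-x)⁻¹ - 1 = x/(1-x) ≤ x/(1-p)
  rw [← Real.log_inv]
  have h1 : (0:ℝ) < 1 - p ^ (k + 1) := by linarith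
  have h2 : Real.log (1 - p ^ (k + 1))⁻¹ ≤ (1 - p ^ (k + 1))⁻¹ - 1 :=
    Real.log_le_sub_one_of_pos (by positivity)
  have h3 : (1 - p ^ (k + 1))⁻¹ - 1 = p ^ (k + 1) / (1 - p ^ (k + 1)) := by
    field_simp
    ring
  have hple : p ^ (k + 1) ≤ p := by
    have : p ^ (k + 1) ≤ p ^ 1 := pow_le_pow_of_le_one hp0.le hp1.le (by omega)
    simpa using this
  have h4 : p ^ (k + 1) / (1 - p ^ (k + 1)) ≤ p ^ (k + 1) / (1 - p) := by
    gcongr <;> linarith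
  have h5 : p ^ (k + 1) / (1 - p) = (1 - p)⁻¹ * p ^ (k + 1) := by ring
  rw [div_eq_inv_mul] at h3
  rw [h3] at h2
  rw [div_eq_inv_mul] at h4
  exact h2.trans (h4.trans h5.le)

/-- the infinite q-Pochhammer -/
noncomputable def Pinf (p : ℝ) : ℝ := ∏' k : ℕ, (1 - p ^ (k + 1))

lemma one_sub_pow_pos (hp0 : 0 < p) (hp1 : p < 1) (k : ℕ) : 0 < 1 - p ^ (k + 1) := by
  have : p ^ (k + 1) < 1 := pow_lt_one₀ hp0.le hp1 (Nat.succ_ne_zero k)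
  linarith

lemma Pinf_pos (hp0 : 0 < p) (hp1 : p < 1) : 0 < Pinf p :=
  tprod_pos (one_sub_pow_pos hp0 hp1) (summable_log_one_sub hp0 hp1)

lemma tendsto_P (hp0 : 0 < p) (hp1 : p < 1) :
    Tendsto (fun n => P p n) atTop (𝓝 (Pinf p)) := by
  have h := hasProd_of_pos (one_sub_pow_pos hp0 hp1) (summable_log_one_sub hp0 hp1)
  have h3 : Pinf p = rexp (∑' k, Real.log (1 - p ^ (k + 1))) := h.tprod_eq
  rw [h3]
  exact h.tendsto_prod_nat

lemma Pinf_le_P (hp0 : 0 < p) (hp1 : p < 1) (n : ℕ) : Pinf p ≤ P p n := by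
  apply le_of_tendsto (tendsto_P hp0 hp1)
  filter_upwards [eventually_ge_atTop n] with m hm
  exact P_anti hp0 hp1 hm

/-! ### Durfee rectangle identity -/

noncomputable def u (p : ℝ) (n m : ℕ) : ℝ := p ^ (m * (m + n)) / (P p m * P p (m + n))

lemma m_le_mul (n m : ℕ) : m ≤ m * (m + n) := by
  cases m with
  | zero => simp
  | succ k => exact Nat.le_mul_of_pos_right _ (by omega)

lemma u_nonneg (hp0 : 0 < p) (hp1 : p < 1) (n m : ℕ) : 0 ≤ u p n m := by
  have h1 := P_pos hp0 hp1 m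
  have h2 := P_pos hp0 hp1 (m + n)
  have h3 := pow_pos hp0 (m * (m + n))
  unfold u
  positivity

lemma u_le (hp0 : 0 < p) (hp1 : p < 1) (n m : ℕ) :
    u p n m ≤ (Pinf p)⁻¹ * (Pinf p)⁻¹ * p ^ m := by
  have hPi := Pinf_pos hp0 hp1
  have h1 := P_pos hp0 hp1 m
  have h2 := P_pos hp0 hp1 (m + n)
  have hb1 := Pinf_le_P hp0 hp1 m
  have hb2 := Pinf_le_P hp0 hp1 (m + n)
  have hpow : p ^ (m * (m + n)) ≤ p ^ m :=
    pow_le_pow_of_le_one hp0.le hp1.le (m_le_mul n m)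
  have hden : Pinf p * Pinf p ≤ P p m * P p (m + n) := by nlinarith
  calc u p n m ≤ p ^ m / (Pinf p * Pinf p) := by
        unfold u
        exact div_le_div₀ (by positivity) hpow (by positivity) hden
    _ = (Pinf p)⁻¹ * (Pinf p)⁻¹ * p ^ m := by
        rw [div_eq_mul_inv, mul_inv]; ring

lemma summable_geom_pow (hp0 : 0 < p) (hp1 : p < 1) (c : ℝ) :
    Summable (fun m : ℕ => c * p ^ m) :=
  (summable_geometric_of_lt_one hp0.le hp1).mul_left c

lemma summable_u (hp0 : 0 < p) (hp1 : p < 1) (n : ℕ) : Summable (u p n) := by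
  refine Summable.of_nonneg_of_le (u_nonneg hp0 hp1 n) (u_le hp0 hp1 n) ?_
  exact summable_geom_pow hp0 hp1 _

noncomputable def S (p : ℝ) (n : ℕ) : ℝ := ∑' m, u p n m

noncomputable def bb (p : ℝ) (n m : ℕ) : ℝ :=
  p ^ (m * (m + n)) * (1 - p ^ m) / (P p m * P p (m + n))

lemma bb_zero (n : ℕ) : bb p n 0 = 0 := by simp [bb]

lemma bb_nonneg (hp0 : 0 < p) (hp1 : p < 1) (n m : ℕ) : 0 ≤ bb p n m := by
  have h1 := P_pos hp0 hp1 m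
  have h2 := P_pos hp0 hp1 (m + n)
  have h3 : p ^ m ≤ 1 := pow_le_one₀ hp0.le hp1.le
  have h4 : (0:ℝ) ≤ p ^ (m * (m + n)) := by positivity
  have h5 : 0 ≤ 1 - p ^ m := by linarith
  unfold bb
  positivity

lemma bb_le (hp0 : 0 < p) (hp1 : p < 1) (n m : ℕ) :
    bb p n m ≤ (Pinf p)⁻¹ * (Pinf p)⁻¹ * p ^ m := by
  have h3 : 0 ≤ 1 - p ^ m := by
    have := pow_le_one₀ hp0.le hp1.le (n := m); linarith
  have h4 : 1 - p ^ m ≤ 1 := by have := pow_pos hp0 m; linarith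
  have h1 := P_pos hp0 hp1 m
  have h2 := P_pos hp0 hp1 (m + n)
  calc bb p n m ≤ p ^ (m * (m + n)) / (P p m * P p (m + n)) := by
        unfold bb
        apply div_le_div₀ (by positivity) ?_ (by positivity) le_rfl
        nlinarith [pow_pos hp0 (m * (m + n))]
    _ = u p n m := rfl
    _ ≤ _ := u_le hp0 hp1 n m

lemma tendsto_bb (hp0 : 0 < p) (hp1 : p < 1) (n : ℕ) :
    Tendsto (fun m => bb p n m) atTop (𝓝 0) := by
  apply squeeze_zero (bb_nonneg hp0 hp1 n) (bb_le hp0 hp1 n)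
  have h := tendsto_pow_atTop_nhds_zero_of_lt_one hp0.le hp1
  simpa using h.const_mul ((Pinf p)⁻¹ * (Pinf p)⁻¹)

lemma key_telescope (hp0 : 0 < p) (hp1 : p < 1) (n m : ℕ) :
    u p n m - u p (n + 1) m = bb p n m - bb p n (m + 1) := by
  have h1 := P_pos hp0 hp1 m
  have h2 := P_pos hp0 hp1 (m + n)
  have hs1 : P p (m + n + 1) = P p (m + n) * (1 - p ^ (m + n + 1)) := P_succ (m + n)
  have hs2 : P p (m + 1) = P p m * (1 - p ^ (m + 1)) := P_succ m
  have e0 : m + (n + 1) = m + n + 1 := by ring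
  have e3 : m + 1 + n = m + n + 1 := by ring
  have e1 : m * (m + n + 1) = m * (m + n) + m := by ring
  have e2 : (m + 1) * (m + n + 1) = m * (m + n) + m + (m + n + 1) := by ring
  unfold u bb
  rw [e0, e3, e1, e2, pow_add, pow_add, hs1, hs2]
  have hq1 : (1 : ℝ) - p ^ (m + n + 1) ≠ 0 := (one_sub_pow_pos hp0 hp1 (m + n)).ne'
  have hq2 : (1 : ℝ) - p ^ (m + 1) ≠ 0 := (one_sub_pow_pos hp0 hp1 m).ne'
  field_simp
  ring
lemma summable_bb (hp0 : 0 < p) (hp1 : p < 1) (n : ℕ) : Summable (bb p n) := by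
  refine Summable.of_nonneg_of_le (bb_nonneg hp0 hp1 n) (bb_le hp0 hp1 n) ?_
  exact summable_geom_pow hp0 hp1 _

lemma S_succ (hp0 : 0 < p) (hp1 : p < 1) (n : ℕ) : S p n = S p (n + 1) := by
  have hu1 := summable_u hp0 hp1 n
  have hu2 := summable_u hp0 hp1 (n + 1)
  have hdiff : Summable (fun m => u p n m - u p (n + 1) m) := hu1.sub hu2
  have hts : ∑' m, (u p n m - u p (n + 1) m) = S p n - S p (n + 1) :=
    Summable.tsum_sub hu1 hu2
  have hzero : ∑' m, (u p n m - u p (n + 1) m) = 0 := by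
    have h1 : Tendsto (fun M => ∑ m ∈ Finset.range M, (u p n m - u p (n + 1) m)) atTop
        (𝓝 (∑' m, (u p n m - u p (n + 1) m))) := hdiff.hasSum.tendsto_sum_nat
    have h2 : Tendsto (fun M => ∑ m ∈ Finset.range M, (u p n m - u p (n + 1) m)) atTop
        (𝓝 0) := by
      have heq : ∀ M, ∑ m ∈ Finset.range M, (u p n m - u p (n + 1) m)
          = bb p n 0 - bb p n M := by
        intro M
        rw [← Finset.sum_range_sub' (fun m => bb p n m) M]
        exact Finset.sum_congr rfl fun m _ => key_telescope hp0 hp1 n m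
      simp only [heq, bb_zero, zero_sub]
      simpa using (tendsto_bb hp0 hp1 n).neg
    exact tendsto_nhds_unique h1 h2
  have := hts.symm.trans hzero
  linarith

lemma S_const (hp0 : 0 < p) (hp1 : p < 1) (n : ℕ) : S p n = S p 0 := by
  induction n with
  | zero => rfl
  | succ k ih => rw [← S_succ hp0 hp1 k, ih]

lemma tendsto_S (hp0 : 0 < p) (hp1 : p < 1) :
    Tendsto (fun n => S p n) atTop (𝓝 (Pinf p)⁻¹) := by
  have hPi := Pinf_pos hp0 hp1
  -- S n = (P p n)⁻¹ + tail n
  have hsplit : ∀ n, S p n = (P p n)⁻¹ + ∑' m, u p n (m + 1) := by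
    intro n
    rw [S, Summable.tsum_eq_zero_add (summable_u hp0 hp1 n)]
    congr 1
    simp [u, P]
  have h1 : Tendsto (fun n => (P p n)⁻¹) atTop (𝓝 (Pinf p)⁻¹) :=
    (tendsto_P hp0 hp1).inv₀ hPi.ne'
  have h2 : Tendsto (fun n => ∑' m, u p n (m + 1)) atTop (𝓝 0) := by
    have K : ℝ := 0
    apply squeeze_zero (fun n => tsum_nonneg fun m => u_nonneg hp0 hp1 n (m + 1))
      (g := fun n => ((Pinf p)⁻¹ * (Pinf p)⁻¹ * ∑' m : ℕ, p ^ (m + 1)) * p ^ n)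
    · intro n
      have hsum1 : Summable (fun m => u p n (m + 1)) :=
        (summable_u hp0 hp1 n).comp_injective (add_left_injective 1)
      have hsum2 : Summable (fun m : ℕ => (Pinf p)⁻¹ * (Pinf p)⁻¹ * p ^ n * p ^ (m + 1)) := by
        apply Summable.mul_left
        exact (summable_geometric_of_lt_one hp0.le hp1).comp_injective (add_left_injective 1)
      have hle : ∀ m, u p n (m + 1) ≤ (Pinf p)⁻¹ * (Pinf p)⁻¹ * p ^ n * p ^ (m + 1) := by
        intro m
        have h1' := P_pos hp0 hp1 (m + 1)
        have h2' := P_pos hp0 hp1 (m + 1 + n)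
        have hb1 := Pinf_le_P hp0 hp1 (m + 1)
        have hb2 := Pinf_le_P hp0 hp1 (m + 1 + n)
        have hexp : n + (m + 1) ≤ (m + 1) * (m + 1 + n) := by
          calc n + (m + 1) = 1 * (m + 1 + n) := by ring
          _ ≤ (m + 1) * (m + 1 + n) := Nat.mul_le_mul_right _ (by omega)
        have hpow : p ^ ((m + 1) * (m + 1 + n)) ≤ p ^ (n + (m + 1)) :=
          pow_le_pow_of_le_one hp0.le hp1.le hexp
        have hden : Pinf p * Pinf p ≤ P p (m + 1) * P p (m + 1 + n) := by nlinarith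
        calc u p n (m + 1) ≤ p ^ (n + (m + 1)) / (Pinf p * Pinf p) := by
              unfold u
              exact div_le_div₀ (by positivity) hpow (by positivity) hden
          _ = (Pinf p)⁻¹ * (Pinf p)⁻¹ * p ^ n * p ^ (m + 1) := by
              rw [pow_add, div_eq_mul_inv, mul_inv]; ring
      calc ∑' m, u p n (m + 1) ≤ ∑' m : ℕ, (Pinf p)⁻¹ * (Pinf p)⁻¹ * p ^ n * p ^ (m + 1) :=
            Summable.tsum_le_tsum hle hsum1 hsum2
        _ = (Pinf p)⁻¹ * (Pinf p)⁻¹ * p ^ n * ∑' m : ℕ, p ^ (m + 1) := tsum_mul_left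
        _ = ((Pinf p)⁻¹ * (Pinf p)⁻¹ * ∑' m : ℕ, p ^ (m + 1)) * p ^ n := by ring
    · have h := tendsto_pow_atTop_nhds_zero_of_lt_one hp0.le hp1
      simpa using h.const_mul ((Pinf p)⁻¹ * (Pinf p)⁻¹ * ∑' m : ℕ, p ^ (m + 1))
  have := h1.add h2
  simp only [add_zero] at this
  apply this.congr
  intro n
  exact (hsplit n).symm

lemma S_eq (hp0 : 0 < p) (hp1 : p < 1) (n : ℕ) : S p n = (Pinf p)⁻¹ := by
  have h1 : Tendsto (fun k : ℕ => S p k) atTop (𝓝 (S p 0)) := by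
    have : (fun k : ℕ => S p k) = fun _ => S p 0 := funext fun k => S_const hp0 hp1 k
    rw [this]; exact tendsto_const_nhds
  have := tendsto_nhds_unique h1 (tendsto_S hp0 hp1)
  rw [S_const hp0 hp1 n, this]
/-! ### Euler's identity ∑ xⁱ p^(i(i-1)/2) / (p;p)_i = ∏ (1 + x pᵏ) -/

noncomputable def T (p y : ℝ) (i : ℕ) : ℝ := ∏ t ∈ Finset.range i, (y * p ^ t)

noncomputable def f (p y : ℝ) : ℝ := ∑' i, T p y i / P p i

lemma T_succ (y : ℝ) (i : ℕ) : T p y (i + 1) = T p y i * (y * p ^ i) :=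
  Finset.prod_range_succ _ i

lemma T_succ' (y : ℝ) (i : ℕ) : T p y (i + 1) = y * T p (y * p) i := by
  rw [T, Finset.prod_range_succ']
  simp only [pow_zero, mul_one]
  rw [T, mul_comm]
  congr 1
  apply Finset.prod_congr rfl
  intro t _
  rw [pow_succ]
  ring

lemma T_nonneg (hp0 : 0 < p) {y : ℝ} (hy : 0 ≤ y) (i : ℕ) : 0 ≤ T p y i :=
  Finset.prod_nonneg fun t _ => by positivity

lemma T_shift (y : ℝ) (i : ℕ) : T p (y * p) i = T p y i * p ^ i := by
  induction i with
  | zero => simp [T]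
  | succ k ih => rw [T_succ, T_succ, ih, pow_succ]; ring

lemma summable_T_div (hp0 : 0 < p) (hp1 : p < 1) {y : ℝ} (hy : 0 ≤ y) :
    Summable (fun i => T p y i / P p i) := by
  apply summable_of_ratio_norm_eventually_le (r := 1 / 2) (by norm_num)
  have hev : ∀ᶠ i : ℕ in atTop, y * p ^ i ≤ (1 - p) / 2 := by
    have h := (tendsto_pow_atTop_nhds_zero_of_lt_one hp0.le hp1).const_mul y
    rw [mul_zero] at h
    exact h.eventually_le_const (by linarith)
  filter_upwards [hev] with i hi
  have hP := P_pos hp0 hp1 i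
  have hP1 := P_pos hp0 hp1 (i + 1)
  have hT := T_nonneg hp0 hy i
  have hq : (0:ℝ) < 1 - p ^ (i + 1) := one_sub_pow_pos hp0 hp1 i
  rw [Real.norm_eq_abs, Real.norm_eq_abs,
    abs_of_nonneg (div_nonneg (T_nonneg hp0 hy (i + 1)) hP1.le),
    abs_of_nonneg (div_nonneg (T_nonneg hp0 hy i) hP.le)]
  rw [T_succ, P_succ]
  have hple : 1 - p ≤ 1 - p ^ (i + 1) := by
    have : p ^ (i + 1) ≤ p := by
      have := pow_le_pow_of_le_one hp0.le hp1.le (show 1 ≤ i + 1 by omega)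
      simpa using this
    linarith
  have hyp : y * p ^ i ≤ (1 - p ^ (i + 1)) / 2 := le_trans hi (by linarith)
  calc T p y i * (y * p ^ i) / (P p i * (1 - p ^ (i + 1)))
      ≤ T p y i * ((1 - p ^ (i + 1)) / 2) / (P p i * (1 - p ^ (i + 1))) := by
        apply div_le_div_of_nonneg_right ?_ (by positivity)
        exact mul_le_mul_of_nonneg_left hyp hT
    _ = 1 / 2 * (T p y i / P p i) := by field_simp
  
lemma summable_T (hp0 : 0 < p) (hp1 : p < 1) {y : ℝ} (hy : 0 ≤ y) :
    Summable (fun i => T p y i) := by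
  refine (summable_T_div hp0 hp1 hy).of_nonneg_of_le (fun i => T_nonneg hp0 hy i) fun i => ?_
  have hP := P_pos hp0 hp1 i
  have hP1 := P_le_one hp0 hp1 i
  have hT := T_nonneg hp0 hy i
  rw [le_div_iff₀ hP]
  nlinarith

lemma f_eq (hp0 : 0 < p) (hp1 : p < 1) {y : ℝ} (hy : 0 ≤ y) :
    f p y = (1 + y) * f p (y * p) := by
  have hyp : (0:ℝ) ≤ y * p := by positivity
  have h1 := summable_T_div hp0 hp1 hy
  have h2 := summable_T_div hp0 hp1 hyp
  have hg : ∀ i, T p y i / P p i - T p (y * p) i / P p i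
      = (fun i => T p y i * (1 - p ^ i) / P p i) i := by
    intro i
    rw [T_shift]
    ring
  have hgsum : Summable (fun i => T p y i * (1 - p ^ i) / P p i) := by
    have := h1.sub h2
    refine this.congr fun i => hg i
  have key : ∑' i, T p y i * (1 - p ^ i) / P p i = y * f p (y * p) := by
    rw [Summable.tsum_eq_zero_add hgsum]
    simp only [pow_zero, sub_self, mul_zero, zero_div, zero_add]
    have : ∀ i : ℕ, T p y (i + 1) * (1 - p ^ (i + 1)) / P p (i + 1)
        = y * (T p (y * p) i / P p i) := by
      intro i
      rw [T_succ', P_succ]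
      have hP := (P_pos hp0 hp1 i).ne'
      have hq := (one_sub_pow_pos hp0 hp1 i).ne'
      field_simp
    rw [tsum_congr this, tsum_mul_left]
    rfl
  have hsub : ∑' i, (T p y i / P p i - T p (y * p) i / P p i) = f p y - f p (y * p) :=
    Summable.tsum_sub h1 h2
  have : f p y - f p (y * p) = y * f p (y * p) := by
    rw [← hsub, tsum_congr hg, key]
  linarith

lemma f_iter (hp0 : 0 < p) (hp1 : p < 1) {x : ℝ} (hx : 0 ≤ x) (N : ℕ) :
    f p x = (∏ k ∈ Finset.range N, (1 + x * p ^ k)) * f p (x * p ^ N) := by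
  induction N with
  | zero => simp
  | succ k ih =>
    rw [ih, Finset.prod_range_succ]
    have hxk : (0:ℝ) ≤ x * p ^ k := by positivity
    rw [f_eq hp0 hp1 hxk, pow_succ,
      show x * (p ^ k * p) = x * p ^ k * p from (mul_assoc x _ _).symm]
    ring

lemma f_sub_one (hp0 : 0 < p) (hp1 : p < 1) {x y : ℝ} (hx : 0 ≤ x) (hy0 : 0 ≤ y)
    (hyx : y ≤ x) :
    0 ≤ f p y - 1 ∧ f p y - 1 ≤ y * ((∑' i, T p x i) * (Pinf p)⁻¹) := by
  have hPi := Pinf_pos hp0 hp1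
  have h1 := summable_T_div hp0 hp1 hy0
  have hsplit : f p y = 1 + ∑' i, T p y (i + 1) / P p (i + 1) := by
    rw [f, Summable.tsum_eq_zero_add h1]
    simp [T, P]
  have hterm : ∀ i, T p y (i + 1) / P p (i + 1) ≤ y * (T p x i * (Pinf p)⁻¹) := by
    intro i
    have hTle : T p y (i + 1) ≤ y * T p x i := by
      rw [T_succ']
      apply mul_le_mul_of_nonneg_left ?_ hy0
      apply Finset.prod_le_prod
      · intro t _; positivity
      · intro t _
        have hyy : y * p ≤ x := by nlinarith
        exact mul_le_mul_of_nonneg_right hyy (pow_nonneg hp0.le t)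
    have hP := P_pos hp0 hp1 (i + 1)
    have hPl := Pinf_le_P hp0 hp1 (i + 1)
    have hTn : 0 ≤ T p y (i + 1) := T_nonneg hp0 hy0 _
    calc T p y (i + 1) / P p (i + 1) ≤ (y * T p x i) / Pinf p :=
          div_le_div₀ (mul_nonneg hy0 (T_nonneg hp0 hx i)) hTle hPi hPl
      _ = y * (T p x i * (Pinf p)⁻¹) := by rw [div_eq_mul_inv]; ring
  have htail_nonneg : 0 ≤ ∑' i, T p y (i + 1) / P p (i + 1) :=
    tsum_nonneg fun i => div_nonneg (T_nonneg hp0 hy0 _) (P_pos hp0 hp1 _).le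
  have hsum1 : Summable (fun i => T p y (i + 1) / P p (i + 1)) :=
    h1.comp_injective (add_left_injective 1)
  have hsum2 : Summable (fun i => y * (T p x i * (Pinf p)⁻¹)) :=
    (((summable_T hp0 hp1 hx).mul_right _).mul_left _)
  constructor
  · rw [hsplit]; linarith
  · rw [hsplit]
    have := Summable.tsum_le_tsum hterm hsum1 hsum2
    rw [tsum_mul_left, tsum_mul_right] at this
    linarith

lemma summable_log_one_add (hp0 : 0 < p) (hp1 : p < 1) {x : ℝ} (hx : 0 ≤ x) :
    Summable fun k : ℕ => Real.log (1 + x * p ^ k) := by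
  apply Summable.of_norm
  refine ((summable_geometric_of_lt_one hp0.le hp1).mul_left x).of_nonneg_of_le
    (fun k => norm_nonneg _) fun k => ?_
  have h0 : (0:ℝ) ≤ x * p ^ k := by positivity
  have hlog : 0 ≤ Real.log (1 + x * p ^ k) := Real.log_nonneg (by linarith)
  rw [Real.norm_eq_abs, abs_of_nonneg hlog]
  have := Real.log_le_sub_one_of_pos (show (0:ℝ) < 1 + x * p ^ k by linarith)
  linarith

lemma one_add_pos (hp0 : 0 < p) {x : ℝ} (hx : 0 ≤ x) (k : ℕ) : 0 < 1 + x * p ^ k := by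
  have : (0:ℝ) ≤ x * p ^ k := by positivity
  linarith

lemma euler_id (hp0 : 0 < p) (hp1 : p < 1) {x : ℝ} (hx : 0 ≤ x) :
    f p x = ∏' k : ℕ, (1 + x * p ^ k) := by
  have hprod := hasProd_of_pos (one_add_pos hp0 hx) (summable_log_one_add hp0 hp1 hx)
  have htp : (∏' k : ℕ, (1 + x * p ^ k))
      = rexp (∑' k, Real.log (1 + x * p ^ k)) := hprod.tprod_eq
  have hPP : Tendsto (fun N => ∏ k ∈ Finset.range N, (1 + x * p ^ k)) atTop
      (𝓝 (∏' k : ℕ, (1 + x * p ^ k))) := by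
    rw [htp]; exact hprod.tendsto_prod_nat
  have hfx : Tendsto (fun N => f p (x * p ^ N)) atTop (𝓝 1) := by
    have hM : Tendsto (fun N : ℕ => x * p ^ N * ((∑' i, T p x i) * (Pinf p)⁻¹)) atTop (𝓝 0) := by
      have h := (tendsto_pow_atTop_nhds_zero_of_lt_one hp0.le hp1).const_mul x
      rw [mul_zero] at h
      simpa using h.mul_const ((∑' i, T p x i) * (Pinf p)⁻¹)
    have key : ∀ N : ℕ, |f p (x * p ^ N) - 1| ≤ x * p ^ N * ((∑' i, T p x i) * (Pinf p)⁻¹) := by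
      intro N
      have hxN : (0:ℝ) ≤ x * p ^ N := by positivity
      have hxNx : x * p ^ N ≤ x := by
        nlinarith [pow_le_one₀ hp0.le hp1.le (n := N)]
      obtain ⟨ha, hb⟩ := f_sub_one hp0 hp1 hx hxN hxNx
      rw [abs_of_nonneg ha]
      exact hb
    have h0 : Tendsto (fun N => f p (x * p ^ N) - 1) atTop (𝓝 0) := by
      apply squeeze_zero_norm key hM
    have := h0.add_const 1
    simpa using this
  have hmain : Tendsto (fun N => (∏ k ∈ Finset.range N, (1 + x * p ^ k)) * f p (x * p ^ N))
      atTop (𝓝 ((∏' k : ℕ, (1 + x * p ^ k)) * 1)) := hPP.mul hfx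
  rw [mul_one] at hmain
  have hconst : Tendsto (fun _ : ℕ => f p x) atTop (𝓝 (f p x)) := tendsto_const_nhds
  have : (fun N : ℕ => f p x)
      = fun N => (∏ k ∈ Finset.range N, (1 + x * p ^ k)) * f p (x * p ^ N) :=
    funext fun N => f_iter hp0 hp1 hx N
  rw [this] at hconst
  exact tendsto_nhds_unique hconst hmain
/-! ### the diagonal decomposition -/

noncomputable def F (p a v : ℝ) (pr : ℕ × ℕ) : ℝ :=
  p ^ (a / 2 * ((pr.1 : ℝ) - pr.2) ^ 2 + (pr.1 : ℝ) * pr.2 + a * v * ((pr.1 : ℝ) - pr.2))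
    / (P p pr.1 * P p pr.2)

noncomputable def g (p a v : ℝ) (i : ℕ) : ℝ :=
  (Pinf p)⁻¹ * p ^ (min a 1 / 2 * (i : ℝ) ^ 2 - |a * v| * i)

/-- the reindexing equivalence -/
def e : ℤ × ℕ ≃ ℕ × ℕ where
  toFun z := (z.2 + z.1.toNat, z.2 + (-z.1).toNat)
  invFun pr := ((pr.1 : ℤ) - pr.2, min pr.1 pr.2)
  left_inv := by
    rintro ⟨n, m⟩
    simp only [Prod.mk.injEq]
    constructor
    · omega
    · omega
  right_inv := by
    rintro ⟨i, j⟩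
    simp only [Prod.mk.injEq]
    constructor
    · omega
    · omega

lemma F_nonneg (hp0 : 0 < p) (hp1 : p < 1) (a v : ℝ) (pr : ℕ × ℕ) : 0 ≤ F p a v pr := by
  have h1 := P_pos hp0 hp1 pr.1
  have h2 := P_pos hp0 hp1 pr.2
  have := Real.rpow_pos_of_pos hp0
    (a / 2 * ((pr.1 : ℝ) - pr.2) ^ 2 + (pr.1 : ℝ) * pr.2 + a * v * ((pr.1 : ℝ) - pr.2))
  unfold F
  positivity

lemma F_le (hp0 : 0 < p) (hp1 : p < 1) {a : ℝ} (v : ℝ) (ha : 0 < a) (pr : ℕ × ℕ) :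
    F p a v pr ≤ g p a v pr.1 * g p a v pr.2 := by
  obtain ⟨i, j⟩ := pr
  set β := min a 1 with hβ
  have hβ0 : 0 < β := lt_min ha one_pos
  have hβ1 : β ≤ 1 := min_le_right a 1
  have hβa : β ≤ a := min_le_left a 1
  set C := |a * v| with hC
  have hC0 : 0 ≤ C := abs_nonneg _
  have hi : (0:ℝ) ≤ (i:ℝ) := Nat.cast_nonneg i
  have hj : (0:ℝ) ≤ (j:ℝ) := Nat.cast_nonneg j
  have hPi := Pinf_pos hp0 hp1
  -- exponent inequality
  have hexp : β / 2 * (i : ℝ) ^ 2 - C * i + (β / 2 * (j : ℝ) ^ 2 - C * j)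
      ≤ a / 2 * ((i : ℝ) - j) ^ 2 + (i : ℝ) * j + a * v * ((i : ℝ) - j) := by
    have habs : |a * v * ((i:ℝ) - j)| ≤ C * ((i:ℝ) + j) := by
      rw [abs_mul]
      apply mul_le_mul_of_nonneg_left ?_ hC0
      calc |(i:ℝ) - j| ≤ |(i:ℝ)| + |(j:ℝ)| := abs_sub _ _
        _ = (i:ℝ) + j := by rw [abs_of_nonneg hi, abs_of_nonneg hj]
    have h1 : -(C * ((i:ℝ) + j)) ≤ a * v * ((i:ℝ) - j) := by
      have := neg_abs_le (a * v * ((i:ℝ) - j))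
      linarith
    nlinarith [sq_nonneg ((i:ℝ) - j), mul_nonneg hi hj]
  have hpow : p ^ (a / 2 * ((i : ℝ) - j) ^ 2 + (i : ℝ) * j + a * v * ((i : ℝ) - j))
      ≤ p ^ (β / 2 * (i : ℝ) ^ 2 - C * i + (β / 2 * (j : ℝ) ^ 2 - C * j)) :=
    Real.rpow_le_rpow_of_exponent_ge hp0 hp1.le hexp
  have hden : Pinf p * Pinf p ≤ P p i * P p j := by
    have := Pinf_le_P hp0 hp1 i
    have := Pinf_le_P hp0 hp1 j
    nlinarith [P_pos hp0 hp1 i, P_pos hp0 hp1 j]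
  calc F p a v (i, j)
      ≤ p ^ (β / 2 * (i : ℝ) ^ 2 - C * i + (β / 2 * (j : ℝ) ^ 2 - C * j)) / (Pinf p * Pinf p) := by
        unfold F
        exact div_le_div₀ (Real.rpow_pos_of_pos hp0 _).le hpow (by positivity) hden
    _ = g p a v i * g p a v j := by
        unfold g
        rw [← hβ, ← hC, Real.rpow_add hp0, div_eq_mul_inv, mul_inv]
        ring

lemma summable_g (hp0 : 0 < p) (hp1 : p < 1) {a : ℝ} (v : ℝ) (ha : 0 < a) :
    Summable (g p a v) := by
  set β := min a 1 with hβ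
  have hβ0 : 0 < β := lt_min ha one_pos
  set C := |a * v| with hC
  have hC0 : 0 ≤ C := abs_nonneg _
  set D := (C + 1) ^ 2 / (2 * β) with hD
  have hbound : ∀ i : ℕ, g p a v i ≤ ((Pinf p)⁻¹ * p ^ (-D)) * p ^ i := by
    intro i
    have hexp : (i : ℝ) - D ≤ β / 2 * (i : ℝ) ^ 2 - C * i := by
      have h := sq_nonneg (β * (i : ℝ) - (C + 1))
      have hD2 : D * (2 * β) = (C + 1) ^ 2 := by
        rw [hD]
        field_simp
      nlinarith [hβ0]
    have h1 : p ^ (β / 2 * (i : ℝ) ^ 2 - C * i) ≤ p ^ ((i : ℝ) - D) :=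
      Real.rpow_le_rpow_of_exponent_ge hp0 hp1.le hexp
    have h2 : p ^ ((i : ℝ) - D) = p ^ (-D) * p ^ i := by
      rw [sub_eq_add_neg, Real.rpow_add hp0, Real.rpow_natCast]
      ring
    unfold g
    rw [mul_assoc]
    apply mul_le_mul_of_nonneg_left ?_ (inv_nonneg.2 (Pinf_pos hp0 hp1).le)
    rw [← h2]
    exact h1
  refine Summable.of_nonneg_of_le (fun i => ?_) hbound ?_
  · unfold g
    have := Real.rpow_pos_of_pos hp0 (min a 1 / 2 * (i : ℝ) ^ 2 - |a * v| * i)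
    have := Pinf_pos hp0 hp1
    positivity
  · exact (summable_geometric_of_lt_one hp0.le hp1).mul_left _

lemma summable_F (hp0 : 0 < p) (hp1 : p < 1) {a : ℝ} (v : ℝ) (ha : 0 < a) :
    Summable (F p a v) := by
  have hg := summable_g hp0 hp1 v ha
  have hgn : ∀ i, 0 ≤ g p a v i := by
    intro i
    unfold g
    have := Real.rpow_pos_of_pos hp0 (min a 1 / 2 * (i : ℝ) ^ 2 - |a * v| * i)
    have := Pinf_pos hp0 hp1
    positivity
  refine Summable.of_nonneg_of_le (F_nonneg hp0 hp1 a v) (F_le hp0 hp1 v ha)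
    ((hg.mul_of_nonneg hg hgn hgn).congr fun pr => rfl)

lemma F_diag (hp0 : 0 < p) (hp1 : p < 1) (a v : ℝ) (n : ℤ) (m : ℕ) :
    F p a v (e (n, m)) = p ^ (a / 2 * (n : ℝ) ^ 2 + a * v * n) * u p n.natAbs m := by
  have hij : ((m + n.toNat : ℕ) : ℝ) - ((m + (-n).toNat : ℕ) : ℝ) = (n : ℝ) := by
    push_cast
    have h : (n.toNat : ℤ) - ((-n).toNat : ℤ) = n := by omega
    have h2 := congrArg (fun z : ℤ => (z : ℝ)) h
    push_cast at h2
    linarith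
  have hprod : (m + n.toNat) * (m + (-n).toNat) = m * (m + n.natAbs) := by
    rcases le_or_gt 0 n with h | h
    · have h1 : (-n).toNat = 0 := by omega
      have h2 : n.toNat = n.natAbs := by omega
      rw [h1, h2, Nat.add_zero]
      ring
    · have h1 : n.toNat = 0 := by omega
      have h2 : (-n).toNat = n.natAbs := by omega
      rw [h1, h2, Nat.add_zero]
  have hP : P p (m + n.toNat) * P p (m + (-n).toNat) = P p m * P p (m + n.natAbs) := by
    rcases le_or_gt 0 n with h | h
    · have h1 : (-n).toNat = 0 := by omega
      have h2 : n.toNat = n.natAbs := by omega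
      rw [h1, h2, Nat.add_zero, mul_comm]
    · have h1 : n.toNat = 0 := by omega
      have h2 : (-n).toNat = n.natAbs := by omega
      rw [h1, h2, Nat.add_zero]
  show p ^ (a / 2 * (((m + n.toNat : ℕ) : ℝ) - ((m + (-n).toNat : ℕ) : ℝ)) ^ 2
      + ((m + n.toNat : ℕ) : ℝ) * ((m + (-n).toNat : ℕ) : ℝ)
      + a * v * (((m + n.toNat : ℕ) : ℝ) - ((m + (-n).toNat : ℕ) : ℝ)))
      / (P p (m + n.toNat) * P p (m + (-n).toNat)) = _
  rw [hij, hP]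
  have hmul : ((m + n.toNat : ℕ) : ℝ) * ((m + (-n).toNat : ℕ) : ℝ)
      = ((m * (m + n.natAbs) : ℕ) : ℝ) := by
    rw [← Nat.cast_mul, hprod]
  rw [hmul]
  have hsplit : a / 2 * (n : ℝ) ^ 2 + ((m * (m + n.natAbs) : ℕ) : ℝ) + a * v * n
      = (a / 2 * (n : ℝ) ^ 2 + a * v * n) + ((m * (m + n.natAbs) : ℕ) : ℝ) := by ring
  rw [hsplit, Real.rpow_add hp0, Real.rpow_natCast]
  unfold u
  ring

lemma T1 (hp0 : 0 < p) (hp1 : p < 1) {a : ℝ} (v : ℝ) (ha : 0 < a) :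
    ∑' pr : ℕ × ℕ, F p a v pr
      = (∑' n : ℤ, p ^ (a / 2 * (n : ℝ) ^ 2 + a * v * n)) * (Pinf p)⁻¹ := by
  have hF := summable_F hp0 hp1 v ha
  have hFe : Summable (fun z : ℤ × ℕ => F p a v (e z)) := e.summable_iff.2 hF
  rw [← e.tsum_eq (F p a v)]
  rw [Summable.tsum_prod' hFe hFe.prod_factor]
  have hinner : ∀ n : ℤ, ∑' m : ℕ, F p a v (e (n, m))
      = p ^ (a / 2 * (n : ℝ) ^ 2 + a * v * n) * (Pinf p)⁻¹ := by
    intro n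
    rw [tsum_congr (fun m => F_diag hp0 hp1 a v n m), tsum_mul_left]
    rw [show (∑' m, u p n.natAbs m) = S p n.natAbs from rfl, S_eq hp0 hp1]
  rw [tsum_congr hinner, tsum_mul_right]
/-! ### Jacobi triple product -/

lemma T_rpow (hp0 : 0 < p) (c : ℝ) (i : ℕ) :
    T p (p ^ c) i = p ^ (c * i + (i : ℝ) * ((i : ℝ) - 1) / 2) := by
  induction i with
  | zero => simp [T]
  | succ k ih =>
    rw [T_succ, ih, ← Real.rpow_natCast p k, ← Real.rpow_add hp0, ← Real.rpow_add hp0]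
    congr 1
    push_cast
    ring

lemma F_factor (hp0 : 0 < p) (hp1 : p < 1) (μ : ℝ) (i j : ℕ) :
    F p 1 μ (i, j) = (T p (p ^ ((1:ℝ)/2 + μ)) i / P p i) * (T p (p ^ ((1:ℝ)/2 - μ)) j / P p j) := by
  rw [T_rpow hp0, T_rpow hp0]
  unfold F
  have hsplit : (1:ℝ) / 2 * ((i : ℝ) - j) ^ 2 + (i : ℝ) * j + 1 * μ * ((i : ℝ) - j)
      = (((1:ℝ)/2 + μ) * i + (i : ℝ) * ((i : ℝ) - 1) / 2)
        + (((1:ℝ)/2 - μ) * j + (j : ℝ) * ((j : ℝ) - 1) / 2) := by ring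
  show p ^ ((1:ℝ) / 2 * ((i : ℝ) - j) ^ 2 + (i : ℝ) * j + 1 * μ * ((i : ℝ) - j))
      / (P p i * P p j) = _
  rw [hsplit, Real.rpow_add hp0]
  field_simp

lemma JT (hp0 : 0 < p) (hp1 : p < 1) (μ : ℝ) :
    ∑' n : ℤ, p ^ ((1:ℝ) / 2 * (n : ℝ) ^ 2 + 1 * μ * n)
      = ((∏' k : ℕ, (1 + p ^ ((1:ℝ)/2 + μ) * p ^ k)) *
          ∏' k : ℕ, (1 + p ^ ((1:ℝ)/2 - μ) * p ^ k)) * Pinf p := by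
  have hPi := Pinf_pos hp0 hp1
  have hx : (0:ℝ) ≤ p ^ ((1:ℝ)/2 + μ) := (Real.rpow_pos_of_pos hp0 _).le
  have hy : (0:ℝ) ≤ p ^ ((1:ℝ)/2 - μ) := (Real.rpow_pos_of_pos hp0 _).le
  have hF := summable_F hp0 hp1 μ (one_pos)
  have h1 := T1 hp0 hp1 μ (one_pos (α := ℝ))
  -- factor the double sum
  have h2 : ∑' pr : ℕ × ℕ, F p 1 μ pr
      = f p (p ^ ((1:ℝ)/2 + μ)) * f p (p ^ ((1:ℝ)/2 - μ)) := by
    rw [Summable.tsum_prod' hF hF.prod_factor]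
    have hinner : ∀ i : ℕ, ∑' j : ℕ, F p 1 μ (i, j)
        = (T p (p ^ ((1:ℝ)/2 + μ)) i / P p i) * f p (p ^ ((1:ℝ)/2 - μ)) := by
      intro i
      rw [tsum_congr (fun j => F_factor hp0 hp1 μ i j), tsum_mul_left]
      rfl
    rw [tsum_congr hinner, tsum_mul_right]
    rfl
  rw [h2] at h1
  rw [euler_id hp0 hp1 hx, euler_id hp0 hp1 hy] at h1
  have h3 := congrArg (fun t : ℝ => t * Pinf p) h1
  rw [mul_assoc, mul_assoc, inv_mul_cancel₀ hPi.ne', mul_one] at h3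
  rw [← h3]
  ring
end Zagier

open Zagier

/-- Zagier's Example 1 (Theorem 1.1 of the paper). -/
theorem zagier_example1 (q : ℝ) (hq0 : 0 < q) (hq1 : q < 1) (α ν : ℝ) (hα : 1 / 2 < α) :
    ∑' p : ℕ × ℕ,
      q ^ (α / 2 * (p.1 : ℝ) ^ 2 + (1 - α) * p.1 * p.2 + α / 2 * (p.2 : ℝ) ^ 2 +
          α * ν * p.1 - α * ν * p.2) /
        ((∏ k ∈ Finset.range p.1, (1 - q ^ (k + 1))) *
          ∏ k ∈ Finset.range p.2, (1 - q ^ (k + 1))) =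
    ((∏' k : ℕ, (1 + q ^ (α / 2 + α * ν + α * k))) *
        (∏' k : ℕ, (1 + q ^ (α / 2 - α * ν + α * k))) *
        ∏' k : ℕ, (1 - q ^ (α * (k + 1)))) /
      ∏' k : ℕ, (1 - q ^ (k + 1)) := by
  have ha : 0 < α := by linarith
  set p' := q ^ α with hp'
  have hp'0 : 0 < p' := Real.rpow_pos_of_pos hq0 α
  have hp'1 : p' < 1 := Real.rpow_lt_one hq0.le hq1 ha
  -- Step 1: identify the LHS with ∑' F
  have hL : ∑' p : ℕ × ℕ,
      q ^ (α / 2 * (p.1 : ℝ) ^ 2 + (1 - α) * p.1 * p.2 + α / 2 * (p.2 : ℝ) ^ 2 +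
          α * ν * p.1 - α * ν * p.2) /
        ((∏ k ∈ Finset.range p.1, (1 - q ^ (k + 1))) *
          ∏ k ∈ Finset.range p.2, (1 - q ^ (k + 1)))
      = ∑' pr : ℕ × ℕ, F q α ν pr := by
    apply tsum_congr
    intro pr
    show _ = q ^ (α / 2 * ((pr.1 : ℝ) - pr.2) ^ 2 + (pr.1 : ℝ) * pr.2
        + α * ν * ((pr.1 : ℝ) - pr.2)) / (P q pr.1 * P q pr.2)
    rw [P, P]
    congr 1
    ring_nf
  rw [hL, T1 hq0 hq1 ν ha]
  -- Step 2: rewrite the ℤ-sum in base p'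
  have hzsum : ∀ n : ℤ, q ^ (α / 2 * (n : ℝ) ^ 2 + α * ν * n)
      = p' ^ ((1:ℝ) / 2 * (n : ℝ) ^ 2 + 1 * ν * n) := by
    intro n
    rw [hp', ← Real.rpow_mul hq0.le]
    congr 1
    ring
  rw [tsum_congr hzsum, JT hp'0 hp'1 ν]
  -- Step 3: match the products
  have hI1 : ∀ k : ℕ, 1 + p' ^ ((1:ℝ)/2 + ν) * p' ^ k = 1 + q ^ (α / 2 + α * ν + α * k) := by
    intro k
    congr 1
    rw [hp', ← Real.rpow_natCast (q ^ α) k, ← Real.rpow_mul hq0.le, ← Real.rpow_mul hq0.le,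
      ← Real.rpow_add hq0]
    congr 1
    ring
  have hI2 : ∀ k : ℕ, 1 + p' ^ ((1:ℝ)/2 - ν) * p' ^ k = 1 + q ^ (α / 2 - α * ν + α * k) := by
    intro k
    congr 1
    rw [hp', ← Real.rpow_natCast (q ^ α) k, ← Real.rpow_mul hq0.le, ← Real.rpow_mul hq0.le,
      ← Real.rpow_add hq0]
    congr 1
    ring
  have hI3 : ∀ k : ℕ, 1 - p' ^ (k + 1) = 1 - q ^ (α * ((k : ℝ) + 1)) := by
    intro k
    congr 1
    rw [hp', ← Real.rpow_natCast (q ^ α) (k + 1), ← Real.rpow_mul hq0.le]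
    congr 1
    push_cast
    ring
  have hPinfp' : Pinf p' = ∏' k : ℕ, (1 - q ^ (α * ((k : ℝ) + 1))) := by
    rw [Pinf]
    exact tprod_congr hI3
  have hA : (∏' k : ℕ, (1 + p' ^ ((1:ℝ)/2 + ν) * p' ^ k))
      = ∏' k : ℕ, (1 + q ^ (α / 2 + α * ν + α * k)) := tprod_congr hI1
  have hB : (∏' k : ℕ, (1 + p' ^ ((1:ℝ)/2 - ν) * p' ^ k))
      = ∏' k : ℕ, (1 + q ^ (α / 2 - α * ν + α * k)) := tprod_congr hI2
  rw [hA, hB, hPinfp']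
  rw [show Pinf q = ∏' k : ℕ, (1 - q ^ (k + 1)) from rfl]
  rw [div_eq_mul_inv]
  ring
end
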